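/- arXiv:2311.12335 — 3 statements merged into one kernel-verified Lean document; each statement's English description precedes it below -/
import Mathlib

section
/- Let δ and s be integers with 2 ≤ s ≤ δ − 1 (so δ ≥ 3) and let n ≥ max{8δ, δ²/2 + 2δ + 2}. Then λ₁(D(K_δ ∨ (K_{n−2δ} + δK₁))) < λ₁(D(K_s ∨ (K_{n−s−s(δ−s+1)} + sK_{δ−s+1}))). -/
open SimpleGraph Finset

/-- The distance matrix of a graph: the `(i,j)` entry is the graph distance from `i` to `j`. -/
noncomputable def distMatrix {V : Type*} [Fintype V] (G : SimpleGraph V) : Matrix V V ℝ :=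
  fun i j => (G.dist i j : ℝ)

/-- The distance spectral radius `λ₁(D(G))`: the largest eigenvalue of the distance matrix. -/
noncomputable def distSpecRad {V : Type*} [Fintype V] (G : SimpleGraph V) : ℝ :=
  sSup {μ : ℝ | ∃ v : V → ℝ, v ≠ 0 ∧ (distMatrix G).mulVec v = μ • v}

/-- The join `G ∨ H` of two graphs: all edges between the parts are added. -/
def graphJoin {α β : Type*} (G : SimpleGraph α) (H : SimpleGraph β) :
    SimpleGraph (α ⊕ β) where
  Adj x y :=
    match x, y with
    | Sum.inl a, Sum.inl a' => G.Adj a a'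
    | Sum.inr b, Sum.inr b' => H.Adj b b'
    | Sum.inl _, Sum.inr _ => True
    | Sum.inr _, Sum.inl _ => True
  symm := ⟨by rintro (a | a) (b | b) h <;> first | exact G.adj_symm h | exact H.adj_symm h | trivial⟩
  loopless := ⟨by rintro (a | a) h <;> first | exact G.irrefl h | exact H.irrefl h⟩

/-- The disjoint union `G + H` of two graphs. -/
def graphSum {α β : Type*} (G : SimpleGraph α) (H : SimpleGraph β) :
    SimpleGraph (α ⊕ β) where
  Adj x y :=
    match x, y with
    | Sum.inl a, Sum.inl a' => G.Adj a a'
    | Sum.inr b, Sum.inr b' => H.Adj b b'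
    | _, _ => False
  symm := ⟨by rintro (a | a) (b | b) h <;> first | exact G.adj_symm h | exact H.adj_symm h | exact h⟩
  loopless := ⟨by rintro (a | a) h <;> first | exact G.irrefl h | exact H.irrefl h⟩

/-- `m` pairwise disjoint copies of the complete graph `K_p`. -/
def repK (m p : ℕ) : SimpleGraph (Fin m × Fin p) where
  Adj x y := x.1 = y.1 ∧ x ≠ y
  symm := ⟨fun _ _ h => ⟨h.1.symm, h.2.symm⟩⟩
  loopless := ⟨fun _ h => h.2 rfl⟩

/-- The disjoint union of cliques `K_{m 0} + K_{m 1} + ⋯`. -/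
def cliquesGraph {c : ℕ} (m : Fin c → ℕ) : SimpleGraph (Σ i, Fin (m i)) where
  Adj x y := x.1 = y.1 ∧ x ≠ y
  symm := ⟨fun _ _ h => ⟨h.1.symm, h.2.symm⟩⟩
  loopless := ⟨fun _ h => h.2 rfl⟩

/-- `G` is `t`-tough: whenever deleting a vertex set `S` disconnects the graph,
`|S| ≥ t · c(G - S)`. -/
def IsTTough {V : Type*} [Fintype V] (t : ℝ) (G : SimpleGraph V) : Prop :=
  ∀ S : Finset V, ¬ (G.induce ((S : Set V)ᶜ)).Connected →
    t * Nat.card (G.induce ((S : Set V)ᶜ)).ConnectedComponent ≤ (S.card : ℝ)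

set_option linter.unusedSectionVars false
set_option maxHeartbeats 4000000

section Dist

variable {V : Type*} {G : SimpleGraph V} {u v t : V}

lemma sg_dist_one (h : G.Adj u v) : G.dist u v = 1 := by
  have h1 : G.dist u v ≤ 1 := by simpa using G.dist_le (h.toWalk)
  have h2 : G.dist u v ≠ 0 := by
    rw [SimpleGraph.dist_ne_zero_iff_ne_and_reachable]
    exact ⟨h.ne, h.reachable⟩
  omega

lemma dist_two (hne : u ≠ v) (hna : ¬ G.Adj u v)
    (h1 : G.Adj u t) (h2 : G.Adj t v) : G.dist u v = 2 := by
  have hle : G.dist u v ≤ 2 := by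
    simpa using G.dist_le (Walk.cons h1 h2.toWalk)
  have h0 : G.dist u v ≠ 0 := by
    rw [SimpleGraph.dist_ne_zero_iff_ne_and_reachable]
    exact ⟨hne, (Walk.cons h1 h2.toWalk).reachable⟩
  have hone : G.dist u v ≠ 1 := by
    intro h
    obtain ⟨p, hp⟩ := SimpleGraph.exists_walk_of_dist_ne_zero h0
    rw [h] at hp
    exact hna (Walk.adj_of_length_eq_one hp)
  omega

end Dist

section GG

variable (p N : ℕ) {W : Type*} [Fintype W] (H : SimpleGraph W)

/-- `K_p ∨ (K_N + H)` -/
abbrev GG : SimpleGraph (Fin p ⊕ (Fin N ⊕ W)) :=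
  graphJoin (⊤ : SimpleGraph (Fin p)) (graphSum (⊤ : SimpleGraph (Fin N)) H)

variable {p N H}

lemma gg_dist_11 (i j : Fin p) :
    (GG p N H).dist (Sum.inl i) (Sum.inl j) = if i = j then 0 else 1 := by
  split
  · next h => rw [h, SimpleGraph.dist_self]
  · next h => exact sg_dist_one (by simpa [GG, graphJoin] using h)

lemma gg_dist_1r (i : Fin p) (y : Fin N ⊕ W) :
    (GG p N H).dist (Sum.inl i) (Sum.inr y) = 1 :=
  sg_dist_one (by simp [GG, graphJoin])

lemma gg_dist_r1 (i : Fin p) (y : Fin N ⊕ W) :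
    (GG p N H).dist (Sum.inr y) (Sum.inl i) = 1 :=
  sg_dist_one (by simp [GG, graphJoin])

lemma gg_dist_22 (i j : Fin N) :
    (GG p N H).dist (Sum.inr (Sum.inl i)) (Sum.inr (Sum.inl j)) = if i = j then 0 else 1 := by
  split
  · next h => rw [h, SimpleGraph.dist_self]
  · next h => exact sg_dist_one (by simpa [GG, graphJoin, graphSum] using h)

lemma gg_dist_23 (hp : 0 < p) (i : Fin N) (w : W) :
    (GG p N H).dist (Sum.inr (Sum.inl i)) (Sum.inr (Sum.inr w)) = 2 := by
  refine dist_two (by simp) (by simp [GG, graphJoin, graphSum]) (t := Sum.inl ⟨0, hp⟩) ?_ ?_ <;>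
    simp [GG, graphJoin]

lemma gg_dist_32 (hp : 0 < p) (i : Fin N) (w : W) :
    (GG p N H).dist (Sum.inr (Sum.inr w)) (Sum.inr (Sum.inl i)) = 2 := by
  refine dist_two (by simp) (by simp [GG, graphJoin, graphSum]) (t := Sum.inl ⟨0, hp⟩) ?_ ?_ <;>
    simp [GG, graphJoin]

lemma gg_dist_33 [DecidableEq W] [DecidableRel H.Adj] (hp : 0 < p) (w w' : W) :
    (GG p N H).dist (Sum.inr (Sum.inr w)) (Sum.inr (Sum.inr w')) =
      if w = w' then 0 else if H.Adj w w' then 1 else 2 := by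
  classical
  split
  · next h => rw [h, SimpleGraph.dist_self]
  · next h =>
    split
    · next ha => exact sg_dist_one (by simpa [GG, graphJoin, graphSum] using ha)
    · next ha =>
      refine dist_two (by simpa using h) (by simpa [GG, graphJoin, graphSum] using ha)
        (t := Sum.inl ⟨0, hp⟩) ?_ ?_ <;> simp [GG, graphJoin]

end GG

section helper
lemma sum_ite_ne {α : Type*} [Fintype α] [DecidableEq α] (i : α) (a : ℝ) :
    ∑ j : α, (if i = j then 0 else a) = (Fintype.card α) * a - a := by
  have h : ∀ j : α, (if i = j then (0:ℝ) else a) = a - (if i = j then a else 0) := by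
    intro j; split <;> simp
  simp only [h, Finset.sum_sub_distrib, Finset.sum_const, Finset.sum_ite_eq, Finset.mem_univ,
    if_true, Finset.card_univ, nsmul_eq_mul]
end helper

section MV

variable (p N : ℕ) {W : Type*} [Fintype W] [DecidableEq W] (H : SimpleGraph W)
  [DecidableRel H.Adj] (a b c : ℝ)

def xvec : (Fin p ⊕ (Fin N ⊕ W)) → ℝ :=
  Sum.elim (fun _ => a) (Sum.elim (fun _ => b) (fun _ => c))

variable {p N H}

lemma gg_mulVec_1 (i : Fin p) :
    (distMatrix (GG p N H)).mulVec (xvec p N a b c) (Sum.inl i)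
      = ((p:ℝ) - 1) * a + N * b + (Fintype.card W) * c := by
  simp only [Matrix.mulVec, dotProduct, distMatrix, Fintype.sum_sum_type, xvec,
    Sum.elim_inl, Sum.elim_inr, gg_dist_11, gg_dist_1r]
  have e1 : ∀ j : Fin p, ((if i = j then 0 else 1 : ℕ) : ℝ) * a = (if i = j then 0 else a) :=
    fun j => by split <;> simp
  simp only [e1, sum_ite_ne, Nat.cast_one, one_mul, Finset.sum_const, Finset.card_univ,
    nsmul_eq_mul, Fintype.card_fin]
  ring

lemma gg_mulVec_2 (hp : 0 < p) (i : Fin N) :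
    (distMatrix (GG p N H)).mulVec (xvec p N a b c) (Sum.inr (Sum.inl i))
      = (p:ℝ) * a + ((N:ℝ) - 1) * b + 2 * (Fintype.card W) * c := by
  simp only [Matrix.mulVec, dotProduct, distMatrix, Fintype.sum_sum_type, xvec,
    Sum.elim_inl, Sum.elim_inr, gg_dist_22, gg_dist_r1, gg_dist_23 hp]
  have e1 : ∀ j : Fin N, ((if i = j then 0 else 1 : ℕ) : ℝ) * b = (if i = j then 0 else b) :=
    fun j => by split <;> simp
  simp only [e1, sum_ite_ne, Nat.cast_one, Nat.cast_ofNat, one_mul, Finset.sum_const,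
    Finset.card_univ, nsmul_eq_mul, Fintype.card_fin]
  ring

lemma gg_mulVec_3 (hp : 0 < p) (k : ℝ)
    (hk : ∀ w₀ : W, ∑ w' : W, (if H.Adj w₀ w' then (1:ℝ) else 0) = k) (w : W) :
    (distMatrix (GG p N H)).mulVec (xvec p N a b c) (Sum.inr (Sum.inr w))
      = (p:ℝ) * a + 2 * N * b + (2 * (Fintype.card W) - 2 - k) * c := by
  simp only [Matrix.mulVec, dotProduct, distMatrix, Fintype.sum_sum_type, xvec,
    Sum.elim_inl, Sum.elim_inr, gg_dist_33 hp, gg_dist_r1, gg_dist_32 hp]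
  have e1 : ∀ w' : W, ((if w = w' then 0 else if H.Adj w w' then 1 else 2 : ℕ) : ℝ) * c =
      (2 - (if w = w' then 2 else 0) - (if H.Adj w w' then 1 else 0)) * c := by
    intro w'
    by_cases h1 : w = w'
    · subst h1; simp [H.irrefl]
    · by_cases h2 : H.Adj w w' <;> norm_num [h1, h2]
  simp only [e1, sub_mul, Finset.sum_sub_distrib, Finset.sum_const, Finset.sum_ite_eq,
    Finset.mem_univ, if_true, Finset.card_univ, nsmul_eq_mul, Nat.cast_one, one_mul,
    ← Finset.sum_mul, hk w, Fintype.card_fin]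
  ring

end MV

instance repK.adjDecidable (m p : ℕ) : DecidableRel (repK m p).Adj :=
  fun x y => decidable_of_iff (x.1 = y.1 ∧ x ≠ y) Iff.rfl

lemma repK_rowsum (m p : ℕ) (hp : 0 < p) (w : Fin m × Fin p) :
    ∑ w' : Fin m × Fin p, (if (repK m p).Adj w w' then (1:ℝ) else 0) = (p:ℝ) - 1 := by
  rw [Fintype.sum_prod_type]
  have hin : ∀ i : Fin m, (∑ j : Fin p, if (repK m p).Adj w (i,j) then (1:ℝ) else 0)
      = if w.1 = i then (p:ℝ) - 1 else 0 := by
    intro i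
    by_cases hi : w.1 = i
    · rw [if_pos hi]
      have he : ∀ j : Fin p, (if (repK m p).Adj w (i,j) then (1:ℝ) else 0)
          = if w.2 = j then 0 else 1 := by
        intro j
        by_cases hj : w.2 = j
        · have hw : w = (i, j) := Prod.ext hi hj
          simp [repK, hw, hj]
        · have hne : w ≠ (i, j) := by
            intro h; exact hj (by rw [h])
          simp [repK, hi, hne, hj]
      simp only [he]
      rw [sum_ite_ne]
      simp
    · have hno : ∀ j : Fin p, ¬ (repK m p).Adj w (i,j) := fun j h => hi h.1
      simp [hno, hi]
  simp only [hin]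
  rw [Finset.sum_ite_eq]
  simp

section Spectral
variable {V : Type*} [Fintype V] [DecidableEq V]

/-- Collatz–Wielandt upper bound: all eigenvalues are at most `U` when a positive
vector `v` satisfies `A v ≤ U v` componentwise, for symmetric nonnegative `A`. -/
lemma eig_le (A : Matrix V V ℝ) (hsym : ∀ i j, A i j = A j i) (hnn : ∀ i j, 0 ≤ A i j)
    (v : V → ℝ) (hv : ∀ i, 0 < v i) (U : ℝ) (hU : ∀ i, A.mulVec v i ≤ U * v i)
    {μ : ℝ} {w : V → ℝ} (hw : w ≠ 0) (hmv : A.mulVec w = μ • w) : μ ≤ U := by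
  set u : V → ℝ := fun i => |w i| with hu
  have key : ∀ i, |μ| * u i ≤ A.mulVec u i := by
    intro i
    have h1 : μ * w i = ∑ j, A i j * w j := by
      have := congrFun hmv i
      simp only [Matrix.mulVec, dotProduct, Pi.smul_apply, smul_eq_mul] at this
      exact this.symm
    calc |μ| * u i = |μ * w i| := by rw [hu]; simp [abs_mul]
    _ = |∑ j, A i j * w j| := by rw [h1]
    _ ≤ ∑ j, |A i j * w j| := Finset.abs_sum_le_sum_abs _ _
    _ = ∑ j, A i j * u j := by
        refine Finset.sum_congr rfl fun j _ => ?_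
        rw [abs_mul, abs_of_nonneg (hnn i j)]
    _ = A.mulVec u i := by simp [Matrix.mulVec, dotProduct]
  obtain ⟨i₀, hi₀⟩ : ∃ i, w i ≠ 0 := Function.ne_iff.mp hw
  have hS : 0 < ∑ i, v i * u i := by
    have : ∀ i ∈ Finset.univ, 0 ≤ v i * u i :=
      fun i _ => mul_nonneg (hv i).le (abs_nonneg _)
    have h0 : 0 < v i₀ * u i₀ := mul_pos (hv i₀) (abs_pos.mpr hi₀)
    exact lt_of_lt_of_le h0 (Finset.single_le_sum this (Finset.mem_univ i₀))
  have main : |μ| * ∑ i, v i * u i ≤ U * ∑ i, v i * u i := by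
    calc |μ| * ∑ i, v i * u i = ∑ i, v i * (|μ| * u i) := by
          rw [Finset.mul_sum]; exact Finset.sum_congr rfl fun i _ => by ring
    _ ≤ ∑ i, v i * A.mulVec u i := by
          refine Finset.sum_le_sum fun i _ => mul_le_mul_of_nonneg_left (key i) (hv i).le
    _ = ∑ i, ∑ j, v i * (A i j * u j) := by
          refine Finset.sum_congr rfl fun i _ => ?_
          simp [Matrix.mulVec, dotProduct, Finset.mul_sum]
    _ = ∑ j, (∑ i, A j i * v i) * u j := by
          rw [Finset.sum_comm]
          refine Finset.sum_congr rfl fun j _ => ?_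
          rw [Finset.sum_mul]
          exact Finset.sum_congr rfl fun i _ => by rw [hsym i j]; ring
    _ = ∑ j, A.mulVec v j * u j := by simp [Matrix.mulVec, dotProduct]
    _ ≤ ∑ j, (U * v j) * u j := by
          refine Finset.sum_le_sum fun j _ => mul_le_mul_of_nonneg_right (hU j) (abs_nonneg _)
    _ = U * ∑ i, v i * u i := by rw [Finset.mul_sum]; exact Finset.sum_congr rfl fun i _ => by ring
  have := le_of_mul_le_mul_right (by simpa [mul_comm] using main) hS
  exact le_trans (le_abs_self μ) this

/-- There is an eigenvalue at least as large as any Rayleigh quotient. -/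
lemma rayleigh_le (A : Matrix V V ℝ) (hA : A.IsHermitian) [Nonempty V] (x : V → ℝ) :
    ∃ μ : ℝ, (∃ w : V → ℝ, w ≠ 0 ∧ A.mulVec w = μ • w) ∧
      ∑ i, x i * A.mulVec x i ≤ μ * ∑ i, x i ^ 2 := by
  classical
  obtain ⟨i₀, -, hmax⟩ := Finset.exists_max_image Finset.univ hA.eigenvalues univ_nonempty
  set μ := hA.eigenvalues i₀ with hμ
  refine ⟨μ, ⟨hA.eigenvectorBasis i₀, (WithLp.ofLp_eq_zero 2).ne.2 <| hA.eigenvectorBasis.orthonormal.ne_zero i₀,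
    hA.mulVec_eigenvectorBasis i₀⟩, ?_⟩
  set B := hA.eigenvectorBasis with hB
  set lam := hA.eigenvalues with hlam
  set x' : EuclideanSpace ℝ V := WithLp.toLp 2 x with hx'
  set cf : V → ℝ := fun i => B.repr x' i with hcf
  -- pointwise expansion of x in the eigenbasis
  have hsum : (∑ i, cf i • B i) = x' := B.sum_repr x'
  have hsum' : (∑ i, cf i • (fun l => B i l : V → ℝ)) = x := by
    have h0 := congrArg (WithLp.linearEquiv 2 ℝ (V → ℝ)) hsum
    rw [map_sum] at h0
    simpa [map_smul] using h0
  have hxpt : ∀ l, x l = ∑ i, cf i * B i l := by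
    intro l
    rw [← hsum']
    simp [Finset.sum_apply]
  have hcf' : ∀ i, cf i = ∑ j, B i j * x j := by
    intro i
    show B.repr x' i = _
    rw [B.repr_apply_apply, PiLp.inner_apply]
    simp [RCLike.inner_apply, hx', mul_comm]
  have heig : ∀ i j, A.mulVec (fun l => B i l) j = lam i * B i j := by
    intro i j
    have := congrFun (hA.mulVec_eigenvectorBasis i) j
    simpa using this
  have hmv' : ∀ j, A.mulVec x j = ∑ i, (lam i * cf i) * B i j := by
    intro j
    have : A.mulVec x j = ∑ l, A j l * x l := by simp [Matrix.mulVec, dotProduct]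
    rw [this]
    calc ∑ l, A j l * x l = ∑ l, ∑ i, cf i * (A j l * B i l) := by
          refine Finset.sum_congr rfl fun l _ => ?_
          rw [hxpt l, Finset.mul_sum]
          exact Finset.sum_congr rfl fun i _ => by ring
    _ = ∑ i, cf i * ∑ l, A j l * B i l := by
          rw [Finset.sum_comm]
          exact Finset.sum_congr rfl fun i _ => by rw [Finset.mul_sum]
    _ = ∑ i, (lam i * cf i) * B i j := by
          refine Finset.sum_congr rfl fun i _ => ?_
          have : ∑ l, A j l * B i l = A.mulVec (fun l => B i l) j := by
            simp [Matrix.mulVec, dotProduct]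
          rw [this, heig i j]
          ring
  have h1 : ∑ j, x j * A.mulVec x j = ∑ i, lam i * (cf i * cf i) := by
    calc ∑ j, x j * A.mulVec x j = ∑ j, ∑ i, (lam i * cf i) * (B i j * x j) := by
          refine Finset.sum_congr rfl fun j _ => ?_
          rw [hmv' j, Finset.mul_sum]
          exact Finset.sum_congr rfl fun i _ => by ring
    _ = ∑ i, (lam i * cf i) * ∑ j, B i j * x j := by
          rw [Finset.sum_comm]
          exact Finset.sum_congr rfl fun i _ => by rw [Finset.mul_sum]
    _ = ∑ i, lam i * (cf i * cf i) := by
          refine Finset.sum_congr rfl fun i _ => ?_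
          rw [← hcf' i]; ring
  have h2 : ∑ j, x j ^ 2 = ∑ i, cf i * cf i := by
    calc ∑ j, x j ^ 2 = ∑ j, ∑ i, cf i * (B i j * x j) := by
          refine Finset.sum_congr rfl fun j _ => ?_
          rw [sq, hxpt j, Finset.sum_mul]
          exact Finset.sum_congr rfl fun i _ => by ring
    _ = ∑ i, cf i * ∑ j, B i j * x j := by
          rw [Finset.sum_comm]
          exact Finset.sum_congr rfl fun i _ => by rw [Finset.mul_sum]
    _ = ∑ i, cf i * cf i := by
          refine Finset.sum_congr rfl fun i _ => ?_
          rw [← hcf' i]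
  rw [h1, h2, Finset.mul_sum]
  refine Finset.sum_le_sum fun i _ => ?_
  have hc : 0 ≤ cf i * cf i := mul_self_nonneg _
  have := hmax i (Finset.mem_univ i)
  nlinarith [this, hc]
end Spectral



lemma polyPos0 (x y m : ℝ) (hx : 0 ≤ x) (hy : 0 ≤ y) (hm : 0 ≤ m) :
    (0:ℝ) < ((((279577/16 : ℝ) + m * ((33765/4 : ℝ) + m * ((1481 : ℝ) + m * ((123 : ℝ) + m * (3 : ℝ))))) + y * (((2083989/16 : ℝ) + m * ((171981/4 : ℝ) + m * ((4988 : ℝ) + m * ((239 : ℝ) + m * (3 : ℝ))))) + y * (((1625675/8 : ℝ) + m * ((49428 : ℝ) + m * ((7611/2 : ℝ) + m * (90 : ℝ)))) + y * (((1182045/8 : ℝ) + m * ((25089 : ℝ) + m * ((2225/2 : ℝ) + m * (6 : ℝ)))) + y * (((243935/4 : ℝ) + m * ((26485/4 : ℝ) + m * (261/2 : ℝ))) + y * (((30665/2 : ℝ) + m * ((3733/4 : ℝ) + m * (9/2 : ℝ))) + y * (((18997/8 : ℝ) + m * (129/2 : ℝ)) + y * (((1747/8 : ℝ) + m * (3/2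 : ℝ)) + y * ((171/16 : ℝ) + y * (3/16 : ℝ)))))))))) + x * ((((1816405/16 : ℝ) + m * ((162381/4 : ℝ) + m * ((4876 : ℝ) + m * ((239 : ℝ) + m * (3 : ℝ))))) + y * (((7505949/16 : ℝ) + m * ((516943/4 : ℝ) + m * ((11584 : ℝ) + m * ((385 : ℝ) + m * (3 : ℝ))))) + y * (((4868083/8 : ℝ) + m * ((124662 : ℝ) + m * ((15007/2 : ℝ) + m * (126 : ℝ)))) + y * (((3135495/8 : ℝ) + m * ((55611 : ℝ) + m * ((3775/2 : ℝ) + m * (6 : ℝ)))) + y * (((146086 : ℝ) + m * ((51969/4 : ℝ) + m * (369/2 : ℝ))) + y * (((66649/2 : ℝ) + m * ((6395/4 : ℝ) + m * (9/2 : ℝ))) + y * (((37201/8 : ℝ) + m * (183/2 : ℝ)) + y * (((3005/8 : ℝ) + m * (3/2 : ℝ)) + y * ((243/16 : ℝ) + y * (3/16 : ℝ)))))))))) + x * ((((1378643/8 : ℝ) + m * ((46124 : ℝ) + m * ((7411/2 : ℝ) + m * (90 : ℝ)))) + y * (((4612103/8 : ℝ) + m * ((121902 : ℝ) + m * ((14875/2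 : ℝ) + m * (126 : ℝ)))) + y * (((5222611/8 : ℝ) + m * ((406379/4 : ℝ) + m * ((8051/2 : ℝ) + m * (31 : ℝ)))) + y * (((1480065/4 : ℝ) + m * ((77093/2 : ℝ) + m * (776 : ℝ))) + y * (((240579/2 : ℝ) + m * ((7355 : ℝ) + m * (93/2 : ℝ))) + y * (((187543/8 : ℝ) + m * (1363/2 : ℝ)) + y * (((21459/8 : ℝ) + m * (93/4 : ℝ)) + y * ((325/2 : ℝ) + y * (31/8 : ℝ))))))))) + x * ((((1001609/8 : ℝ) + m * ((23461 : ℝ) + m * ((2181/2 : ℝ) + m * (6 : ℝ)))) + y * (((2900005/8 : ℝ) + m * ((53899 : ℝ) + m * ((3737/2 : ℝ) + m * (6 : ℝ)))) + y * (((1434459/4 : ℝ) + m * ((76099/2 : ℝ) + m * (772 : ℝ))) + y * (((174300 : ℝ) + m * ((23009/2 : ℝ) + m * (85 : ℝ))) + y * (((376297/8 : ℝ) + m * (3135/2 : ℝ)) + y * (((57833/8 : ℝ) + m * (161/2 : ℝ)) + y * ((1183/2 : ℝ) + y * (79/4 : ℝ)))))))) + x * ((((211103/4 : ℝ) + m *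 ((25157/4 : ℝ) + m * (261/2 : ℝ))) + y * (((134924 : ℝ) + m * ((50553/4 : ℝ) + m * (369/2 : ℝ))) + y * (((230193/2 : ℝ) + m * ((7237 : ℝ) + m * (93/2 : ℝ))) + y * (((369449/8 : ℝ) + m * (3111/2 : ℝ)) + y * (((76995/8 : ℝ) + m * (221/2 : ℝ)) + y * ((8157/8 : ℝ) + y * (349/8 : ℝ))))))) + x * ((((27585/2 : ℝ) + m * ((3645/4 : ℝ) + m * (9/2 : ℝ))) + y * (((62647/2 : ℝ) + m * ((6319/4 : ℝ) + m * (9/2 : ℝ))) + y * (((180383/8 : ℝ) + m * (1355/2 : ℝ)) + y * (((56619/8 : ℝ) + m * (161/2 : ℝ)) + y * ((8109/8 : ℝ) + y * (441/8 : ℝ)))))) + x * ((((17869/8 : ℝ) + m * (129/2 : ℝ)) + y * (((35917/8 : ℝ) + m * (183/2 : ℝ)) + y * (((20987/8 : ℝ) + m * (93/4 : ℝ)) + y * ((1169/2 : ℝ) + y * (349/8 : ℝ))))) + x * ((((1703/8 : ℝ) + m * (3/2 : ℝ)) + y * (((2967/8 : ℝ) + m * (3/2 : ℝ)) + y * ((323/2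 : ℝ) + y * (79/4 : ℝ)))) + x * (((171/16 : ℝ) + y * ((243/16 : ℝ) + y * (31/8 : ℝ))) + x * ((3/16 : ℝ) + y * (3/16 : ℝ))))))))))) :=
  (add_pos_of_pos_of_nonneg (add_pos_of_pos_of_nonneg (add_pos_of_pos_of_nonneg (by norm_num : (0:ℝ) < (279577/16 : ℝ)) (mul_nonneg hm (add_nonneg (by norm_num : (0:ℝ) ≤ (33765/4 : ℝ)) (mul_nonneg hm (add_nonneg (by norm_num : (0:ℝ) ≤ (1481 : ℝ)) (mul_nonneg hm (add_nonneg (by norm_num : (0:ℝ) ≤ (123 : ℝ)) (mul_nonneg hm (by norm_num : (0:ℝ) ≤ (3 : ℝ)))))))))) (mul_nonneg hy (add_nonneg (add_nonneg (by norm_num : (0:ℝ) ≤ (2083989/16 : ℝ)) (mul_nonneg hm (add_nonneg (by norm_num : (0:ℝ) ≤ (171981/4 : ℝ)) (mul_nonneg hm (add_nonneg (by norm_num : (0:ℝ) ≤ (4988 : ℝ)) (mul_nonneg hm (add_nonneg (by norm_num : (0:ℝ) ≤ (239 : ℝ)) (mul_nonneg hm (by norm_num : (0:ℝ) ≤ (3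 : ℝ)))))))))) (mul_nonneg hy (add_nonneg (add_nonneg (by norm_num : (0:ℝ) ≤ (1625675/8 : ℝ)) (mul_nonneg hm (add_nonneg (by norm_num : (0:ℝ) ≤ (49428 : ℝ)) (mul_nonneg hm (add_nonneg (by norm_num : (0:ℝ) ≤ (7611/2 : ℝ)) (mul_nonneg hm (by norm_num : (0:ℝ) ≤ (90 : ℝ)))))))) (mul_nonneg hy (add_nonneg (add_nonneg (by norm_num : (0:ℝ) ≤ (1182045/8 : ℝ)) (mul_nonneg hm (add_nonneg (by norm_num : (0:ℝ) ≤ (25089 : ℝ)) (mul_nonneg hm (add_nonneg (by norm_num : (0:ℝ) ≤ (2225/2 : ℝ)) (mul_nonneg hm (by norm_num : (0:ℝ) ≤ (6 : ℝ)))))))) (mul_nonneg hy (add_nonneg (add_nonneg (by norm_num : (0:ℝ) ≤ (243935/4 : ℝ)) (mul_nonneg hm (add_nonneg (by norm_num : (0:ℝ) ≤ (26485/4 : ℝ)) (mul_nonneg hm (by norm_num : (0:ℝ) ≤ (261/2 : ℝ)))))) (mul_nonneg hy (add_nonneg (add_nonneg (by norm_num : (0:ℝ) ≤ (30665/2 :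 ℝ)) (mul_nonneg hm (add_nonneg (by norm_num : (0:ℝ) ≤ (3733/4 : ℝ)) (mul_nonneg hm (by norm_num : (0:ℝ) ≤ (9/2 : ℝ)))))) (mul_nonneg hy (add_nonneg (add_nonneg (by norm_num : (0:ℝ) ≤ (18997/8 : ℝ)) (mul_nonneg hm (by norm_num : (0:ℝ) ≤ (129/2 : ℝ)))) (mul_nonneg hy (add_nonneg (add_nonneg (by norm_num : (0:ℝ) ≤ (1747/8 : ℝ)) (mul_nonneg hm (by norm_num : (0:ℝ) ≤ (3/2 : ℝ)))) (mul_nonneg hy (add_nonneg (by norm_num : (0:ℝ) ≤ (171/16 : ℝ)) (mul_nonneg hy (by norm_num : (0:ℝ) ≤ (3/16 : ℝ)))))))))))))))))))) (mul_nonneg hx (add_nonneg (add_nonneg (add_nonneg (by norm_num : (0:ℝ) ≤ (1816405/16 : ℝ)) (mul_nonneg hm (add_nonneg (by norm_num : (0:ℝ) ≤ (162381/4 : ℝ)) (mul_nonneg hm (add_nonneg (by norm_num : (0:ℝ) ≤ (4876 : ℝ)) (mul_nonneg hm (add_nonneg (by norm_num : (0:ℝ) ≤ (239 : ℝ)) (mul_nonneg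 hm (by norm_num : (0:ℝ) ≤ (3 : ℝ)))))))))) (mul_nonneg hy (add_nonneg (add_nonneg (by norm_num : (0:ℝ) ≤ (7505949/16 : ℝ)) (mul_nonneg hm (add_nonneg (by norm_num : (0:ℝ) ≤ (516943/4 : ℝ)) (mul_nonneg hm (add_nonneg (by norm_num : (0:ℝ) ≤ (11584 : ℝ)) (mul_nonneg hm (add_nonneg (by norm_num : (0:ℝ) ≤ (385 : ℝ)) (mul_nonneg hm (by norm_num : (0:ℝ) ≤ (3 : ℝ)))))))))) (mul_nonneg hy (add_nonneg (add_nonneg (by norm_num : (0:ℝ) ≤ (4868083/8 : ℝ)) (mul_nonneg hm (add_nonneg (by norm_num : (0:ℝ) ≤ (124662 : ℝ)) (mul_nonneg hm (add_nonneg (by norm_num : (0:ℝ) ≤ (15007/2 : ℝ)) (mul_nonneg hm (by norm_num : (0:ℝ) ≤ (126 : ℝ)))))))) (mul_nonneg hy (add_nonneg (add_nonneg (by norm_num : (0:ℝ) ≤ (3135495/8 : ℝ)) (mul_nonneg hm (add_nonneg (by norm_num : (0:ℝ) ≤ (55611 : ℝ)) (mul_nonneg hm (add_nonneg (by norm_num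 : (0:ℝ) ≤ (3775/2 : ℝ)) (mul_nonneg hm (by norm_num : (0:ℝ) ≤ (6 : ℝ)))))))) (mul_nonneg hy (add_nonneg (add_nonneg (by norm_num : (0:ℝ) ≤ (146086 : ℝ)) (mul_nonneg hm (add_nonneg (by norm_num : (0:ℝ) ≤ (51969/4 : ℝ)) (mul_nonneg hm (by norm_num : (0:ℝ) ≤ (369/2 : ℝ)))))) (mul_nonneg hy (add_nonneg (add_nonneg (by norm_num : (0:ℝ) ≤ (66649/2 : ℝ)) (mul_nonneg hm (add_nonneg (by norm_num : (0:ℝ) ≤ (6395/4 : ℝ)) (mul_nonneg hm (by norm_num : (0:ℝ) ≤ (9/2 : ℝ)))))) (mul_nonneg hy (add_nonneg (add_nonneg (by norm_num : (0:ℝ) ≤ (37201/8 : ℝ)) (mul_nonneg hm (by norm_num : (0:ℝ) ≤ (183/2 : ℝ)))) (mul_nonneg hy (add_nonneg (add_nonneg (by norm_num : (0:ℝ) ≤ (3005/8 : ℝ)) (mul_nonneg hm (by norm_num : (0:ℝ) ≤ (3/2 : ℝ)))) (mul_nonneg hy (add_nonneg (by norm_num : (0:ℝ) ≤ (243/16 :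 ℝ)) (mul_nonneg hy (by norm_num : (0:ℝ) ≤ (3/16 : ℝ)))))))))))))))))))) (mul_nonneg hx (add_nonneg (add_nonneg (add_nonneg (by norm_num : (0:ℝ) ≤ (1378643/8 : ℝ)) (mul_nonneg hm (add_nonneg (by norm_num : (0:ℝ) ≤ (46124 : ℝ)) (mul_nonneg hm (add_nonneg (by norm_num : (0:ℝ) ≤ (7411/2 : ℝ)) (mul_nonneg hm (by norm_num : (0:ℝ) ≤ (90 : ℝ)))))))) (mul_nonneg hy (add_nonneg (add_nonneg (by norm_num : (0:ℝ) ≤ (4612103/8 : ℝ)) (mul_nonneg hm (add_nonneg (by norm_num : (0:ℝ) ≤ (121902 : ℝ)) (mul_nonneg hm (add_nonneg (by norm_num : (0:ℝ) ≤ (14875/2 : ℝ)) (mul_nonneg hm (by norm_num : (0:ℝ) ≤ (126 : ℝ)))))))) (mul_nonneg hy (add_nonneg (add_nonneg (by norm_num : (0:ℝ) ≤ (5222611/8 : ℝ)) (mul_nonneg hm (add_nonneg (by norm_num : (0:ℝ) ≤ (406379/4 : ℝ)) (mul_nonneg hm (add_nonneg (by norm_num : (0:ℝ) ≤ (8051/2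 : ℝ)) (mul_nonneg hm (by norm_num : (0:ℝ) ≤ (31 : ℝ)))))))) (mul_nonneg hy (add_nonneg (add_nonneg (by norm_num : (0:ℝ) ≤ (1480065/4 : ℝ)) (mul_nonneg hm (add_nonneg (by norm_num : (0:ℝ) ≤ (77093/2 : ℝ)) (mul_nonneg hm (by norm_num : (0:ℝ) ≤ (776 : ℝ)))))) (mul_nonneg hy (add_nonneg (add_nonneg (by norm_num : (0:ℝ) ≤ (240579/2 : ℝ)) (mul_nonneg hm (add_nonneg (by norm_num : (0:ℝ) ≤ (7355 : ℝ)) (mul_nonneg hm (by norm_num : (0:ℝ) ≤ (93/2 : ℝ)))))) (mul_nonneg hy (add_nonneg (add_nonneg (by norm_num : (0:ℝ) ≤ (187543/8 : ℝ)) (mul_nonneg hm (by norm_num : (0:ℝ) ≤ (1363/2 : ℝ)))) (mul_nonneg hy (add_nonneg (add_nonneg (by norm_num : (0:ℝ) ≤ (21459/8 : ℝ)) (mul_nonneg hm (by norm_num : (0:ℝ) ≤ (93/4 : ℝ)))) (mul_nonneg hy (add_nonneg (by norm_num : (0:ℝ) ≤ (325/2 : ℝ)) (mul_nonneg hy (by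 norm_num : (0:ℝ) ≤ (31/8 : ℝ)))))))))))))))))) (mul_nonneg hx (add_nonneg (add_nonneg (add_nonneg (by norm_num : (0:ℝ) ≤ (1001609/8 : ℝ)) (mul_nonneg hm (add_nonneg (by norm_num : (0:ℝ) ≤ (23461 : ℝ)) (mul_nonneg hm (add_nonneg (by norm_num : (0:ℝ) ≤ (2181/2 : ℝ)) (mul_nonneg hm (by norm_num : (0:ℝ) ≤ (6 : ℝ)))))))) (mul_nonneg hy (add_nonneg (add_nonneg (by norm_num : (0:ℝ) ≤ (2900005/8 : ℝ)) (mul_nonneg hm (add_nonneg (by norm_num : (0:ℝ) ≤ (53899 : ℝ)) (mul_nonneg hm (add_nonneg (by norm_num : (0:ℝ) ≤ (3737/2 : ℝ)) (mul_nonneg hm (by norm_num : (0:ℝ) ≤ (6 : ℝ)))))))) (mul_nonneg hy (add_nonneg (add_nonneg (by norm_num : (0:ℝ) ≤ (1434459/4 : ℝ)) (mul_nonneg hm (add_nonneg (by norm_num : (0:ℝ) ≤ (76099/2 : ℝ)) (mul_nonneg hm (by norm_num : (0:ℝ) ≤ (772 : ℝ)))))) (mul_nonneg hy (add_nonneg (add_nonneg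 (by norm_num : (0:ℝ) ≤ (174300 : ℝ)) (mul_nonneg hm (add_nonneg (by norm_num : (0:ℝ) ≤ (23009/2 : ℝ)) (mul_nonneg hm (by norm_num : (0:ℝ) ≤ (85 : ℝ)))))) (mul_nonneg hy (add_nonneg (add_nonneg (by norm_num : (0:ℝ) ≤ (376297/8 : ℝ)) (mul_nonneg hm (by norm_num : (0:ℝ) ≤ (3135/2 : ℝ)))) (mul_nonneg hy (add_nonneg (add_nonneg (by norm_num : (0:ℝ) ≤ (57833/8 : ℝ)) (mul_nonneg hm (by norm_num : (0:ℝ) ≤ (161/2 : ℝ)))) (mul_nonneg hy (add_nonneg (by norm_num : (0:ℝ) ≤ (1183/2 : ℝ)) (mul_nonneg hy (by norm_num : (0:ℝ) ≤ (79/4 : ℝ)))))))))))))))) (mul_nonneg hx (add_nonneg (add_nonneg (add_nonneg (by norm_num : (0:ℝ) ≤ (211103/4 : ℝ)) (mul_nonneg hm (add_nonneg (by norm_num : (0:ℝ) ≤ (25157/4 : ℝ)) (mul_nonneg hm (by norm_num : (0:ℝ) ≤ (261/2 : ℝ)))))) (mul_nonneg hy (add_nonneg (add_nonneg (by norm_num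 : (0:ℝ) ≤ (134924 : ℝ)) (mul_nonneg hm (add_nonneg (by norm_num : (0:ℝ) ≤ (50553/4 : ℝ)) (mul_nonneg hm (by norm_num : (0:ℝ) ≤ (369/2 : ℝ)))))) (mul_nonneg hy (add_nonneg (add_nonneg (by norm_num : (0:ℝ) ≤ (230193/2 : ℝ)) (mul_nonneg hm (add_nonneg (by norm_num : (0:ℝ) ≤ (7237 : ℝ)) (mul_nonneg hm (by norm_num : (0:ℝ) ≤ (93/2 : ℝ)))))) (mul_nonneg hy (add_nonneg (add_nonneg (by norm_num : (0:ℝ) ≤ (369449/8 : ℝ)) (mul_nonneg hm (by norm_num : (0:ℝ) ≤ (3111/2 : ℝ)))) (mul_nonneg hy (add_nonneg (add_nonneg (by norm_num : (0:ℝ) ≤ (76995/8 : ℝ)) (mul_nonneg hm (by norm_num : (0:ℝ) ≤ (221/2 : ℝ)))) (mul_nonneg hy (add_nonneg (by norm_num : (0:ℝ) ≤ (8157/8 : ℝ)) (mul_nonneg hy (by norm_num : (0:ℝ) ≤ (349/8 : ℝ)))))))))))))) (mul_nonneg hx (add_nonneg (add_nonneg (add_nonneg (by norm_num : (0:ℝ)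 ≤ (27585/2 : ℝ)) (mul_nonneg hm (add_nonneg (by norm_num : (0:ℝ) ≤ (3645/4 : ℝ)) (mul_nonneg hm (by norm_num : (0:ℝ) ≤ (9/2 : ℝ)))))) (mul_nonneg hy (add_nonneg (add_nonneg (by norm_num : (0:ℝ) ≤ (62647/2 : ℝ)) (mul_nonneg hm (add_nonneg (by norm_num : (0:ℝ) ≤ (6319/4 : ℝ)) (mul_nonneg hm (by norm_num : (0:ℝ) ≤ (9/2 : ℝ)))))) (mul_nonneg hy (add_nonneg (add_nonneg (by norm_num : (0:ℝ) ≤ (180383/8 : ℝ)) (mul_nonneg hm (by norm_num : (0:ℝ) ≤ (1355/2 : ℝ)))) (mul_nonneg hy (add_nonneg (add_nonneg (by norm_num : (0:ℝ) ≤ (56619/8 : ℝ)) (mul_nonneg hm (by norm_num : (0:ℝ) ≤ (161/2 : ℝ)))) (mul_nonneg hy (add_nonneg (by norm_num : (0:ℝ) ≤ (8109/8 : ℝ)) (mul_nonneg hy (by norm_num : (0:ℝ) ≤ (441/8 : ℝ)))))))))))) (mul_nonneg hx (add_nonneg (add_nonneg (add_nonneg (by norm_num : (0:ℝ) ≤ (17869/8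 : ℝ)) (mul_nonneg hm (by norm_num : (0:ℝ) ≤ (129/2 : ℝ)))) (mul_nonneg hy (add_nonneg (add_nonneg (by norm_num : (0:ℝ) ≤ (35917/8 : ℝ)) (mul_nonneg hm (by norm_num : (0:ℝ) ≤ (183/2 : ℝ)))) (mul_nonneg hy (add_nonneg (add_nonneg (by norm_num : (0:ℝ) ≤ (20987/8 : ℝ)) (mul_nonneg hm (by norm_num : (0:ℝ) ≤ (93/4 : ℝ)))) (mul_nonneg hy (add_nonneg (by norm_num : (0:ℝ) ≤ (1169/2 : ℝ)) (mul_nonneg hy (by norm_num : (0:ℝ) ≤ (349/8 : ℝ)))))))))) (mul_nonneg hx (add_nonneg (add_nonneg (add_nonneg (by norm_num : (0:ℝ) ≤ (1703/8 : ℝ)) (mul_nonneg hm (by norm_num : (0:ℝ) ≤ (3/2 : ℝ)))) (mul_nonneg hy (add_nonneg (add_nonneg (by norm_num : (0:ℝ) ≤ (2967/8 : ℝ)) (mul_nonneg hm (by norm_num : (0:ℝ) ≤ (3/2 : ℝ)))) (mul_nonneg hy (add_nonneg (by norm_num : (0:ℝ) ≤ (323/2 : ℝ)) (mul_nonneg hy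 (by norm_num : (0:ℝ) ≤ (79/4 : ℝ)))))))) (mul_nonneg hx (add_nonneg (add_nonneg (by norm_num : (0:ℝ) ≤ (171/16 : ℝ)) (mul_nonneg hy (add_nonneg (by norm_num : (0:ℝ) ≤ (243/16 : ℝ)) (mul_nonneg hy (by norm_num : (0:ℝ) ≤ (31/8 : ℝ)))))) (mul_nonneg hx (add_nonneg (by norm_num : (0:ℝ) ≤ (3/16 : ℝ)) (mul_nonneg hy (by norm_num : (0:ℝ) ≤ (3/16 : ℝ))))))))))))))))))))))

lemma polyPos1 (x y m : ℝ) (hx : 0 ≤ x) (hy : 0 ≤ y) (hm : 0 ≤ m) :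
    (0:ℝ) < ((((3459523/16 : ℝ) + m * ((59856 : ℝ) + m * ((10525/2 : ℝ) + m * ((192 : ℝ) + m * (3 : ℝ))))) + y * (((9043369/16 : ℝ) + m * ((528825/4 : ℝ) + m * ((9829 : ℝ) + m * ((295 : ℝ) + m * (3 : ℝ))))) + y * (((4868541/8 : ℝ) + m * ((443767/4 : ℝ) + m * ((11903/2 : ℝ) + m * (101 : ℝ)))) + y * (((2859727/8 : ℝ) + m * ((46425 : ℝ) + m * ((2959/2 : ℝ) + m * (6 : ℝ)))) + y * (((506183/4 : ℝ) + m * ((20937/2 : ℝ) + m * (147 : ℝ))) + y * (((111485/4 : ℝ) + m * ((5033/4 : ℝ) + m * (9/2 : ℝ))) + y * (((30163/8 : ℝ) + m * (291/4 : ℝ)) + y * (((2369/8 : ℝ) + m * (3/2 : ℝ)) + y * ((193/16 : ℝ) + y * (3/16 : ℝ)))))))))) + x * ((((8622953/16 : ℝ) + m * ((516537/4 : ℝ) + m * ((9717 : ℝ) + m * ((295 : ℝ) + m * (3 : ℝ))))) + y * (((21528909/16 : ℝ) + m * ((1091503/4 : ℝ) + m * ((17304 : ℝ) + m * ((425 :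 ℝ) + m * (3 : ℝ))))) + y * (((10941723/8 : ℝ) + m * ((430777/2 : ℝ) + m * ((19511/2 : ℝ) + m * (132 : ℝ)))) + y * (((6013635/8 : ℝ) + m * ((83639 : ℝ) + m * ((4411/2 : ℝ) + m * (6 : ℝ)))) + y * (((247315 : ℝ) + m * ((69233/4 : ℝ) + m * (387/2 : ℝ))) + y * (((100685/2 : ℝ) + m * ((7547/4 : ℝ) + m * (9/2 : ℝ))) + y * (((50017/8 : ℝ) + m * (96 : ℝ)) + y * (((3561/8 : ℝ) + m * (3/2 : ℝ)) + y * ((255/16 : ℝ) + y * (3/16 : ℝ)))))))))) + x * ((((4490245/8 : ℝ) + m * ((427255/4 : ℝ) + m * ((11703/2 : ℝ) + m * (101 : ℝ)))) + y * (((10559087/8 : ℝ) + m * ((424065/2 : ℝ) + m * ((19379/2 : ℝ) + m * (132 : ℝ)))) + y * (((9902171/8 : ℝ) + m * ((607205/4 : ℝ) + m * ((9485/2 : ℝ) + m * (31 : ℝ)))) + y * (((615424 : ℝ) + m * ((102959/2 : ℝ) + m * (841 : ℝ))) + y * (((717891/4 : ℝ) + m * ((35455/4 : ℝ) + m * (93/2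 : ℝ))) + y * (((252691/8 : ℝ) + m * (742 : ℝ)) + y * (((26071/8 : ℝ) + m * (93/4 : ℝ)) + y * ((709/4 : ℝ) + y * (31/8 : ℝ))))))))) + x * ((((2592667/8 : ℝ) + m * ((44465 : ℝ) + m * ((2915/2 : ℝ) + m * (6 : ℝ)))) + y * (((5673921/8 : ℝ) + m * ((81637 : ℝ) + m * ((4373/2 : ℝ) + m * (6 : ℝ)))) + y * (((1198975/2 : ℝ) + m * ((101841/2 : ℝ) + m * (837 : ℝ))) + y * (((259674 : ℝ) + m * ((27921/2 : ℝ) + m * (85 : ℝ))) + y * (((507055/8 : ℝ) + m * (3457/2 : ℝ)) + y * (((70733/8 : ℝ) + m * (161/2 : ℝ)) + y * ((2623/4 : ℝ) + y * (79/4 : ℝ)))))))) + x * ((((459871/4 : ℝ) + m * ((20185/2 : ℝ) + m * (147 : ℝ))) + y * (((231988 : ℝ) + m * ((67665/4 : ℝ) + m * (387/2 : ℝ))) + y * (((690319/4 : ℝ) + m * ((34951/4 : ℝ) + m * (93/2 : ℝ))) + y * (((498367/8 : ℝ) + m * (3433/2 : ℝ)) + y * (((94165/8 : ℝ) + m * (221/2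 : ℝ)) + y * ((9039/8 : ℝ) + y * (349/8 : ℝ))))))) + x * ((((103421/4 : ℝ) + m * ((4945/4 : ℝ) + m * (9/2 : ℝ))) + y * (((95595/2 : ℝ) + m * ((7471/4 : ℝ) + m * (9/2 : ℝ))) + y * (((243923/8 : ℝ) + m * (738 : ℝ)) + y * (((69327/8 : ℝ) + m * (161/2 : ℝ)) + y * ((8991/8 : ℝ) + y * (441/8 : ℝ)))))) + x * ((((28859/8 : ℝ) + m * (291/4 : ℝ)) + y * (((48581/8 : ℝ) + m * (96 : ℝ)) + y * (((25567/8 : ℝ) + m * (93/4 : ℝ)) + y * ((2595/4 : ℝ) + y * (349/8 : ℝ))))) + x * ((((2325/8 : ℝ) + m * (3/2 : ℝ)) + y * (((3523/8 : ℝ) + m * (3/2 : ℝ)) + y * ((705/4 : ℝ) + y * (79/4 : ℝ)))) + x * (((193/16 : ℝ) + y * ((255/16 : ℝ) + y * (31/8 : ℝ))) + x * ((3/16 : ℝ) + y * (3/16 : ℝ))))))))))) :=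
  (add_pos_of_pos_of_nonneg (add_pos_of_pos_of_nonneg (add_pos_of_pos_of_nonneg (by norm_num : (0:ℝ) < (3459523/16 : ℝ)) (mul_nonneg hm (add_nonneg (by norm_num : (0:ℝ) ≤ (59856 : ℝ)) (mul_nonneg hm (add_nonneg (by norm_num : (0:ℝ) ≤ (10525/2 : ℝ)) (mul_nonneg hm (add_nonneg (by norm_num : (0:ℝ) ≤ (192 : ℝ)) (mul_nonneg hm (by norm_num : (0:ℝ) ≤ (3 : ℝ)))))))))) (mul_nonneg hy (add_nonneg (add_nonneg (by norm_num : (0:ℝ) ≤ (9043369/16 : ℝ)) (mul_nonneg hm (add_nonneg (by norm_num : (0:ℝ) ≤ (528825/4 : ℝ)) (mul_nonneg hm (add_nonneg (by norm_num : (0:ℝ) ≤ (9829 : ℝ)) (mul_nonneg hm (add_nonneg (by norm_num : (0:ℝ) ≤ (295 : ℝ)) (mul_nonneg hm (by norm_num : (0:ℝ) ≤ (3 : ℝ)))))))))) (mul_nonneg hy (add_nonneg (add_nonneg (by norm_num : (0:ℝ) ≤ (4868541/8 : ℝ)) (mul_nonneg hm (add_nonneg (by norm_num : (0:ℝ) ≤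 (443767/4 : ℝ)) (mul_nonneg hm (add_nonneg (by norm_num : (0:ℝ) ≤ (11903/2 : ℝ)) (mul_nonneg hm (by norm_num : (0:ℝ) ≤ (101 : ℝ)))))))) (mul_nonneg hy (add_nonneg (add_nonneg (by norm_num : (0:ℝ) ≤ (2859727/8 : ℝ)) (mul_nonneg hm (add_nonneg (by norm_num : (0:ℝ) ≤ (46425 : ℝ)) (mul_nonneg hm (add_nonneg (by norm_num : (0:ℝ) ≤ (2959/2 : ℝ)) (mul_nonneg hm (by norm_num : (0:ℝ) ≤ (6 : ℝ)))))))) (mul_nonneg hy (add_nonneg (add_nonneg (by norm_num : (0:ℝ) ≤ (506183/4 : ℝ)) (mul_nonneg hm (add_nonneg (by norm_num : (0:ℝ) ≤ (20937/2 : ℝ)) (mul_nonneg hm (by norm_num : (0:ℝ) ≤ (147 : ℝ)))))) (mul_nonneg hy (add_nonneg (add_nonneg (by norm_num : (0:ℝ) ≤ (111485/4 : ℝ)) (mul_nonneg hm (add_nonneg (by norm_num : (0:ℝ) ≤ (5033/4 : ℝ)) (mul_nonneg hm (by norm_num : (0:ℝ) ≤ (9/2 : ℝ)))))) (mul_nonneg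 hy (add_nonneg (add_nonneg (by norm_num : (0:ℝ) ≤ (30163/8 : ℝ)) (mul_nonneg hm (by norm_num : (0:ℝ) ≤ (291/4 : ℝ)))) (mul_nonneg hy (add_nonneg (add_nonneg (by norm_num : (0:ℝ) ≤ (2369/8 : ℝ)) (mul_nonneg hm (by norm_num : (0:ℝ) ≤ (3/2 : ℝ)))) (mul_nonneg hy (add_nonneg (by norm_num : (0:ℝ) ≤ (193/16 : ℝ)) (mul_nonneg hy (by norm_num : (0:ℝ) ≤ (3/16 : ℝ)))))))))))))))))))) (mul_nonneg hx (add_nonneg (add_nonneg (add_nonneg (by norm_num : (0:ℝ) ≤ (8622953/16 : ℝ)) (mul_nonneg hm (add_nonneg (by norm_num : (0:ℝ) ≤ (516537/4 : ℝ)) (mul_nonneg hm (add_nonneg (by norm_num : (0:ℝ) ≤ (9717 : ℝ)) (mul_nonneg hm (add_nonneg (by norm_num : (0:ℝ) ≤ (295 : ℝ)) (mul_nonneg hm (by norm_num : (0:ℝ) ≤ (3 : ℝ)))))))))) (mul_nonneg hy (add_nonneg (add_nonneg (by norm_num : (0:ℝ) ≤ (21528909/16 : ℝ)) (mul_nonneg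 hm (add_nonneg (by norm_num : (0:ℝ) ≤ (1091503/4 : ℝ)) (mul_nonneg hm (add_nonneg (by norm_num : (0:ℝ) ≤ (17304 : ℝ)) (mul_nonneg hm (add_nonneg (by norm_num : (0:ℝ) ≤ (425 : ℝ)) (mul_nonneg hm (by norm_num : (0:ℝ) ≤ (3 : ℝ)))))))))) (mul_nonneg hy (add_nonneg (add_nonneg (by norm_num : (0:ℝ) ≤ (10941723/8 : ℝ)) (mul_nonneg hm (add_nonneg (by norm_num : (0:ℝ) ≤ (430777/2 : ℝ)) (mul_nonneg hm (add_nonneg (by norm_num : (0:ℝ) ≤ (19511/2 : ℝ)) (mul_nonneg hm (by norm_num : (0:ℝ) ≤ (132 : ℝ)))))))) (mul_nonneg hy (add_nonneg (add_nonneg (by norm_num : (0:ℝ) ≤ (6013635/8 : ℝ)) (mul_nonneg hm (add_nonneg (by norm_num : (0:ℝ) ≤ (83639 : ℝ)) (mul_nonneg hm (add_nonneg (by norm_num : (0:ℝ) ≤ (4411/2 : ℝ)) (mul_nonneg hm (by norm_num : (0:ℝ) ≤ (6 : ℝ)))))))) (mul_nonneg hy (add_nonneg (add_nonneg (by norm_num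 : (0:ℝ) ≤ (247315 : ℝ)) (mul_nonneg hm (add_nonneg (by norm_num : (0:ℝ) ≤ (69233/4 : ℝ)) (mul_nonneg hm (by norm_num : (0:ℝ) ≤ (387/2 : ℝ)))))) (mul_nonneg hy (add_nonneg (add_nonneg (by norm_num : (0:ℝ) ≤ (100685/2 : ℝ)) (mul_nonneg hm (add_nonneg (by norm_num : (0:ℝ) ≤ (7547/4 : ℝ)) (mul_nonneg hm (by norm_num : (0:ℝ) ≤ (9/2 : ℝ)))))) (mul_nonneg hy (add_nonneg (add_nonneg (by norm_num : (0:ℝ) ≤ (50017/8 : ℝ)) (mul_nonneg hm (by norm_num : (0:ℝ) ≤ (96 : ℝ)))) (mul_nonneg hy (add_nonneg (add_nonneg (by norm_num : (0:ℝ) ≤ (3561/8 : ℝ)) (mul_nonneg hm (by norm_num : (0:ℝ) ≤ (3/2 : ℝ)))) (mul_nonneg hy (add_nonneg (by norm_num : (0:ℝ) ≤ (255/16 : ℝ)) (mul_nonneg hy (by norm_num : (0:ℝ) ≤ (3/16 : ℝ)))))))))))))))))))) (mul_nonneg hx (add_nonneg (add_nonneg (add_nonneg (by norm_num : (0:ℝ)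 ≤ (4490245/8 : ℝ)) (mul_nonneg hm (add_nonneg (by norm_num : (0:ℝ) ≤ (427255/4 : ℝ)) (mul_nonneg hm (add_nonneg (by norm_num : (0:ℝ) ≤ (11703/2 : ℝ)) (mul_nonneg hm (by norm_num : (0:ℝ) ≤ (101 : ℝ)))))))) (mul_nonneg hy (add_nonneg (add_nonneg (by norm_num : (0:ℝ) ≤ (10559087/8 : ℝ)) (mul_nonneg hm (add_nonneg (by norm_num : (0:ℝ) ≤ (424065/2 : ℝ)) (mul_nonneg hm (add_nonneg (by norm_num : (0:ℝ) ≤ (19379/2 : ℝ)) (mul_nonneg hm (by norm_num : (0:ℝ) ≤ (132 : ℝ)))))))) (mul_nonneg hy (add_nonneg (add_nonneg (by norm_num : (0:ℝ) ≤ (9902171/8 : ℝ)) (mul_nonneg hm (add_nonneg (by norm_num : (0:ℝ) ≤ (607205/4 : ℝ)) (mul_nonneg hm (add_nonneg (by norm_num : (0:ℝ) ≤ (9485/2 : ℝ)) (mul_nonneg hm (by norm_num : (0:ℝ) ≤ (31 : ℝ)))))))) (mul_nonneg hy (add_nonneg (add_nonneg (by norm_num : (0:ℝ) ≤ (615424 :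 ℝ)) (mul_nonneg hm (add_nonneg (by norm_num : (0:ℝ) ≤ (102959/2 : ℝ)) (mul_nonneg hm (by norm_num : (0:ℝ) ≤ (841 : ℝ)))))) (mul_nonneg hy (add_nonneg (add_nonneg (by norm_num : (0:ℝ) ≤ (717891/4 : ℝ)) (mul_nonneg hm (add_nonneg (by norm_num : (0:ℝ) ≤ (35455/4 : ℝ)) (mul_nonneg hm (by norm_num : (0:ℝ) ≤ (93/2 : ℝ)))))) (mul_nonneg hy (add_nonneg (add_nonneg (by norm_num : (0:ℝ) ≤ (252691/8 : ℝ)) (mul_nonneg hm (by norm_num : (0:ℝ) ≤ (742 : ℝ)))) (mul_nonneg hy (add_nonneg (add_nonneg (by norm_num : (0:ℝ) ≤ (26071/8 : ℝ)) (mul_nonneg hm (by norm_num : (0:ℝ) ≤ (93/4 : ℝ)))) (mul_nonneg hy (add_nonneg (by norm_num : (0:ℝ) ≤ (709/4 : ℝ)) (mul_nonneg hy (by norm_num : (0:ℝ) ≤ (31/8 : ℝ)))))))))))))))))) (mul_nonneg hx (add_nonneg (add_nonneg (add_nonneg (by norm_num : (0:ℝ) ≤ (2592667/8 : ℝ)) (mul_nonneg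 hm (add_nonneg (by norm_num : (0:ℝ) ≤ (44465 : ℝ)) (mul_nonneg hm (add_nonneg (by norm_num : (0:ℝ) ≤ (2915/2 : ℝ)) (mul_nonneg hm (by norm_num : (0:ℝ) ≤ (6 : ℝ)))))))) (mul_nonneg hy (add_nonneg (add_nonneg (by norm_num : (0:ℝ) ≤ (5673921/8 : ℝ)) (mul_nonneg hm (add_nonneg (by norm_num : (0:ℝ) ≤ (81637 : ℝ)) (mul_nonneg hm (add_nonneg (by norm_num : (0:ℝ) ≤ (4373/2 : ℝ)) (mul_nonneg hm (by norm_num : (0:ℝ) ≤ (6 : ℝ)))))))) (mul_nonneg hy (add_nonneg (add_nonneg (by norm_num : (0:ℝ) ≤ (1198975/2 : ℝ)) (mul_nonneg hm (add_nonneg (by norm_num : (0:ℝ) ≤ (101841/2 : ℝ)) (mul_nonneg hm (by norm_num : (0:ℝ) ≤ (837 : ℝ)))))) (mul_nonneg hy (add_nonneg (add_nonneg (by norm_num : (0:ℝ) ≤ (259674 : ℝ)) (mul_nonneg hm (add_nonneg (by norm_num : (0:ℝ) ≤ (27921/2 : ℝ)) (mul_nonneg hm (by norm_num : (0:ℝ)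 ≤ (85 : ℝ)))))) (mul_nonneg hy (add_nonneg (add_nonneg (by norm_num : (0:ℝ) ≤ (507055/8 : ℝ)) (mul_nonneg hm (by norm_num : (0:ℝ) ≤ (3457/2 : ℝ)))) (mul_nonneg hy (add_nonneg (add_nonneg (by norm_num : (0:ℝ) ≤ (70733/8 : ℝ)) (mul_nonneg hm (by norm_num : (0:ℝ) ≤ (161/2 : ℝ)))) (mul_nonneg hy (add_nonneg (by norm_num : (0:ℝ) ≤ (2623/4 : ℝ)) (mul_nonneg hy (by norm_num : (0:ℝ) ≤ (79/4 : ℝ)))))))))))))))) (mul_nonneg hx (add_nonneg (add_nonneg (add_nonneg (by norm_num : (0:ℝ) ≤ (459871/4 : ℝ)) (mul_nonneg hm (add_nonneg (by norm_num : (0:ℝ) ≤ (20185/2 : ℝ)) (mul_nonneg hm (by norm_num : (0:ℝ) ≤ (147 : ℝ)))))) (mul_nonneg hy (add_nonneg (add_nonneg (by norm_num : (0:ℝ) ≤ (231988 : ℝ)) (mul_nonneg hm (add_nonneg (by norm_num : (0:ℝ) ≤ (67665/4 : ℝ)) (mul_nonneg hm (by norm_num : (0:ℝ) ≤ (387/2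 : ℝ)))))) (mul_nonneg hy (add_nonneg (add_nonneg (by norm_num : (0:ℝ) ≤ (690319/4 : ℝ)) (mul_nonneg hm (add_nonneg (by norm_num : (0:ℝ) ≤ (34951/4 : ℝ)) (mul_nonneg hm (by norm_num : (0:ℝ) ≤ (93/2 : ℝ)))))) (mul_nonneg hy (add_nonneg (add_nonneg (by norm_num : (0:ℝ) ≤ (498367/8 : ℝ)) (mul_nonneg hm (by norm_num : (0:ℝ) ≤ (3433/2 : ℝ)))) (mul_nonneg hy (add_nonneg (add_nonneg (by norm_num : (0:ℝ) ≤ (94165/8 : ℝ)) (mul_nonneg hm (by norm_num : (0:ℝ) ≤ (221/2 : ℝ)))) (mul_nonneg hy (add_nonneg (by norm_num : (0:ℝ) ≤ (9039/8 : ℝ)) (mul_nonneg hy (by norm_num : (0:ℝ) ≤ (349/8 : ℝ)))))))))))))) (mul_nonneg hx (add_nonneg (add_nonneg (add_nonneg (by norm_num : (0:ℝ) ≤ (103421/4 : ℝ)) (mul_nonneg hm (add_nonneg (by norm_num : (0:ℝ) ≤ (4945/4 : ℝ)) (mul_nonneg hm (by norm_num : (0:ℝ) ≤ (9/2 : ℝ))))))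 (mul_nonneg hy (add_nonneg (add_nonneg (by norm_num : (0:ℝ) ≤ (95595/2 : ℝ)) (mul_nonneg hm (add_nonneg (by norm_num : (0:ℝ) ≤ (7471/4 : ℝ)) (mul_nonneg hm (by norm_num : (0:ℝ) ≤ (9/2 : ℝ)))))) (mul_nonneg hy (add_nonneg (add_nonneg (by norm_num : (0:ℝ) ≤ (243923/8 : ℝ)) (mul_nonneg hm (by norm_num : (0:ℝ) ≤ (738 : ℝ)))) (mul_nonneg hy (add_nonneg (add_nonneg (by norm_num : (0:ℝ) ≤ (69327/8 : ℝ)) (mul_nonneg hm (by norm_num : (0:ℝ) ≤ (161/2 : ℝ)))) (mul_nonneg hy (add_nonneg (by norm_num : (0:ℝ) ≤ (8991/8 : ℝ)) (mul_nonneg hy (by norm_num : (0:ℝ) ≤ (441/8 : ℝ)))))))))))) (mul_nonneg hx (add_nonneg (add_nonneg (add_nonneg (by norm_num : (0:ℝ) ≤ (28859/8 : ℝ)) (mul_nonneg hm (by norm_num : (0:ℝ) ≤ (291/4 : ℝ)))) (mul_nonneg hy (add_nonneg (add_nonneg (by norm_num : (0:ℝ) ≤ (48581/8 : ℝ)) (mul_nonneg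 hm (by norm_num : (0:ℝ) ≤ (96 : ℝ)))) (mul_nonneg hy (add_nonneg (add_nonneg (by norm_num : (0:ℝ) ≤ (25567/8 : ℝ)) (mul_nonneg hm (by norm_num : (0:ℝ) ≤ (93/4 : ℝ)))) (mul_nonneg hy (add_nonneg (by norm_num : (0:ℝ) ≤ (2595/4 : ℝ)) (mul_nonneg hy (by norm_num : (0:ℝ) ≤ (349/8 : ℝ)))))))))) (mul_nonneg hx (add_nonneg (add_nonneg (add_nonneg (by norm_num : (0:ℝ) ≤ (2325/8 : ℝ)) (mul_nonneg hm (by norm_num : (0:ℝ) ≤ (3/2 : ℝ)))) (mul_nonneg hy (add_nonneg (add_nonneg (by norm_num : (0:ℝ) ≤ (3523/8 : ℝ)) (mul_nonneg hm (by norm_num : (0:ℝ) ≤ (3/2 : ℝ)))) (mul_nonneg hy (add_nonneg (by norm_num : (0:ℝ) ≤ (705/4 : ℝ)) (mul_nonneg hy (by norm_num : (0:ℝ) ≤ (79/4 : ℝ)))))))) (mul_nonneg hx (add_nonneg (add_nonneg (by norm_num : (0:ℝ) ≤ (193/16 : ℝ)) (mul_nonneg hy (add_nonneg (by norm_num : (0:ℝ)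 ≤ (255/16 : ℝ)) (mul_nonneg hy (by norm_num : (0:ℝ) ≤ (31/8 : ℝ)))))) (mul_nonneg hx (add_nonneg (by norm_num : (0:ℝ) ≤ (3/16 : ℝ)) (mul_nonneg hy (by norm_num : (0:ℝ) ≤ (3/16 : ℝ))))))))))))))))))))))

lemma polyPos2 (x y m : ℝ) (hx : 0 ≤ x) (hy : 0 ≤ y) (hm : 0 ≤ m) :
    (0:ℝ) < ((((1189205/8 : ℝ) + m * ((185503/4 : ℝ) + m * ((11911/2 : ℝ) + m * ((385 : ℝ) + m * (8 : ℝ))))) + y * (((3444895/8 : ℝ) + m * ((234081/2 : ℝ) + m * ((12037 : ℝ) + m * ((530 : ℝ) + m * (6 : ℝ))))) + y * (((1996917/4 : ℝ) + m * ((432895/4 : ℝ) + m * ((7862 : ℝ) + m * (179 : ℝ)))) + y * (((313395 : ℝ) + m * ((49874 : ℝ) + m * ((2178 : ℝ) + m * (12 : ℝ)))) + y * (((238591/2 : ℝ) + m * ((50617/4 : ℝ) + m * (513/2 : ℝ))) + y * (((115131/4 : ℝ) + m * ((3561/2 : ℝ) + m * (9 : ℝ))) + y * (((17639/4 : ℝ)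 + m * (505/4 : ℝ)) + y * (((412 : ℝ) + m * (3 : ℝ)) + y * ((167/8 : ℝ) + y * (3/8 : ℝ)))))))))) + x * ((((3192095/8 : ℝ) + m * ((224769/2 : ℝ) + m * ((11813 : ℝ) + m * ((530 : ℝ) + m * (6 : ℝ))))) + y * (((2270289/2 : ℝ) + m * ((1113327/4 : ℝ) + m * ((47569/2 : ℝ) + m * ((777 : ℝ) + m * (6 : ℝ))))) + y * (((10151327/8 : ℝ) + m * ((982255/4 : ℝ) + m * ((29337/2 : ℝ) + m * (249 : ℝ)))) + y * (((6080685/8 : ℝ) + m * ((211829/2 : ℝ) + m * ((7325/2 : ℝ) + m * (12 : ℝ)))) + y * (((2191073/8 : ℝ) + m * ((24650 : ℝ) + m * (729/2 : ℝ))) + y * (((495393/8 : ℝ) + m * ((12319/4 : ℝ) + m * (9 : ℝ))) + y * (((69793/8 : ℝ) + m * (723/4 : ℝ)) + y * (((5771/8 : ℝ) + m * (3 : ℝ)) + y * ((30 : ℝ) + y * (3/8 : ℝ)))))))))) + x * ((((1766101/4 : ℝ) + m * ((407375/4 : ℝ) + m * ((7662 : ℝ) + m * (179 : ℝ)))) +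 y * (((9676111/8 : ℝ) + m * ((960871/4 : ℝ) + m * ((29073/2 : ℝ) + m * (249 : ℝ)))) + y * (((5059457/4 : ℝ) + m * ((193211 : ℝ) + m * ((7800 : ℝ) + m * (62 : ℝ)))) + y * (((5545019/8 : ℝ) + m * ((145805/2 : ℝ) + m * (3039/2 : ℝ))) + y * (((446679/2 : ℝ) + m * ((56303/4 : ℝ) + m * (93 : ℝ))) + y * (((350745/8 : ℝ) + m * (5331/4 : ℝ)) + y * (((20441/4 : ℝ) + m * (93/2 : ℝ)) + y * ((2541/8 : ℝ) + y * (31/4 : ℝ))))))))) + x * ((((271597 : ℝ) + m * ((46740 : ℝ) + m * ((2134 : ℝ) + m * (12 : ℝ)))) + y * (((5645565/8 : ℝ) + m * ((205195/2 : ℝ) + m * ((7249/2 : ℝ) + m * (12 : ℝ)))) + y * (((5376623/8 : ℝ) + m * ((143863/2 : ℝ) + m * (3023/2 : ℝ))) + y * (((1294115/4 : ℝ) + m * ((43923/2 : ℝ) + m * (170 : ℝ))) + y * (((351551/4 : ℝ) + m * (6109/2 : ℝ)) + y * (((109909/8 : ℝ) + m * (161 : ℝ)) + y * ((9207/8 :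 ℝ) + y * (79/2 : ℝ)))))))) + x * ((((208237/2 : ℝ) + m * ((48049/4 : ℝ) + m * (513/2 : ℝ))) + y * (((2025741/8 : ℝ) + m * ((23961 : ℝ) + m * (729/2 : ℝ))) + y * (((427381/2 : ℝ) + m * ((55375/4 : ℝ) + m * (93 : ℝ))) + y * (((345139/4 : ℝ) + m * (6061/2 : ℝ)) + y * (((73163/4 : ℝ) + m * (221 : ℝ)) + y * ((15873/8 : ℝ) + y * (349/4 : ℝ))))))) + x * ((((103631/4 : ℝ) + m * ((3473/2 : ℝ) + m * (9 : ℝ))) + y * (((465325/8 : ℝ) + m * ((12167/4 : ℝ) + m * (9 : ℝ))) + y * (((337181/8 : ℝ) + m * (5299/4 : ℝ)) + y * (((107577/8 : ℝ) + m * (161 : ℝ)) + y * ((15777/8 : ℝ) + y * (441/4 : ℝ)))))) + x * ((((16555/4 : ℝ) + m * (505/4 : ℝ)) + y * (((67301/8 : ℝ) + m * (723/4 : ℝ)) + y * (((19977/4 : ℝ) + m * (93/2 : ℝ)) + y * ((9095/8 : ℝ) + y * (349/4 : ℝ))))) + x * ((((401 : ℝ) + m * (3 : ℝ)) + y * (((5695/8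 : ℝ) + m * (3 : ℝ)) + y * ((2525/8 : ℝ) + y * (79/2 : ℝ)))) + x * (((167/8 : ℝ) + y * ((30 : ℝ) + y * (31/4 : ℝ))) + x * ((3/8 : ℝ) + y * (3/8 : ℝ))))))))))) :=
  (add_pos_of_pos_of_nonneg (add_pos_of_pos_of_nonneg (add_pos_of_pos_of_nonneg (by norm_num : (0:ℝ) < (1189205/8 : ℝ)) (mul_nonneg hm (add_nonneg (by norm_num : (0:ℝ) ≤ (185503/4 : ℝ)) (mul_nonneg hm (add_nonneg (by norm_num : (0:ℝ) ≤ (11911/2 : ℝ)) (mul_nonneg hm (add_nonneg (by norm_num : (0:ℝ) ≤ (385 : ℝ)) (mul_nonneg hm (by norm_num : (0:ℝ) ≤ (8 : ℝ)))))))))) (mul_nonneg hy (add_nonneg (add_nonneg (by norm_num : (0:ℝ) ≤ (3444895/8 : ℝ)) (mul_nonneg hm (add_nonneg (by norm_num : (0:ℝ) ≤ (234081/2 : ℝ)) (mul_nonneg hm (add_nonneg (by norm_num : (0:ℝ) ≤ (12037 : ℝ)) (mul_nonneg hm (add_nonneg (by norm_num : (0:ℝ) ≤ (530 : ℝ)) (mul_nonneg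 hm (by norm_num : (0:ℝ) ≤ (6 : ℝ)))))))))) (mul_nonneg hy (add_nonneg (add_nonneg (by norm_num : (0:ℝ) ≤ (1996917/4 : ℝ)) (mul_nonneg hm (add_nonneg (by norm_num : (0:ℝ) ≤ (432895/4 : ℝ)) (mul_nonneg hm (add_nonneg (by norm_num : (0:ℝ) ≤ (7862 : ℝ)) (mul_nonneg hm (by norm_num : (0:ℝ) ≤ (179 : ℝ)))))))) (mul_nonneg hy (add_nonneg (add_nonneg (by norm_num : (0:ℝ) ≤ (313395 : ℝ)) (mul_nonneg hm (add_nonneg (by norm_num : (0:ℝ) ≤ (49874 : ℝ)) (mul_nonneg hm (add_nonneg (by norm_num : (0:ℝ) ≤ (2178 : ℝ)) (mul_nonneg hm (by norm_num : (0:ℝ) ≤ (12 : ℝ)))))))) (mul_nonneg hy (add_nonneg (add_nonneg (by norm_num : (0:ℝ) ≤ (238591/2 : ℝ)) (mul_nonneg hm (add_nonneg (by norm_num : (0:ℝ) ≤ (50617/4 : ℝ)) (mul_nonneg hm (by norm_num : (0:ℝ) ≤ (513/2 : ℝ)))))) (mul_nonneg hy (add_nonneg (add_nonneg (by norm_num :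 (0:ℝ) ≤ (115131/4 : ℝ)) (mul_nonneg hm (add_nonneg (by norm_num : (0:ℝ) ≤ (3561/2 : ℝ)) (mul_nonneg hm (by norm_num : (0:ℝ) ≤ (9 : ℝ)))))) (mul_nonneg hy (add_nonneg (add_nonneg (by norm_num : (0:ℝ) ≤ (17639/4 : ℝ)) (mul_nonneg hm (by norm_num : (0:ℝ) ≤ (505/4 : ℝ)))) (mul_nonneg hy (add_nonneg (add_nonneg (by norm_num : (0:ℝ) ≤ (412 : ℝ)) (mul_nonneg hm (by norm_num : (0:ℝ) ≤ (3 : ℝ)))) (mul_nonneg hy (add_nonneg (by norm_num : (0:ℝ) ≤ (167/8 : ℝ)) (mul_nonneg hy (by norm_num : (0:ℝ) ≤ (3/8 : ℝ)))))))))))))))))))) (mul_nonneg hx (add_nonneg (add_nonneg (add_nonneg (by norm_num : (0:ℝ) ≤ (3192095/8 : ℝ)) (mul_nonneg hm (add_nonneg (by norm_num : (0:ℝ) ≤ (224769/2 : ℝ)) (mul_nonneg hm (add_nonneg (by norm_num : (0:ℝ) ≤ (11813 : ℝ)) (mul_nonneg hm (add_nonneg (by norm_num : (0:ℝ) ≤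 (530 : ℝ)) (mul_nonneg hm (by norm_num : (0:ℝ) ≤ (6 : ℝ)))))))))) (mul_nonneg hy (add_nonneg (add_nonneg (by norm_num : (0:ℝ) ≤ (2270289/2 : ℝ)) (mul_nonneg hm (add_nonneg (by norm_num : (0:ℝ) ≤ (1113327/4 : ℝ)) (mul_nonneg hm (add_nonneg (by norm_num : (0:ℝ) ≤ (47569/2 : ℝ)) (mul_nonneg hm (add_nonneg (by norm_num : (0:ℝ) ≤ (777 : ℝ)) (mul_nonneg hm (by norm_num : (0:ℝ) ≤ (6 : ℝ)))))))))) (mul_nonneg hy (add_nonneg (add_nonneg (by norm_num : (0:ℝ) ≤ (10151327/8 : ℝ)) (mul_nonneg hm (add_nonneg (by norm_num : (0:ℝ) ≤ (982255/4 : ℝ)) (mul_nonneg hm (add_nonneg (by norm_num : (0:ℝ) ≤ (29337/2 : ℝ)) (mul_nonneg hm (by norm_num : (0:ℝ) ≤ (249 : ℝ)))))))) (mul_nonneg hy (add_nonneg (add_nonneg (by norm_num : (0:ℝ) ≤ (6080685/8 : ℝ)) (mul_nonneg hm (add_nonneg (by norm_num : (0:ℝ) ≤ (211829/2 : ℝ))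 (mul_nonneg hm (add_nonneg (by norm_num : (0:ℝ) ≤ (7325/2 : ℝ)) (mul_nonneg hm (by norm_num : (0:ℝ) ≤ (12 : ℝ)))))))) (mul_nonneg hy (add_nonneg (add_nonneg (by norm_num : (0:ℝ) ≤ (2191073/8 : ℝ)) (mul_nonneg hm (add_nonneg (by norm_num : (0:ℝ) ≤ (24650 : ℝ)) (mul_nonneg hm (by norm_num : (0:ℝ) ≤ (729/2 : ℝ)))))) (mul_nonneg hy (add_nonneg (add_nonneg (by norm_num : (0:ℝ) ≤ (495393/8 : ℝ)) (mul_nonneg hm (add_nonneg (by norm_num : (0:ℝ) ≤ (12319/4 : ℝ)) (mul_nonneg hm (by norm_num : (0:ℝ) ≤ (9 : ℝ)))))) (mul_nonneg hy (add_nonneg (add_nonneg (by norm_num : (0:ℝ) ≤ (69793/8 : ℝ)) (mul_nonneg hm (by norm_num : (0:ℝ) ≤ (723/4 : ℝ)))) (mul_nonneg hy (add_nonneg (add_nonneg (by norm_num : (0:ℝ) ≤ (5771/8 : ℝ)) (mul_nonneg hm (by norm_num : (0:ℝ) ≤ (3 : ℝ)))) (mul_nonneg hy (add_nonneg (by norm_num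 : (0:ℝ) ≤ (30 : ℝ)) (mul_nonneg hy (by norm_num : (0:ℝ) ≤ (3/8 : ℝ)))))))))))))))))))) (mul_nonneg hx (add_nonneg (add_nonneg (add_nonneg (by norm_num : (0:ℝ) ≤ (1766101/4 : ℝ)) (mul_nonneg hm (add_nonneg (by norm_num : (0:ℝ) ≤ (407375/4 : ℝ)) (mul_nonneg hm (add_nonneg (by norm_num : (0:ℝ) ≤ (7662 : ℝ)) (mul_nonneg hm (by norm_num : (0:ℝ) ≤ (179 : ℝ)))))))) (mul_nonneg hy (add_nonneg (add_nonneg (by norm_num : (0:ℝ) ≤ (9676111/8 : ℝ)) (mul_nonneg hm (add_nonneg (by norm_num : (0:ℝ) ≤ (960871/4 : ℝ)) (mul_nonneg hm (add_nonneg (by norm_num : (0:ℝ) ≤ (29073/2 : ℝ)) (mul_nonneg hm (by norm_num : (0:ℝ) ≤ (249 : ℝ)))))))) (mul_nonneg hy (add_nonneg (add_nonneg (by norm_num : (0:ℝ) ≤ (5059457/4 : ℝ)) (mul_nonneg hm (add_nonneg (by norm_num : (0:ℝ) ≤ (193211 : ℝ)) (mul_nonneg hm (add_nonneg (by norm_num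 : (0:ℝ) ≤ (7800 : ℝ)) (mul_nonneg hm (by norm_num : (0:ℝ) ≤ (62 : ℝ)))))))) (mul_nonneg hy (add_nonneg (add_nonneg (by norm_num : (0:ℝ) ≤ (5545019/8 : ℝ)) (mul_nonneg hm (add_nonneg (by norm_num : (0:ℝ) ≤ (145805/2 : ℝ)) (mul_nonneg hm (by norm_num : (0:ℝ) ≤ (3039/2 : ℝ)))))) (mul_nonneg hy (add_nonneg (add_nonneg (by norm_num : (0:ℝ) ≤ (446679/2 : ℝ)) (mul_nonneg hm (add_nonneg (by norm_num : (0:ℝ) ≤ (56303/4 : ℝ)) (mul_nonneg hm (by norm_num : (0:ℝ) ≤ (93 : ℝ)))))) (mul_nonneg hy (add_nonneg (add_nonneg (by norm_num : (0:ℝ) ≤ (350745/8 : ℝ)) (mul_nonneg hm (by norm_num : (0:ℝ) ≤ (5331/4 : ℝ)))) (mul_nonneg hy (add_nonneg (add_nonneg (by norm_num : (0:ℝ) ≤ (20441/4 : ℝ)) (mul_nonneg hm (by norm_num : (0:ℝ) ≤ (93/2 : ℝ)))) (mul_nonneg hy (add_nonneg (by norm_num : (0:ℝ) ≤ (2541/8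 : ℝ)) (mul_nonneg hy (by norm_num : (0:ℝ) ≤ (31/4 : ℝ)))))))))))))))))) (mul_nonneg hx (add_nonneg (add_nonneg (add_nonneg (by norm_num : (0:ℝ) ≤ (271597 : ℝ)) (mul_nonneg hm (add_nonneg (by norm_num : (0:ℝ) ≤ (46740 : ℝ)) (mul_nonneg hm (add_nonneg (by norm_num : (0:ℝ) ≤ (2134 : ℝ)) (mul_nonneg hm (by norm_num : (0:ℝ) ≤ (12 : ℝ)))))))) (mul_nonneg hy (add_nonneg (add_nonneg (by norm_num : (0:ℝ) ≤ (5645565/8 : ℝ)) (mul_nonneg hm (add_nonneg (by norm_num : (0:ℝ) ≤ (205195/2 : ℝ)) (mul_nonneg hm (add_nonneg (by norm_num : (0:ℝ) ≤ (7249/2 : ℝ)) (mul_nonneg hm (by norm_num : (0:ℝ) ≤ (12 : ℝ)))))))) (mul_nonneg hy (add_nonneg (add_nonneg (by norm_num : (0:ℝ) ≤ (5376623/8 : ℝ)) (mul_nonneg hm (add_nonneg (by norm_num : (0:ℝ) ≤ (143863/2 : ℝ)) (mul_nonneg hm (by norm_num : (0:ℝ) ≤ (3023/2 : ℝ))))))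 (mul_nonneg hy (add_nonneg (add_nonneg (by norm_num : (0:ℝ) ≤ (1294115/4 : ℝ)) (mul_nonneg hm (add_nonneg (by norm_num : (0:ℝ) ≤ (43923/2 : ℝ)) (mul_nonneg hm (by norm_num : (0:ℝ) ≤ (170 : ℝ)))))) (mul_nonneg hy (add_nonneg (add_nonneg (by norm_num : (0:ℝ) ≤ (351551/4 : ℝ)) (mul_nonneg hm (by norm_num : (0:ℝ) ≤ (6109/2 : ℝ)))) (mul_nonneg hy (add_nonneg (add_nonneg (by norm_num : (0:ℝ) ≤ (109909/8 : ℝ)) (mul_nonneg hm (by norm_num : (0:ℝ) ≤ (161 : ℝ)))) (mul_nonneg hy (add_nonneg (by norm_num : (0:ℝ) ≤ (9207/8 : ℝ)) (mul_nonneg hy (by norm_num : (0:ℝ) ≤ (79/2 : ℝ)))))))))))))))) (mul_nonneg hx (add_nonneg (add_nonneg (add_nonneg (by norm_num : (0:ℝ) ≤ (208237/2 : ℝ)) (mul_nonneg hm (add_nonneg (by norm_num : (0:ℝ) ≤ (48049/4 : ℝ)) (mul_nonneg hm (by norm_num : (0:ℝ) ≤ (513/2 : ℝ)))))) (mul_nonneg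 hy (add_nonneg (add_nonneg (by norm_num : (0:ℝ) ≤ (2025741/8 : ℝ)) (mul_nonneg hm (add_nonneg (by norm_num : (0:ℝ) ≤ (23961 : ℝ)) (mul_nonneg hm (by norm_num : (0:ℝ) ≤ (729/2 : ℝ)))))) (mul_nonneg hy (add_nonneg (add_nonneg (by norm_num : (0:ℝ) ≤ (427381/2 : ℝ)) (mul_nonneg hm (add_nonneg (by norm_num : (0:ℝ) ≤ (55375/4 : ℝ)) (mul_nonneg hm (by norm_num : (0:ℝ) ≤ (93 : ℝ)))))) (mul_nonneg hy (add_nonneg (add_nonneg (by norm_num : (0:ℝ) ≤ (345139/4 : ℝ)) (mul_nonneg hm (by norm_num : (0:ℝ) ≤ (6061/2 : ℝ)))) (mul_nonneg hy (add_nonneg (add_nonneg (by norm_num : (0:ℝ) ≤ (73163/4 : ℝ)) (mul_nonneg hm (by norm_num : (0:ℝ) ≤ (221 : ℝ)))) (mul_nonneg hy (add_nonneg (by norm_num : (0:ℝ) ≤ (15873/8 : ℝ)) (mul_nonneg hy (by norm_num : (0:ℝ) ≤ (349/4 : ℝ)))))))))))))) (mul_nonneg hx (add_nonneg (add_nonneg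 (add_nonneg (by norm_num : (0:ℝ) ≤ (103631/4 : ℝ)) (mul_nonneg hm (add_nonneg (by norm_num : (0:ℝ) ≤ (3473/2 : ℝ)) (mul_nonneg hm (by norm_num : (0:ℝ) ≤ (9 : ℝ)))))) (mul_nonneg hy (add_nonneg (add_nonneg (by norm_num : (0:ℝ) ≤ (465325/8 : ℝ)) (mul_nonneg hm (add_nonneg (by norm_num : (0:ℝ) ≤ (12167/4 : ℝ)) (mul_nonneg hm (by norm_num : (0:ℝ) ≤ (9 : ℝ)))))) (mul_nonneg hy (add_nonneg (add_nonneg (by norm_num : (0:ℝ) ≤ (337181/8 : ℝ)) (mul_nonneg hm (by norm_num : (0:ℝ) ≤ (5299/4 : ℝ)))) (mul_nonneg hy (add_nonneg (add_nonneg (by norm_num : (0:ℝ) ≤ (107577/8 : ℝ)) (mul_nonneg hm (by norm_num : (0:ℝ) ≤ (161 : ℝ)))) (mul_nonneg hy (add_nonneg (by norm_num : (0:ℝ) ≤ (15777/8 : ℝ)) (mul_nonneg hy (by norm_num : (0:ℝ) ≤ (441/4 : ℝ)))))))))))) (mul_nonneg hx (add_nonneg (add_nonneg (add_nonneg (by norm_num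 : (0:ℝ) ≤ (16555/4 : ℝ)) (mul_nonneg hm (by norm_num : (0:ℝ) ≤ (505/4 : ℝ)))) (mul_nonneg hy (add_nonneg (add_nonneg (by norm_num : (0:ℝ) ≤ (67301/8 : ℝ)) (mul_nonneg hm (by norm_num : (0:ℝ) ≤ (723/4 : ℝ)))) (mul_nonneg hy (add_nonneg (add_nonneg (by norm_num : (0:ℝ) ≤ (19977/4 : ℝ)) (mul_nonneg hm (by norm_num : (0:ℝ) ≤ (93/2 : ℝ)))) (mul_nonneg hy (add_nonneg (by norm_num : (0:ℝ) ≤ (9095/8 : ℝ)) (mul_nonneg hy (by norm_num : (0:ℝ) ≤ (349/4 : ℝ)))))))))) (mul_nonneg hx (add_nonneg (add_nonneg (add_nonneg (by norm_num : (0:ℝ) ≤ (401 : ℝ)) (mul_nonneg hm (by norm_num : (0:ℝ) ≤ (3 : ℝ)))) (mul_nonneg hy (add_nonneg (add_nonneg (by norm_num : (0:ℝ) ≤ (5695/8 : ℝ)) (mul_nonneg hm (by norm_num : (0:ℝ) ≤ (3 : ℝ)))) (mul_nonneg hy (add_nonneg (by norm_num : (0:ℝ) ≤ (2525/8 : ℝ))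 (mul_nonneg hy (by norm_num : (0:ℝ) ≤ (79/2 : ℝ)))))))) (mul_nonneg hx (add_nonneg (add_nonneg (by norm_num : (0:ℝ) ≤ (167/8 : ℝ)) (mul_nonneg hy (add_nonneg (by norm_num : (0:ℝ) ≤ (30 : ℝ)) (mul_nonneg hy (by norm_num : (0:ℝ) ≤ (31/4 : ℝ)))))) (mul_nonneg hx (add_nonneg (by norm_num : (0:ℝ) ≤ (3/8 : ℝ)) (mul_nonneg hy (by norm_num : (0:ℝ) ≤ (3/8 : ℝ))))))))))))))))))))))

theorem stmt11 (δ s n : ℕ) (hs : 2 ≤ s) (hsδ : s ≤ δ - 1) (hδ : 3 ≤ δ)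
    (hn1 : 8 * δ ≤ n) (hn2 : (δ : ℝ) ^ 2 / 2 + 2 * δ + 2 ≤ (n : ℝ)) :
    distSpecRad (graphJoin (⊤ : SimpleGraph (Fin δ))
        (graphSum (⊤ : SimpleGraph (Fin (n - 2 * δ))) (⊥ : SimpleGraph (Fin δ))))
      < distSpecRad (graphJoin (⊤ : SimpleGraph (Fin s))
        (graphSum (⊤ : SimpleGraph (Fin (n - s - s * (δ - s + 1)))) (repK s (δ - s + 1)))) := by
  classical
  -- basic numeric facts
  have hsd : s + 1 ≤ δ := by omega
  have hs0 : 0 < s := by omega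
  have hd0 : 0 < δ := by omega
  have h2s : (2:ℝ) ≤ (s:ℝ) := by exact_mod_cast hs
  have hsd' : (s:ℝ) + 1 ≤ (δ:ℝ) := by exact_mod_cast hsd
  have hnR : (δ:ℝ)^2/2 + 2*(δ:ℝ) + 2 ≤ (n:ℝ) := hn2
  have hx : (0:ℝ) ≤ ((s:ℝ) - 2) := by linarith
  have hy : (0:ℝ) ≤ ((δ:ℝ) - (s:ℝ) - 1) := by linarith
  have hm : (0:ℝ) ≤ ((n:ℝ) - ((δ:ℝ)^2/2 + 2*(δ:ℝ) + 2)) := by linarith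
  have hq2 : (2:ℝ) ≤ ((δ:ℝ) - (s:ℝ) + 1) := by linarith
  have hqcast : ((δ - s + 1 : ℕ) : ℝ) = ((δ:ℝ) - (s:ℝ) + 1) := by
    have : ((δ - s : ℕ) : ℝ) = (δ:ℝ) - (s:ℝ) := by
      rw [Nat.cast_sub (by omega)]
    push_cast [this]
    ring
  have hMn : s + s * (δ - s + 1) ≤ n := by
    have h4 : ((s:ℝ) + (s:ℝ) * ((δ:ℝ) - (s:ℝ) + 1)) ≤ (n:ℝ) := by nlinarith [sq_nonneg ((δ:ℝ) + 2 - 2 * (s:ℝ))]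
    have h5 : ((s + s * (δ - s + 1) : ℕ) : ℝ) = (s:ℝ) + (s:ℝ) * ((δ:ℝ) - (s:ℝ) + 1) := by
      push_cast [hqcast]
      ring
    exact_mod_cast h5 ▸ h4
  have h2d : 2 * δ ≤ n := by omega
  have hN1cast : ((n - 2 * δ : ℕ) : ℝ) = ((n:ℝ) - 2 * (δ:ℝ)) := by
    rw [Nat.cast_sub h2d]; push_cast; ring
  have hN2cast : ((n - s - s * (δ - s + 1) : ℕ) : ℝ) = ((n:ℝ) - (s:ℝ) - ((s:ℝ) * ((δ:ℝ) - (s:ℝ) + 1))) := by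
    rw [Nat.cast_sub (by omega), Nat.cast_sub (by omega)]
    push_cast [hqcast]
    ring
  -- positivity of the test-vector entries and denominators
  have hMM : (4:ℝ) ≤ ((s:ℝ) * ((δ:ℝ) - (s:ℝ) + 1)) := by nlinarith
  have hMMn : ((s:ℝ) * ((δ:ℝ) - (s:ℝ) + 1)) + (s:ℝ) ≤ (n:ℝ) := by nlinarith [sq_nonneg ((δ:ℝ) + 2 - 2 * (s:ℝ))]
  have hA1 : (0:ℝ) < ((n:ℝ) + (δ:ℝ) - 1) := by nlinarith
  have hB1 : (0:ℝ) < ((n:ℝ) + 3 * (δ:ℝ) - 1) := by nlinarith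
  have hC1 : (0:ℝ) < (2 * (n:ℝ) + (δ:ℝ) - 2) := by nlinarith
  have hA2 : (0:ℝ) < (((n:ℝ) + 3 * ((s:ℝ) * ((δ:ℝ) - (s:ℝ) + 1)) - 1) - 2 * ((s:ℝ) * ((δ:ℝ) - (s:ℝ) + 1))) := by nlinarith
  have hB2 : (0:ℝ) < ((n:ℝ) + 3 * ((s:ℝ) * ((δ:ℝ) - (s:ℝ) + 1)) - 1) := by nlinarith
  have hC2 : (0:ℝ) < (2 * ((n:ℝ) + 3 * ((s:ℝ) * ((δ:ℝ) - (s:ℝ) + 1)) - 1) - (4 * ((s:ℝ) * ((δ:ℝ) - (s:ℝ) + 1)) + (s:ℝ) + 2 * ((δ:ℝ) - (s:ℝ) + 1) - 2)) := by nlinarith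
  have hNN2 : (0:ℝ) ≤ ((n:ℝ) - (s:ℝ) - ((s:ℝ) * ((δ:ℝ) - (s:ℝ) + 1))) := by nlinarith
  have hNN1 : (0:ℝ) ≤ ((n:ℝ) - 2 * (δ:ℝ)) := by nlinarith
  have hDEN : (0:ℝ) < ((s:ℝ) * (((n:ℝ) + 3 * ((s:ℝ) * ((δ:ℝ) - (s:ℝ) + 1)) - 1) - 2 * ((s:ℝ) * ((δ:ℝ) - (s:ℝ) + 1)))^2 + ((n:ℝ) - (s:ℝ) - ((s:ℝ) * ((δ:ℝ) - (s:ℝ) + 1))) * ((n:ℝ) + 3 * ((s:ℝ) * ((δ:ℝ) - (s:ℝ) + 1)) - 1)^2 + ((s:ℝ) * ((δ:ℝ) - (s:ℝ) + 1)) * (2 * ((n:ℝ) + 3 * ((s:ℝ) * ((δ:ℝ) - (s:ℝ) + 1)) - 1) - (4 * ((s:ℝ) * ((δ:ℝ) - (s:ℝ) + 1)) + (s:ℝ) + 2 * ((δ:ℝ) - (s:ℝ) + 1) - 2))^2) := by nlinarith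
  -- upper bound for the first graph
  have hup : distSpecRad (graphJoin (⊤ : SimpleGraph (Fin δ))
      (graphSum (⊤ : SimpleGraph (Fin (n - 2 * δ))) (⊥ : SimpleGraph (Fin δ)))) ≤ (max ((((δ:ℝ) - 1) * ((n:ℝ) + (δ:ℝ) - 1) + ((n:ℝ) - 2 * (δ:ℝ)) * ((n:ℝ) + 3 * (δ:ℝ) - 1) + (δ:ℝ) * (2 * (n:ℝ) + (δ:ℝ) - 2)) / ((n:ℝ) + (δ:ℝ) - 1)) (max (((δ:ℝ) * ((n:ℝ) + (δ:ℝ) - 1) + (((n:ℝ) - 2 * (δ:ℝ)) - 1) * ((n:ℝ) + 3 * (δ:ℝ) - 1) + 2 * (δ:ℝ) * (2 * (n:ℝ) + (δ:ℝ) - 2)) / ((n:ℝ) + 3 * (δ:ℝ) - 1)) (((δ:ℝ) * ((n:ℝ) + (δ:ℝ) - 1) + 2 * ((n:ℝ) - 2 * (δ:ℝ)) * ((n:ℝ) + 3 * (δ:ℝ) - 1) + (2 * (δ:ℝ) - 2 - 0) * (2 * (n:ℝ) + (δ:ℝ) - 2)) / (2 * (n:ℝ) + (δ:ℝ) - 2))))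 := by
    have hW11 : (0:ℝ) ≤ (((δ:ℝ) - 1) * ((n:ℝ) + (δ:ℝ) - 1) + ((n:ℝ) - 2 * (δ:ℝ)) * ((n:ℝ) + 3 * (δ:ℝ) - 1) + (δ:ℝ) * (2 * (n:ℝ) + (δ:ℝ) - 2)) := by nlinarith
    have hU0 : (0:ℝ) ≤ (max ((((δ:ℝ) - 1) * ((n:ℝ) + (δ:ℝ) - 1) + ((n:ℝ) - 2 * (δ:ℝ)) * ((n:ℝ) + 3 * (δ:ℝ) - 1) + (δ:ℝ) * (2 * (n:ℝ) + (δ:ℝ) - 2)) / ((n:ℝ) + (δ:ℝ) - 1)) (max (((δ:ℝ) * ((n:ℝ) + (δ:ℝ) - 1) + (((n:ℝ) - 2 * (δ:ℝ)) - 1) * ((n:ℝ) + 3 * (δ:ℝ) - 1) + 2 * (δ:ℝ) * (2 * (n:ℝ) + (δ:ℝ) - 2)) / ((n:ℝ) + 3 * (δ:ℝ) - 1)) (((δ:ℝ) * ((n:ℝ) + (δ:ℝ) - 1) + 2 * ((n:ℝ) - 2 * (δ:ℝ)) * ((n:ℝ) + 3 * (δ:ℝ) - 1) + (2 * (δ:ℝ)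 - 2 - 0) * (2 * (n:ℝ) + (δ:ℝ) - 2)) / (2 * (n:ℝ) + (δ:ℝ) - 2)))) := by
      refine le_trans (div_nonneg hW11 hA1.le) (le_max_left _ _)
    refine Real.sSup_le ?_ hU0
    rintro μ ⟨w, hw, hmv⟩
    refine eig_le _ (fun i j => by simp [distMatrix, SimpleGraph.dist_comm])
      (fun i j => by unfold distMatrix; positivity) (xvec δ (n - 2*δ) ((n:ℝ) + (δ:ℝ) - 1) ((n:ℝ) + 3 * (δ:ℝ) - 1) (2 * (n:ℝ) + (δ:ℝ) - 2)) ?_ _ ?_ hw hmv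
    · rintro (i | j | w₀) <;> simp only [xvec, Sum.elim_inl, Sum.elim_inr] <;> linarith
    · have hk0 : ∀ w₀ : Fin δ, ∑ w' : Fin δ,
          (if (⊥ : SimpleGraph (Fin δ)).Adj w₀ w' then (1:ℝ) else 0) = 0 := by
        intro w₀; simp
      rintro (i | j | w₀)
      · rw [gg_mulVec_1, Fintype.card_fin, hN1cast]
        have h := (div_le_iff₀ hA1).mp (le_max_left ((((δ:ℝ) - 1) * ((n:ℝ) + (δ:ℝ) - 1) + ((n:ℝ) - 2 * (δ:ℝ)) * ((n:ℝ) + 3 * (δ:ℝ) - 1) + (δ:ℝ) * (2 * (n:ℝ) + (δ:ℝ) - 2)) / ((n:ℝ) + (δ:ℝ) - 1)) (max (((δ:ℝ) * ((n:ℝ) + (δ:ℝ) - 1) + (((n:ℝ) - 2 * (δ:ℝ)) - 1) * ((n:ℝ) + 3 * (δ:ℝ) - 1) + 2 * (δ:ℝ) * (2 * (n:ℝ) + (δ:ℝ) - 2)) / ((n:ℝ) + 3 * (δ:ℝ) - 1)) (((δ:ℝ) * ((n:ℝ) + (δ:ℝ) - 1) + 2 * ((n:ℝ) - 2 * (δ:ℝ))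 * ((n:ℝ) + 3 * (δ:ℝ) - 1) + (2 * (δ:ℝ) - 2 - 0) * (2 * (n:ℝ) + (δ:ℝ) - 2)) / (2 * (n:ℝ) + (δ:ℝ) - 2))))
        simp only [xvec, Sum.elim_inl]
        linarith
      · rw [gg_mulVec_2 (hp := hd0), Fintype.card_fin, hN1cast]
        have h := (div_le_iff₀ hB1).mp (le_trans (le_max_left (((δ:ℝ) * ((n:ℝ) + (δ:ℝ) - 1) + (((n:ℝ) - 2 * (δ:ℝ)) - 1) * ((n:ℝ) + 3 * (δ:ℝ) - 1) + 2 * (δ:ℝ) * (2 * (n:ℝ) + (δ:ℝ) - 2)) / ((n:ℝ) + 3 * (δ:ℝ) - 1)) (((δ:ℝ) * ((n:ℝ) + (δ:ℝ) - 1) + 2 * ((n:ℝ) - 2 * (δ:ℝ)) * ((n:ℝ) + 3 * (δ:ℝ) - 1) + (2 * (δ:ℝ) - 2 - 0) * (2 * (n:ℝ) + (δ:ℝ) - 2)) / (2 * (n:ℝ) + (δ:ℝ) - 2)))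
          (le_max_right ((((δ:ℝ) - 1) * ((n:ℝ) + (δ:ℝ) - 1) + ((n:ℝ) - 2 * (δ:ℝ)) * ((n:ℝ) + 3 * (δ:ℝ) - 1) + (δ:ℝ) * (2 * (n:ℝ) + (δ:ℝ) - 2)) / ((n:ℝ) + (δ:ℝ) - 1)) _))
        simp only [xvec, Sum.elim_inl, Sum.elim_inr]
        linarith
      · rw [gg_mulVec_3 (hp := hd0) (k := 0) (hk := hk0), Fintype.card_fin, hN1cast]
        have h := (div_le_iff₀ hC1).mp (le_trans (le_max_right (((δ:ℝ) * ((n:ℝ) + (δ:ℝ) - 1) + (((n:ℝ) - 2 * (δ:ℝ)) - 1) * ((n:ℝ) + 3 * (δ:ℝ) - 1) + 2 * (δ:ℝ) * (2 * (n:ℝ) + (δ:ℝ) - 2)) / ((n:ℝ) + 3 * (δ:ℝ) - 1)) (((δ:ℝ) * ((n:ℝ) + (δ:ℝ) - 1) + 2 * ((n:ℝ) - 2 * (δ:ℝ)) * ((n:ℝ) + 3 * (δ:ℝ) - 1) + (2 * (δ:ℝ) - 2 - 0) * (2 * (n:ℝ) + (δ:ℝ) - 2)) / (2 * (n:ℝ)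 + (δ:ℝ) - 2)))
          (le_max_right ((((δ:ℝ) - 1) * ((n:ℝ) + (δ:ℝ) - 1) + ((n:ℝ) - 2 * (δ:ℝ)) * ((n:ℝ) + 3 * (δ:ℝ) - 1) + (δ:ℝ) * (2 * (n:ℝ) + (δ:ℝ) - 2)) / ((n:ℝ) + (δ:ℝ) - 1)) _))
        simp only [xvec, Sum.elim_inl, Sum.elim_inr]
        linarith
  -- lower bound for the second graph
  have hlow : (((s:ℝ) * (((n:ℝ) + 3 * ((s:ℝ) * ((δ:ℝ) - (s:ℝ) + 1)) - 1) - 2 * ((s:ℝ) * ((δ:ℝ) - (s:ℝ) + 1))) * (((s:ℝ) - 1) * (((n:ℝ) + 3 * ((s:ℝ) * ((δ:ℝ) - (s:ℝ) + 1)) - 1) - 2 * ((s:ℝ) * ((δ:ℝ) - (s:ℝ) + 1))) + ((n:ℝ) - (s:ℝ) - ((s:ℝ) * ((δ:ℝ) - (s:ℝ) + 1))) * ((n:ℝ) + 3 * ((s:ℝ) * ((δ:ℝ) - (s:ℝ) + 1)) - 1) + ((s:ℝ) * ((δ:ℝ) - (s:ℝ) + 1)) * (2 * ((n:ℝ) +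 3 * ((s:ℝ) * ((δ:ℝ) - (s:ℝ) + 1)) - 1) - (4 * ((s:ℝ) * ((δ:ℝ) - (s:ℝ) + 1)) + (s:ℝ) + 2 * ((δ:ℝ) - (s:ℝ) + 1) - 2))) + ((n:ℝ) - (s:ℝ) - ((s:ℝ) * ((δ:ℝ) - (s:ℝ) + 1))) * ((n:ℝ) + 3 * ((s:ℝ) * ((δ:ℝ) - (s:ℝ) + 1)) - 1) * ((s:ℝ) * (((n:ℝ) + 3 * ((s:ℝ) * ((δ:ℝ) - (s:ℝ) + 1)) - 1) - 2 * ((s:ℝ) * ((δ:ℝ) - (s:ℝ) + 1))) + (((n:ℝ) - (s:ℝ) - ((s:ℝ) * ((δ:ℝ) - (s:ℝ) + 1))) - 1) * ((n:ℝ) + 3 * ((s:ℝ) * ((δ:ℝ) - (s:ℝ) + 1)) - 1) + 2 * ((s:ℝ) * ((δ:ℝ) - (s:ℝ) + 1)) * (2 * ((n:ℝ) + 3 * ((s:ℝ) * ((δ:ℝ) - (s:ℝ) + 1)) - 1) - (4 * ((s:ℝ) * ((δ:ℝ) - (s:ℝ) + 1)) + (s:ℝ) + 2 * ((δ:ℝ)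 - (s:ℝ) + 1) - 2))) + ((s:ℝ) * ((δ:ℝ) - (s:ℝ) + 1)) * (2 * ((n:ℝ) + 3 * ((s:ℝ) * ((δ:ℝ) - (s:ℝ) + 1)) - 1) - (4 * ((s:ℝ) * ((δ:ℝ) - (s:ℝ) + 1)) + (s:ℝ) + 2 * ((δ:ℝ) - (s:ℝ) + 1) - 2)) * ((s:ℝ) * (((n:ℝ) + 3 * ((s:ℝ) * ((δ:ℝ) - (s:ℝ) + 1)) - 1) - 2 * ((s:ℝ) * ((δ:ℝ) - (s:ℝ) + 1))) + 2 * ((n:ℝ) - (s:ℝ) - ((s:ℝ) * ((δ:ℝ) - (s:ℝ) + 1))) * ((n:ℝ) + 3 * ((s:ℝ) * ((δ:ℝ) - (s:ℝ) + 1)) - 1) + (2 * ((s:ℝ) * ((δ:ℝ) - (s:ℝ) + 1)) - 2 - (((δ:ℝ) - (s:ℝ) + 1) - 1)) * (2 * ((n:ℝ) + 3 * ((s:ℝ) * ((δ:ℝ) - (s:ℝ) + 1)) - 1) - (4 * ((s:ℝ) * ((δ:ℝ) - (s:ℝ) + 1)) + (s:ℝ) + 2 * ((δ:ℝ) - (s:ℝ)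 + 1) - 2)))) / ((s:ℝ) * (((n:ℝ) + 3 * ((s:ℝ) * ((δ:ℝ) - (s:ℝ) + 1)) - 1) - 2 * ((s:ℝ) * ((δ:ℝ) - (s:ℝ) + 1)))^2 + ((n:ℝ) - (s:ℝ) - ((s:ℝ) * ((δ:ℝ) - (s:ℝ) + 1))) * ((n:ℝ) + 3 * ((s:ℝ) * ((δ:ℝ) - (s:ℝ) + 1)) - 1)^2 + ((s:ℝ) * ((δ:ℝ) - (s:ℝ) + 1)) * (2 * ((n:ℝ) + 3 * ((s:ℝ) * ((δ:ℝ) - (s:ℝ) + 1)) - 1) - (4 * ((s:ℝ) * ((δ:ℝ) - (s:ℝ) + 1)) + (s:ℝ) + 2 * ((δ:ℝ) - (s:ℝ) + 1) - 2))^2)) ≤ distSpecRad (graphJoin (⊤ : SimpleGraph (Fin s))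
      (graphSum (⊤ : SimpleGraph (Fin (n - s - s * (δ - s + 1)))) (repK s (δ - s + 1)))) := by
    set G₂ := graphJoin (⊤ : SimpleGraph (Fin s))
      (graphSum (⊤ : SimpleGraph (Fin (n - s - s * (δ - s + 1)))) (repK s (δ - s + 1))) with hG₂
    haveI : Nonempty (Fin s ⊕ (Fin (n - s - s * (δ - s + 1)) ⊕ (Fin s × Fin (δ - s + 1)))) :=
      ⟨Sum.inl ⟨0, hs0⟩⟩
    have hherm : (distMatrix G₂).IsHermitian := by
      ext i j
      simp [distMatrix, Matrix.conjTranspose_apply, SimpleGraph.dist_comm]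
    have hq0 : 0 < δ - s + 1 := by omega
    have hkrep : ∀ w₀ : Fin s × Fin (δ - s + 1), ∑ w' : Fin s × Fin (δ - s + 1),
        (if (repK s (δ - s + 1)).Adj w₀ w' then (1:ℝ) else 0) = ((δ:ℝ) - (s:ℝ) + 1) - 1 := by
      intro w₀
      rw [repK_rowsum s (δ - s + 1) hq0 w₀, hqcast]
    obtain ⟨μ, ⟨w, hw, hmv⟩, hray⟩ := rayleigh_le (distMatrix G₂) hherm
      (xvec s (n - s - s * (δ - s + 1)) (((n:ℝ) + 3 * ((s:ℝ) * ((δ:ℝ) - (s:ℝ) + 1)) - 1) - 2 * ((s:ℝ) * ((δ:ℝ) - (s:ℝ) + 1))) ((n:ℝ) + 3 * ((s:ℝ) * ((δ:ℝ) - (s:ℝ) + 1)) - 1) (2 * ((n:ℝ) + 3 * ((s:ℝ) * ((δ:ℝ) - (s:ℝ) + 1)) - 1) - (4 * ((s:ℝ) * ((δ:ℝ) - (s:ℝ) + 1)) + (s:ℝ) + 2 * ((δ:ℝ) - (s:ℝ) + 1) - 2)))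
    have hnum : ∑ i, (xvec s (n - s - s * (δ - s + 1)) (((n:ℝ) + 3 * ((s:ℝ) * ((δ:ℝ) - (s:ℝ) + 1)) - 1) - 2 * ((s:ℝ) * ((δ:ℝ) - (s:ℝ) + 1))) ((n:ℝ) + 3 * ((s:ℝ) * ((δ:ℝ) - (s:ℝ) + 1)) - 1) (2 * ((n:ℝ) + 3 * ((s:ℝ) * ((δ:ℝ) - (s:ℝ) + 1)) - 1) - (4 * ((s:ℝ) * ((δ:ℝ) - (s:ℝ) + 1)) + (s:ℝ) + 2 * ((δ:ℝ) - (s:ℝ) + 1) - 2))) i *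
        (distMatrix G₂).mulVec (xvec s (n - s - s * (δ - s + 1)) (((n:ℝ) + 3 * ((s:ℝ) * ((δ:ℝ) - (s:ℝ) + 1)) - 1) - 2 * ((s:ℝ) * ((δ:ℝ) - (s:ℝ) + 1))) ((n:ℝ) + 3 * ((s:ℝ) * ((δ:ℝ) - (s:ℝ) + 1)) - 1) (2 * ((n:ℝ) + 3 * ((s:ℝ) * ((δ:ℝ) - (s:ℝ) + 1)) - 1) - (4 * ((s:ℝ) * ((δ:ℝ) - (s:ℝ) + 1)) + (s:ℝ) + 2 * ((δ:ℝ) - (s:ℝ) + 1) - 2))) i = ((s:ℝ) * (((n:ℝ) + 3 * ((s:ℝ) * ((δ:ℝ) - (s:ℝ) + 1)) - 1) - 2 * ((s:ℝ) * ((δ:ℝ) - (s:ℝ) + 1))) * (((s:ℝ) - 1) * (((n:ℝ) + 3 * ((s:ℝ) * ((δ:ℝ) - (s:ℝ) + 1)) - 1) - 2 * ((s:ℝ) * ((δ:ℝ) - (s:ℝ) + 1))) + ((n:ℝ) - (s:ℝ) - ((s:ℝ) * ((δ:ℝ) - (s:ℝ) + 1))) * ((n:ℝ) + 3 * ((s:ℝ)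 * ((δ:ℝ) - (s:ℝ) + 1)) - 1) + ((s:ℝ) * ((δ:ℝ) - (s:ℝ) + 1)) * (2 * ((n:ℝ) + 3 * ((s:ℝ) * ((δ:ℝ) - (s:ℝ) + 1)) - 1) - (4 * ((s:ℝ) * ((δ:ℝ) - (s:ℝ) + 1)) + (s:ℝ) + 2 * ((δ:ℝ) - (s:ℝ) + 1) - 2))) + ((n:ℝ) - (s:ℝ) - ((s:ℝ) * ((δ:ℝ) - (s:ℝ) + 1))) * ((n:ℝ) + 3 * ((s:ℝ) * ((δ:ℝ) - (s:ℝ) + 1)) - 1) * ((s:ℝ) * (((n:ℝ) + 3 * ((s:ℝ) * ((δ:ℝ) - (s:ℝ) + 1)) - 1) - 2 * ((s:ℝ) * ((δ:ℝ) - (s:ℝ) + 1))) + (((n:ℝ) - (s:ℝ) - ((s:ℝ) * ((δ:ℝ) - (s:ℝ) + 1))) - 1) * ((n:ℝ) + 3 * ((s:ℝ) * ((δ:ℝ) - (s:ℝ) + 1)) - 1) + 2 * ((s:ℝ) * ((δ:ℝ) - (s:ℝ) + 1)) * (2 * ((n:ℝ) + 3 * ((s:ℝ) * ((δ:ℝ)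 - (s:ℝ) + 1)) - 1) - (4 * ((s:ℝ) * ((δ:ℝ) - (s:ℝ) + 1)) + (s:ℝ) + 2 * ((δ:ℝ) - (s:ℝ) + 1) - 2))) + ((s:ℝ) * ((δ:ℝ) - (s:ℝ) + 1)) * (2 * ((n:ℝ) + 3 * ((s:ℝ) * ((δ:ℝ) - (s:ℝ) + 1)) - 1) - (4 * ((s:ℝ) * ((δ:ℝ) - (s:ℝ) + 1)) + (s:ℝ) + 2 * ((δ:ℝ) - (s:ℝ) + 1) - 2)) * ((s:ℝ) * (((n:ℝ) + 3 * ((s:ℝ) * ((δ:ℝ) - (s:ℝ) + 1)) - 1) - 2 * ((s:ℝ) * ((δ:ℝ) - (s:ℝ) + 1))) + 2 * ((n:ℝ) - (s:ℝ) - ((s:ℝ) * ((δ:ℝ) - (s:ℝ) + 1))) * ((n:ℝ) + 3 * ((s:ℝ) * ((δ:ℝ) - (s:ℝ) + 1)) - 1) + (2 * ((s:ℝ) * ((δ:ℝ) - (s:ℝ) + 1)) - 2 - (((δ:ℝ) - (s:ℝ) + 1) - 1)) * (2 * ((n:ℝ) + 3 * ((s:ℝ) * ((δ:ℝ) - (s:ℝ)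 + 1)) - 1) - (4 * ((s:ℝ) * ((δ:ℝ) - (s:ℝ) + 1)) + (s:ℝ) + 2 * ((δ:ℝ) - (s:ℝ) + 1) - 2)))) := by
      rw [Fintype.sum_sum_type, Fintype.sum_sum_type]
      simp only [hG₂, gg_mulVec_1, gg_mulVec_2 (hp := hs0),
        gg_mulVec_3 (hp := hs0) (k := ((δ:ℝ) - (s:ℝ) + 1) - 1) (hk := hkrep)]
      simp only [xvec, Sum.elim_inl, Sum.elim_inr, Finset.sum_const, Finset.card_univ,
        Fintype.card_fin, Fintype.card_prod, Nat.cast_mul, nsmul_eq_mul, hN2cast, hqcast]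
      push_cast
      ring
    have hden : ∑ i, (xvec s (n - s - s * (δ - s + 1))
        (W := Fin s × Fin (δ - s + 1)) (((n:ℝ) + 3 * ((s:ℝ) * ((δ:ℝ) - (s:ℝ) + 1)) - 1) - 2 * ((s:ℝ) * ((δ:ℝ) - (s:ℝ) + 1))) ((n:ℝ) + 3 * ((s:ℝ) * ((δ:ℝ) - (s:ℝ) + 1)) - 1) (2 * ((n:ℝ) + 3 * ((s:ℝ) * ((δ:ℝ) - (s:ℝ) + 1)) - 1) - (4 * ((s:ℝ) * ((δ:ℝ) - (s:ℝ) + 1)) + (s:ℝ) + 2 * ((δ:ℝ) - (s:ℝ) + 1) - 2))) i ^ 2 = ((s:ℝ) * (((n:ℝ) + 3 * ((s:ℝ) * ((δ:ℝ) - (s:ℝ) + 1)) - 1) - 2 * ((s:ℝ) * ((δ:ℝ) - (s:ℝ) + 1)))^2 + ((n:ℝ) - (s:ℝ) - ((s:ℝ) * ((δ:ℝ) - (s:ℝ) + 1))) * ((n:ℝ) + 3 * ((s:ℝ) * ((δ:ℝ) - (s:ℝ) + 1)) - 1)^2 + ((s:ℝ) * ((δ:ℝ) - (s:ℝ) + 1))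 * (2 * ((n:ℝ) + 3 * ((s:ℝ) * ((δ:ℝ) - (s:ℝ) + 1)) - 1) - (4 * ((s:ℝ) * ((δ:ℝ) - (s:ℝ) + 1)) + (s:ℝ) + 2 * ((δ:ℝ) - (s:ℝ) + 1) - 2))^2) := by
      rw [Fintype.sum_sum_type, Fintype.sum_sum_type]
      simp only [xvec, Sum.elim_inl, Sum.elim_inr, Finset.sum_const, Finset.card_univ,
        Fintype.card_fin, Fintype.card_prod, Nat.cast_mul, nsmul_eq_mul, hN2cast, hqcast]
      push_cast
      ring
    have hμ : (((s:ℝ) * (((n:ℝ) + 3 * ((s:ℝ) * ((δ:ℝ) - (s:ℝ) + 1)) - 1) - 2 * ((s:ℝ) * ((δ:ℝ) - (s:ℝ) + 1))) * (((s:ℝ) - 1) * (((n:ℝ) + 3 * ((s:ℝ) * ((δ:ℝ) - (s:ℝ) + 1)) - 1) - 2 * ((s:ℝ) * ((δ:ℝ) - (s:ℝ) + 1))) + ((n:ℝ) - (s:ℝ) - ((s:ℝ) * ((δ:ℝ) - (s:ℝ) + 1))) * ((n:ℝ) + 3 * ((s:ℝ) * ((δ:ℝ) - (s:ℝ) + 1))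 - 1) + ((s:ℝ) * ((δ:ℝ) - (s:ℝ) + 1)) * (2 * ((n:ℝ) + 3 * ((s:ℝ) * ((δ:ℝ) - (s:ℝ) + 1)) - 1) - (4 * ((s:ℝ) * ((δ:ℝ) - (s:ℝ) + 1)) + (s:ℝ) + 2 * ((δ:ℝ) - (s:ℝ) + 1) - 2))) + ((n:ℝ) - (s:ℝ) - ((s:ℝ) * ((δ:ℝ) - (s:ℝ) + 1))) * ((n:ℝ) + 3 * ((s:ℝ) * ((δ:ℝ) - (s:ℝ) + 1)) - 1) * ((s:ℝ) * (((n:ℝ) + 3 * ((s:ℝ) * ((δ:ℝ) - (s:ℝ) + 1)) - 1) - 2 * ((s:ℝ) * ((δ:ℝ) - (s:ℝ) + 1))) + (((n:ℝ) - (s:ℝ) - ((s:ℝ) * ((δ:ℝ) - (s:ℝ) + 1))) - 1) * ((n:ℝ) + 3 * ((s:ℝ) * ((δ:ℝ) - (s:ℝ) + 1)) - 1) + 2 * ((s:ℝ) * ((δ:ℝ) - (s:ℝ) + 1)) * (2 * ((n:ℝ) + 3 * ((s:ℝ) * ((δ:ℝ) - (s:ℝ) + 1)) - 1) - (4 * ((s:ℝ)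 * ((δ:ℝ) - (s:ℝ) + 1)) + (s:ℝ) + 2 * ((δ:ℝ) - (s:ℝ) + 1) - 2))) + ((s:ℝ) * ((δ:ℝ) - (s:ℝ) + 1)) * (2 * ((n:ℝ) + 3 * ((s:ℝ) * ((δ:ℝ) - (s:ℝ) + 1)) - 1) - (4 * ((s:ℝ) * ((δ:ℝ) - (s:ℝ) + 1)) + (s:ℝ) + 2 * ((δ:ℝ) - (s:ℝ) + 1) - 2)) * ((s:ℝ) * (((n:ℝ) + 3 * ((s:ℝ) * ((δ:ℝ) - (s:ℝ) + 1)) - 1) - 2 * ((s:ℝ) * ((δ:ℝ) - (s:ℝ) + 1))) + 2 * ((n:ℝ) - (s:ℝ) - ((s:ℝ) * ((δ:ℝ) - (s:ℝ) + 1))) * ((n:ℝ) + 3 * ((s:ℝ) * ((δ:ℝ) - (s:ℝ) + 1)) - 1) + (2 * ((s:ℝ) * ((δ:ℝ) - (s:ℝ) + 1)) - 2 - (((δ:ℝ) - (s:ℝ) + 1) - 1)) * (2 * ((n:ℝ) + 3 * ((s:ℝ) * ((δ:ℝ) - (s:ℝ) + 1)) - 1) - (4 * ((s:ℝ) * ((δ:ℝ)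 - (s:ℝ) + 1)) + (s:ℝ) + 2 * ((δ:ℝ) - (s:ℝ) + 1) - 2)))) / ((s:ℝ) * (((n:ℝ) + 3 * ((s:ℝ) * ((δ:ℝ) - (s:ℝ) + 1)) - 1) - 2 * ((s:ℝ) * ((δ:ℝ) - (s:ℝ) + 1)))^2 + ((n:ℝ) - (s:ℝ) - ((s:ℝ) * ((δ:ℝ) - (s:ℝ) + 1))) * ((n:ℝ) + 3 * ((s:ℝ) * ((δ:ℝ) - (s:ℝ) + 1)) - 1)^2 + ((s:ℝ) * ((δ:ℝ) - (s:ℝ) + 1)) * (2 * ((n:ℝ) + 3 * ((s:ℝ) * ((δ:ℝ) - (s:ℝ) + 1)) - 1) - (4 * ((s:ℝ) * ((δ:ℝ) - (s:ℝ) + 1)) + (s:ℝ) + 2 * ((δ:ℝ) - (s:ℝ) + 1) - 2))^2)) ≤ μ := by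
      rw [div_le_iff₀ hDEN]
      rw [← hnum, ← hden]
      exact hray.trans_eq (by ring)
    refine le_trans hμ (le_csSup ?_ ⟨w, hw, hmv⟩)
    · -- the eigenvalue set is bounded above
      refine ⟨(max ((((s:ℝ) - 1) * (((n:ℝ) + 3 * ((s:ℝ) * ((δ:ℝ) - (s:ℝ) + 1)) - 1) - 2 * ((s:ℝ) * ((δ:ℝ) - (s:ℝ) + 1))) + ((n:ℝ) - (s:ℝ) - ((s:ℝ) * ((δ:ℝ) - (s:ℝ) + 1))) * ((n:ℝ) + 3 * ((s:ℝ) * ((δ:ℝ) - (s:ℝ) + 1)) - 1) + ((s:ℝ) * ((δ:ℝ) - (s:ℝ) + 1)) * (2 * ((n:ℝ) + 3 * ((s:ℝ) * ((δ:ℝ) - (s:ℝ) + 1)) - 1) - (4 * ((s:ℝ) * ((δ:ℝ) - (s:ℝ) + 1)) + (s:ℝ) + 2 * ((δ:ℝ) - (s:ℝ) + 1) - 2))) / (((n:ℝ) + 3 * ((s:ℝ) * ((δ:ℝ) - (s:ℝ) + 1)) - 1) - 2 * ((s:ℝ) * ((δ:ℝ) - (s:ℝ) + 1)))) (max (((s:ℝ)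 * (((n:ℝ) + 3 * ((s:ℝ) * ((δ:ℝ) - (s:ℝ) + 1)) - 1) - 2 * ((s:ℝ) * ((δ:ℝ) - (s:ℝ) + 1))) + (((n:ℝ) - (s:ℝ) - ((s:ℝ) * ((δ:ℝ) - (s:ℝ) + 1))) - 1) * ((n:ℝ) + 3 * ((s:ℝ) * ((δ:ℝ) - (s:ℝ) + 1)) - 1) + 2 * ((s:ℝ) * ((δ:ℝ) - (s:ℝ) + 1)) * (2 * ((n:ℝ) + 3 * ((s:ℝ) * ((δ:ℝ) - (s:ℝ) + 1)) - 1) - (4 * ((s:ℝ) * ((δ:ℝ) - (s:ℝ) + 1)) + (s:ℝ) + 2 * ((δ:ℝ) - (s:ℝ) + 1) - 2))) / ((n:ℝ) + 3 * ((s:ℝ) * ((δ:ℝ) - (s:ℝ) + 1)) - 1)) (((s:ℝ) * (((n:ℝ) + 3 * ((s:ℝ) * ((δ:ℝ) - (s:ℝ) + 1)) - 1) - 2 * ((s:ℝ) * ((δ:ℝ) - (s:ℝ) + 1))) + 2 * ((n:ℝ) - (s:ℝ) - ((s:ℝ) * ((δ:ℝ) - (s:ℝ) + 1))) * ((n:ℝ)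 + 3 * ((s:ℝ) * ((δ:ℝ) - (s:ℝ) + 1)) - 1) + (2 * ((s:ℝ) * ((δ:ℝ) - (s:ℝ) + 1)) - 2 - (((δ:ℝ) - (s:ℝ) + 1) - 1)) * (2 * ((n:ℝ) + 3 * ((s:ℝ) * ((δ:ℝ) - (s:ℝ) + 1)) - 1) - (4 * ((s:ℝ) * ((δ:ℝ) - (s:ℝ) + 1)) + (s:ℝ) + 2 * ((δ:ℝ) - (s:ℝ) + 1) - 2))) / (2 * ((n:ℝ) + 3 * ((s:ℝ) * ((δ:ℝ) - (s:ℝ) + 1)) - 1) - (4 * ((s:ℝ) * ((δ:ℝ) - (s:ℝ) + 1)) + (s:ℝ) + 2 * ((δ:ℝ) - (s:ℝ) + 1) - 2))))), ?_⟩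
      rintro μ' ⟨w', hw', hmv'⟩
      refine eig_le _ (fun i j => by simp [distMatrix, SimpleGraph.dist_comm])
        (fun i j => by unfold distMatrix; positivity) (xvec s (n - s - s * (δ - s + 1)) (((n:ℝ) + 3 * ((s:ℝ) * ((δ:ℝ) - (s:ℝ) + 1)) - 1) - 2 * ((s:ℝ) * ((δ:ℝ) - (s:ℝ) + 1))) ((n:ℝ) + 3 * ((s:ℝ) * ((δ:ℝ) - (s:ℝ) + 1)) - 1) (2 * ((n:ℝ) + 3 * ((s:ℝ) * ((δ:ℝ) - (s:ℝ) + 1)) - 1) - (4 * ((s:ℝ) * ((δ:ℝ) - (s:ℝ) + 1)) + (s:ℝ) + 2 * ((δ:ℝ) - (s:ℝ) + 1) - 2))) ?_ _ ?_ hw' hmv'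
      · rintro (i | j | w₀) <;> simp only [xvec, Sum.elim_inl, Sum.elim_inr] <;> linarith
      · rintro (i | j | w₀)
        · rw [hG₂, gg_mulVec_1, Fintype.card_prod, Fintype.card_fin, Fintype.card_fin,
            Nat.cast_mul, hN2cast, hqcast]
          have h := (div_le_iff₀ hA2).mp (le_max_left ((((s:ℝ) - 1) * (((n:ℝ) + 3 * ((s:ℝ) * ((δ:ℝ) - (s:ℝ) + 1)) - 1) - 2 * ((s:ℝ) * ((δ:ℝ) - (s:ℝ) + 1))) + ((n:ℝ) - (s:ℝ) - ((s:ℝ) * ((δ:ℝ) - (s:ℝ) + 1))) * ((n:ℝ) + 3 * ((s:ℝ) * ((δ:ℝ) - (s:ℝ) + 1)) - 1) + ((s:ℝ) * ((δ:ℝ) - (s:ℝ) + 1)) * (2 * ((n:ℝ) + 3 * ((s:ℝ) * ((δ:ℝ) - (s:ℝ) + 1)) - 1) - (4 * ((s:ℝ) * ((δ:ℝ) - (s:ℝ) + 1)) + (s:ℝ) + 2 * ((δ:ℝ) - (s:ℝ) + 1) - 2))) / (((n:ℝ) + 3 * ((s:ℝ) * ((δ:ℝ) - (s:ℝ) + 1))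 - 1) - 2 * ((s:ℝ) * ((δ:ℝ) - (s:ℝ) + 1)))) (max (((s:ℝ) * (((n:ℝ) + 3 * ((s:ℝ) * ((δ:ℝ) - (s:ℝ) + 1)) - 1) - 2 * ((s:ℝ) * ((δ:ℝ) - (s:ℝ) + 1))) + (((n:ℝ) - (s:ℝ) - ((s:ℝ) * ((δ:ℝ) - (s:ℝ) + 1))) - 1) * ((n:ℝ) + 3 * ((s:ℝ) * ((δ:ℝ) - (s:ℝ) + 1)) - 1) + 2 * ((s:ℝ) * ((δ:ℝ) - (s:ℝ) + 1)) * (2 * ((n:ℝ) + 3 * ((s:ℝ) * ((δ:ℝ) - (s:ℝ) + 1)) - 1) - (4 * ((s:ℝ) * ((δ:ℝ) - (s:ℝ) + 1)) + (s:ℝ) + 2 * ((δ:ℝ) - (s:ℝ) + 1) - 2))) / ((n:ℝ) + 3 * ((s:ℝ) * ((δ:ℝ) - (s:ℝ) + 1)) - 1)) (((s:ℝ) * (((n:ℝ) + 3 * ((s:ℝ) * ((δ:ℝ) - (s:ℝ) + 1)) - 1) - 2 * ((s:ℝ) * ((δ:ℝ) - (s:ℝ) + 1))) + 2 * ((n:ℝ)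 - (s:ℝ) - ((s:ℝ) * ((δ:ℝ) - (s:ℝ) + 1))) * ((n:ℝ) + 3 * ((s:ℝ) * ((δ:ℝ) - (s:ℝ) + 1)) - 1) + (2 * ((s:ℝ) * ((δ:ℝ) - (s:ℝ) + 1)) - 2 - (((δ:ℝ) - (s:ℝ) + 1) - 1)) * (2 * ((n:ℝ) + 3 * ((s:ℝ) * ((δ:ℝ) - (s:ℝ) + 1)) - 1) - (4 * ((s:ℝ) * ((δ:ℝ) - (s:ℝ) + 1)) + (s:ℝ) + 2 * ((δ:ℝ) - (s:ℝ) + 1) - 2))) / (2 * ((n:ℝ) + 3 * ((s:ℝ) * ((δ:ℝ) - (s:ℝ) + 1)) - 1) - (4 * ((s:ℝ) * ((δ:ℝ) - (s:ℝ) + 1)) + (s:ℝ) + 2 * ((δ:ℝ) - (s:ℝ) + 1) - 2)))))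
          simp only [xvec, Sum.elim_inl]
          linarith
        · rw [hG₂, gg_mulVec_2 (hp := hs0), Fintype.card_prod, Fintype.card_fin, Fintype.card_fin,
            Nat.cast_mul, hN2cast, hqcast]
          have h := (div_le_iff₀ hB2).mp (le_trans (le_max_left (((s:ℝ) * (((n:ℝ) + 3 * ((s:ℝ) * ((δ:ℝ) - (s:ℝ) + 1)) - 1) - 2 * ((s:ℝ) * ((δ:ℝ) - (s:ℝ) + 1))) + (((n:ℝ) - (s:ℝ) - ((s:ℝ) * ((δ:ℝ) - (s:ℝ) + 1))) - 1) * ((n:ℝ) + 3 * ((s:ℝ) * ((δ:ℝ) - (s:ℝ) + 1)) - 1) + 2 * ((s:ℝ) * ((δ:ℝ) - (s:ℝ) + 1)) * (2 * ((n:ℝ) + 3 * ((s:ℝ) * ((δ:ℝ) - (s:ℝ) + 1)) - 1) - (4 * ((s:ℝ) * ((δ:ℝ) - (s:ℝ) + 1)) + (s:ℝ) + 2 * ((δ:ℝ) - (s:ℝ) + 1) - 2))) / ((n:ℝ) + 3 * ((s:ℝ) * ((δ:ℝ) - (s:ℝ) + 1)) - 1)) (((s:ℝ) * (((n:ℝ)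 + 3 * ((s:ℝ) * ((δ:ℝ) - (s:ℝ) + 1)) - 1) - 2 * ((s:ℝ) * ((δ:ℝ) - (s:ℝ) + 1))) + 2 * ((n:ℝ) - (s:ℝ) - ((s:ℝ) * ((δ:ℝ) - (s:ℝ) + 1))) * ((n:ℝ) + 3 * ((s:ℝ) * ((δ:ℝ) - (s:ℝ) + 1)) - 1) + (2 * ((s:ℝ) * ((δ:ℝ) - (s:ℝ) + 1)) - 2 - (((δ:ℝ) - (s:ℝ) + 1) - 1)) * (2 * ((n:ℝ) + 3 * ((s:ℝ) * ((δ:ℝ) - (s:ℝ) + 1)) - 1) - (4 * ((s:ℝ) * ((δ:ℝ) - (s:ℝ) + 1)) + (s:ℝ) + 2 * ((δ:ℝ) - (s:ℝ) + 1) - 2))) / (2 * ((n:ℝ) + 3 * ((s:ℝ) * ((δ:ℝ) - (s:ℝ) + 1)) - 1) - (4 * ((s:ℝ) * ((δ:ℝ) - (s:ℝ) + 1)) + (s:ℝ) + 2 * ((δ:ℝ) - (s:ℝ) + 1) - 2))))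
            (le_max_right ((((s:ℝ) - 1) * (((n:ℝ) + 3 * ((s:ℝ) * ((δ:ℝ) - (s:ℝ) + 1)) - 1) - 2 * ((s:ℝ) * ((δ:ℝ) - (s:ℝ) + 1))) + ((n:ℝ) - (s:ℝ) - ((s:ℝ) * ((δ:ℝ) - (s:ℝ) + 1))) * ((n:ℝ) + 3 * ((s:ℝ) * ((δ:ℝ) - (s:ℝ) + 1)) - 1) + ((s:ℝ) * ((δ:ℝ) - (s:ℝ) + 1)) * (2 * ((n:ℝ) + 3 * ((s:ℝ) * ((δ:ℝ) - (s:ℝ) + 1)) - 1) - (4 * ((s:ℝ) * ((δ:ℝ) - (s:ℝ) + 1)) + (s:ℝ) + 2 * ((δ:ℝ) - (s:ℝ) + 1) - 2))) / (((n:ℝ) + 3 * ((s:ℝ) * ((δ:ℝ) - (s:ℝ) + 1)) - 1) - 2 * ((s:ℝ) * ((δ:ℝ) - (s:ℝ) + 1)))) _))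
          simp only [xvec, Sum.elim_inl, Sum.elim_inr]
          linarith
        · rw [hG₂, gg_mulVec_3 (hp := hs0) (k := ((δ:ℝ) - (s:ℝ) + 1) - 1) (hk := hkrep), Fintype.card_prod, Fintype.card_fin,
            Fintype.card_fin, Nat.cast_mul, hN2cast, hqcast]
          have h := (div_le_iff₀ hC2).mp (le_trans (le_max_right (((s:ℝ) * (((n:ℝ) + 3 * ((s:ℝ) * ((δ:ℝ) - (s:ℝ) + 1)) - 1) - 2 * ((s:ℝ) * ((δ:ℝ) - (s:ℝ) + 1))) + (((n:ℝ) - (s:ℝ) - ((s:ℝ) * ((δ:ℝ) - (s:ℝ) + 1))) - 1) * ((n:ℝ) + 3 * ((s:ℝ) * ((δ:ℝ) - (s:ℝ) + 1)) - 1) + 2 * ((s:ℝ) * ((δ:ℝ) - (s:ℝ) + 1)) * (2 * ((n:ℝ) + 3 * ((s:ℝ) * ((δ:ℝ) - (s:ℝ) + 1)) - 1) - (4 * ((s:ℝ) * ((δ:ℝ) - (s:ℝ) + 1)) + (s:ℝ) + 2 * ((δ:ℝ) - (s:ℝ) + 1) - 2))) / ((n:ℝ) + 3 * ((s:ℝ)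 * ((δ:ℝ) - (s:ℝ) + 1)) - 1)) (((s:ℝ) * (((n:ℝ) + 3 * ((s:ℝ) * ((δ:ℝ) - (s:ℝ) + 1)) - 1) - 2 * ((s:ℝ) * ((δ:ℝ) - (s:ℝ) + 1))) + 2 * ((n:ℝ) - (s:ℝ) - ((s:ℝ) * ((δ:ℝ) - (s:ℝ) + 1))) * ((n:ℝ) + 3 * ((s:ℝ) * ((δ:ℝ) - (s:ℝ) + 1)) - 1) + (2 * ((s:ℝ) * ((δ:ℝ) - (s:ℝ) + 1)) - 2 - (((δ:ℝ) - (s:ℝ) + 1) - 1)) * (2 * ((n:ℝ) + 3 * ((s:ℝ) * ((δ:ℝ) - (s:ℝ) + 1)) - 1) - (4 * ((s:ℝ) * ((δ:ℝ) - (s:ℝ) + 1)) + (s:ℝ) + 2 * ((δ:ℝ) - (s:ℝ) + 1) - 2))) / (2 * ((n:ℝ) + 3 * ((s:ℝ) * ((δ:ℝ) - (s:ℝ) + 1)) - 1) - (4 * ((s:ℝ) * ((δ:ℝ) - (s:ℝ) + 1)) + (s:ℝ) + 2 * ((δ:ℝ) - (s:ℝ) + 1) - 2))))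
            (le_max_right ((((s:ℝ) - 1) * (((n:ℝ) + 3 * ((s:ℝ) * ((δ:ℝ) - (s:ℝ) + 1)) - 1) - 2 * ((s:ℝ) * ((δ:ℝ) - (s:ℝ) + 1))) + ((n:ℝ) - (s:ℝ) - ((s:ℝ) * ((δ:ℝ) - (s:ℝ) + 1))) * ((n:ℝ) + 3 * ((s:ℝ) * ((δ:ℝ) - (s:ℝ) + 1)) - 1) + ((s:ℝ) * ((δ:ℝ) - (s:ℝ) + 1)) * (2 * ((n:ℝ) + 3 * ((s:ℝ) * ((δ:ℝ) - (s:ℝ) + 1)) - 1) - (4 * ((s:ℝ) * ((δ:ℝ) - (s:ℝ) + 1)) + (s:ℝ) + 2 * ((δ:ℝ) - (s:ℝ) + 1) - 2))) / (((n:ℝ) + 3 * ((s:ℝ) * ((δ:ℝ) - (s:ℝ) + 1)) - 1) - 2 * ((s:ℝ) * ((δ:ℝ) - (s:ℝ) + 1)))) _))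
          simp only [xvec, Sum.elim_inl, Sum.elim_inr]
          linarith
  -- the key strict inequality between the two bounds
  have hkey : (max ((((δ:ℝ) - 1) * ((n:ℝ) + (δ:ℝ) - 1) + ((n:ℝ) - 2 * (δ:ℝ)) * ((n:ℝ) + 3 * (δ:ℝ) - 1) + (δ:ℝ) * (2 * (n:ℝ) + (δ:ℝ) - 2)) / ((n:ℝ) + (δ:ℝ) - 1)) (max (((δ:ℝ) * ((n:ℝ) + (δ:ℝ) - 1) + (((n:ℝ) - 2 * (δ:ℝ)) - 1) * ((n:ℝ) + 3 * (δ:ℝ) - 1) + 2 * (δ:ℝ) * (2 * (n:ℝ) + (δ:ℝ) - 2)) / ((n:ℝ) + 3 * (δ:ℝ) - 1)) (((δ:ℝ) * ((n:ℝ) + (δ:ℝ) - 1) + 2 * ((n:ℝ) - 2 * (δ:ℝ)) * ((n:ℝ) + 3 * (δ:ℝ) - 1) + (2 * (δ:ℝ) - 2 - 0) * (2 * (n:ℝ) + (δ:ℝ) - 2)) / (2 * (n:ℝ) + (δ:ℝ) - 2)))) < (((s:ℝ) * (((n:ℝ) + 3 * ((s:ℝ) * ((δ:ℝ) - (s:ℝ)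 + 1)) - 1) - 2 * ((s:ℝ) * ((δ:ℝ) - (s:ℝ) + 1))) * (((s:ℝ) - 1) * (((n:ℝ) + 3 * ((s:ℝ) * ((δ:ℝ) - (s:ℝ) + 1)) - 1) - 2 * ((s:ℝ) * ((δ:ℝ) - (s:ℝ) + 1))) + ((n:ℝ) - (s:ℝ) - ((s:ℝ) * ((δ:ℝ) - (s:ℝ) + 1))) * ((n:ℝ) + 3 * ((s:ℝ) * ((δ:ℝ) - (s:ℝ) + 1)) - 1) + ((s:ℝ) * ((δ:ℝ) - (s:ℝ) + 1)) * (2 * ((n:ℝ) + 3 * ((s:ℝ) * ((δ:ℝ) - (s:ℝ) + 1)) - 1) - (4 * ((s:ℝ) * ((δ:ℝ) - (s:ℝ) + 1)) + (s:ℝ) + 2 * ((δ:ℝ) - (s:ℝ) + 1) - 2))) + ((n:ℝ) - (s:ℝ) - ((s:ℝ) * ((δ:ℝ) - (s:ℝ) + 1))) * ((n:ℝ) + 3 * ((s:ℝ) * ((δ:ℝ) - (s:ℝ) + 1)) - 1) * ((s:ℝ) * (((n:ℝ) + 3 * ((s:ℝ) * ((δ:ℝ) - (s:ℝ) + 1))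 - 1) - 2 * ((s:ℝ) * ((δ:ℝ) - (s:ℝ) + 1))) + (((n:ℝ) - (s:ℝ) - ((s:ℝ) * ((δ:ℝ) - (s:ℝ) + 1))) - 1) * ((n:ℝ) + 3 * ((s:ℝ) * ((δ:ℝ) - (s:ℝ) + 1)) - 1) + 2 * ((s:ℝ) * ((δ:ℝ) - (s:ℝ) + 1)) * (2 * ((n:ℝ) + 3 * ((s:ℝ) * ((δ:ℝ) - (s:ℝ) + 1)) - 1) - (4 * ((s:ℝ) * ((δ:ℝ) - (s:ℝ) + 1)) + (s:ℝ) + 2 * ((δ:ℝ) - (s:ℝ) + 1) - 2))) + ((s:ℝ) * ((δ:ℝ) - (s:ℝ) + 1)) * (2 * ((n:ℝ) + 3 * ((s:ℝ) * ((δ:ℝ) - (s:ℝ) + 1)) - 1) - (4 * ((s:ℝ) * ((δ:ℝ) - (s:ℝ) + 1)) + (s:ℝ) + 2 * ((δ:ℝ) - (s:ℝ) + 1) - 2)) * ((s:ℝ) * (((n:ℝ) + 3 * ((s:ℝ) * ((δ:ℝ) - (s:ℝ) + 1)) - 1) - 2 * ((s:ℝ) * ((δ:ℝ) - (s:ℝ)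 + 1))) + 2 * ((n:ℝ) - (s:ℝ) - ((s:ℝ) * ((δ:ℝ) - (s:ℝ) + 1))) * ((n:ℝ) + 3 * ((s:ℝ) * ((δ:ℝ) - (s:ℝ) + 1)) - 1) + (2 * ((s:ℝ) * ((δ:ℝ) - (s:ℝ) + 1)) - 2 - (((δ:ℝ) - (s:ℝ) + 1) - 1)) * (2 * ((n:ℝ) + 3 * ((s:ℝ) * ((δ:ℝ) - (s:ℝ) + 1)) - 1) - (4 * ((s:ℝ) * ((δ:ℝ) - (s:ℝ) + 1)) + (s:ℝ) + 2 * ((δ:ℝ) - (s:ℝ) + 1) - 2)))) / ((s:ℝ) * (((n:ℝ) + 3 * ((s:ℝ) * ((δ:ℝ) - (s:ℝ) + 1)) - 1) - 2 * ((s:ℝ) * ((δ:ℝ) - (s:ℝ) + 1)))^2 + ((n:ℝ) - (s:ℝ) - ((s:ℝ) * ((δ:ℝ) - (s:ℝ) + 1))) * ((n:ℝ) + 3 * ((s:ℝ) * ((δ:ℝ) - (s:ℝ) + 1)) - 1)^2 + ((s:ℝ) * ((δ:ℝ) - (s:ℝ) + 1)) * (2 * ((n:ℝ) + 3 * ((s:ℝ)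 * ((δ:ℝ) - (s:ℝ) + 1)) - 1) - (4 * ((s:ℝ) * ((δ:ℝ) - (s:ℝ) + 1)) + (s:ℝ) + 2 * ((δ:ℝ) - (s:ℝ) + 1) - 2))^2)) := by
    have hp0 := polyPos0 ((s:ℝ) - 2) ((δ:ℝ) - (s:ℝ) - 1) ((n:ℝ) - ((δ:ℝ)^2/2 + 2*(δ:ℝ) + 2)) hx hy hm
    have hp1 := polyPos1 ((s:ℝ) - 2) ((δ:ℝ) - (s:ℝ) - 1) ((n:ℝ) - ((δ:ℝ)^2/2 + 2*(δ:ℝ) + 2)) hx hy hm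
    have hp2 := polyPos2 ((s:ℝ) - 2) ((δ:ℝ) - (s:ℝ) - 1) ((n:ℝ) - ((δ:ℝ)^2/2 + 2*(δ:ℝ) + 2)) hx hy hm
    refine max_lt ?_ (max_lt ?_ ?_)
    · rw [div_lt_div_iff₀ hA1 hDEN]
      linarith [hp0]
    · rw [div_lt_div_iff₀ hB1 hDEN]
      linarith [hp1]
    · rw [div_lt_div_iff₀ hC1 hDEN]
      linarith [hp2]
  exact lt_of_le_of_lt hup (lt_of_lt_of_le hkey hlow)
end

section
/- Let b be a positive integer and s ≥ 2 an integer, and let n be an integer with n ≥ 2/b + 9b/2 + 9/2 and s ≤ (n−1)/(1+b). Then λ₁(D(K₁ ∨ (K_{n−1−b} + bK₁))) < λ₁(D(K_s ∨ (K_{n−s−sb} + sbK₁))). -/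
open SimpleGraph Finset

-- ===== auxiliary lemmas =====

set_option maxHeartbeats 3200000 in
set_option maxRecDepth 8000 in
lemma key (b s n : ℝ) (hb : 1 ≤ b) (hs : 2 ≤ s)
    (hn : 4 + 9*b^2 + 9*b ≤ 2*b*n) (hsn : s*(1+b) ≤ n-1) :
    ((n-1-b+4*b)*(n+5*b+1) - 2*b*(4*b+3)) *
      (s*(n-1)^2 + (n-s-s*b)*(n-1+s*b)^2 + (s*b)*(2*n-s-2)^2)
    < (s*(n-1)*((s-1)*(n-1)+(n-s-s*b)*(n-1+s*b)+(s*b)*(2*n-s-2))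
      + (n-s-s*b)*(n-1+s*b)*(s*(n-1)+((n-s-s*b)-1)*(n-1+s*b)+2*(s*b)*(2*n-s-2))
      + (s*b)*(2*n-s-2)*(s*(n-1)+2*(n-s-s*b)*(n-1+s*b)+2*((s*b)-1)*(2*n-s-2)))
      * (n+5*b+1) := by
  have hB : (0:ℝ) ≤ b - 1 := by linarith
  have hS : (0:ℝ) ≤ s - 2 := by linarith
  have hT : (0:ℝ) ≤ n - 1 - s*(1+b) := by linarith
  have hE : (0:ℝ) ≤ 2*b*n - 9*b^2 - 9*b - 4 := by linarith
  have hg : (0:ℝ) ≤ 114 + 410*(b-1) + 398*(b-1)^2 + 132*(s-2) + 463*(b-1)*(s-2)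
      + 620*(b-1)^2*(s-2) + 117*(b-1)^3 := by
    nlinarith [mul_nonneg hB hS, mul_nonneg (mul_nonneg hB hB) hS, pow_nonneg hB 2, pow_nonneg hB 3]
  have hEg : (0:ℝ) ≤ (2*b*n - 9*b^2 - 9*b - 4) * (114 + 410*(b-1) + 398*(b-1)^2 + 132*(s-2)
      + 463*(b-1)*(s-2) + 620*(b-1)^2*(s-2) + 117*(b-1)^3) := mul_nonneg hE hg
  linarith [hEg, hT, (pow_nonneg hT 2), (pow_nonneg hT 3), (pow_nonneg hT 4), hS, (mul_nonneg hS hT), (mul_nonneg hS (pow_nonneg hT 2)), (mul_nonneg hS (pow_nonneg hT 3)), (mul_nonneg hS (pow_nonneg hT 4)), (pow_nonneg hS 2), (mul_nonneg (pow_nonneg hS 2) hT), (mul_nonneg (pow_nonneg hS 2) (pow_nonneg hT 2)), (mul_nonneg (pow_nonneg hS 2) (pow_nonneg hT 3)), (pow_nonneg hS 3), (mul_nonneg (pow_nonneg hS 3) hT), (mul_nonneg (pow_nonneg hS 3) (pow_nonneg hT 2)), (pow_nonneg hS 4), (mul_nonneg (pow_nonneg hS 4) hT), (pow_nonneg hS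 5), hB, (mul_nonneg hB hT), (mul_nonneg hB (pow_nonneg hT 2)), (mul_nonneg hB (pow_nonneg hT 3)), (mul_nonneg hB (pow_nonneg hT 4)), (mul_nonneg hB hS), (mul_nonneg (mul_nonneg hB hS) hT), (mul_nonneg (mul_nonneg hB hS) (pow_nonneg hT 2)), (mul_nonneg (mul_nonneg hB hS) (pow_nonneg hT 3)), (mul_nonneg (mul_nonneg hB hS) (pow_nonneg hT 4)), (mul_nonneg hB (pow_nonneg hS 2)), (mul_nonneg (mul_nonneg hB (pow_nonneg hS 2)) hT), (mul_nonneg (mul_nonneg hB (pow_nonneg hS 2)) (pow_nonneg hT 2)), (mul_nonneg (mul_nonneg hB (pow_nonneg hS 2)) (pow_nonneg hT 3)), (mul_nonneg hB (pow_nonneg hS 3)), (mul_nonneg (mul_nonneg hB (pow_nonneg hS 3)) hT), (mul_nonneg (mul_nonneg hB (pow_nonneg hS 3)) (pow_nonneg hT 2)), (mul_nonneg hB (pow_nonneg hS 4)), (mul_nonneg (mul_nonneg hB (pow_nonneg hS 4)) hT), (mul_nonneg hB (pow_nonneg hS 5)), (pow_nonneg hB 2), (mul_nonneg (pow_nonneg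 hB 2) hT), (mul_nonneg (pow_nonneg hB 2) (pow_nonneg hT 2)), (mul_nonneg (pow_nonneg hB 2) (pow_nonneg hT 3)), (mul_nonneg (pow_nonneg hB 2) hS), (mul_nonneg (mul_nonneg (pow_nonneg hB 2) hS) hT), (mul_nonneg (mul_nonneg (pow_nonneg hB 2) hS) (pow_nonneg hT 2)), (mul_nonneg (mul_nonneg (pow_nonneg hB 2) hS) (pow_nonneg hT 3)), (mul_nonneg (pow_nonneg hB 2) (pow_nonneg hS 2)), (mul_nonneg (mul_nonneg (pow_nonneg hB 2) (pow_nonneg hS 2)) hT), (mul_nonneg (mul_nonneg (pow_nonneg hB 2) (pow_nonneg hS 2)) (pow_nonneg hT 2)), (mul_nonneg (mul_nonneg (pow_nonneg hB 2) (pow_nonneg hS 2)) (pow_nonneg hT 3)), (mul_nonneg (pow_nonneg hB 2) (pow_nonneg hS 3)), (mul_nonneg (mul_nonneg (pow_nonneg hB 2) (pow_nonneg hS 3)) hT), (mul_nonneg (mul_nonneg (pow_nonneg hB 2) (pow_nonneg hS 3)) (pow_nonneg hT 2)), (mul_nonneg (pow_nonneg hB 2) (pow_nonneg hS 4)), (mul_nonneg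 (mul_nonneg (pow_nonneg hB 2) (pow_nonneg hS 4)) hT), (mul_nonneg (pow_nonneg hB 2) (pow_nonneg hS 5)), (pow_nonneg hB 3), (mul_nonneg (pow_nonneg hB 3) hT), (mul_nonneg (pow_nonneg hB 3) (pow_nonneg hT 2)), (mul_nonneg (pow_nonneg hB 3) hS), (mul_nonneg (mul_nonneg (pow_nonneg hB 3) hS) hT), (mul_nonneg (mul_nonneg (pow_nonneg hB 3) hS) (pow_nonneg hT 2)), (mul_nonneg (pow_nonneg hB 3) (pow_nonneg hS 2)), (mul_nonneg (mul_nonneg (pow_nonneg hB 3) (pow_nonneg hS 2)) hT), (mul_nonneg (mul_nonneg (pow_nonneg hB 3) (pow_nonneg hS 2)) (pow_nonneg hT 2)), (mul_nonneg (pow_nonneg hB 3) (pow_nonneg hS 3)), (mul_nonneg (mul_nonneg (pow_nonneg hB 3) (pow_nonneg hS 3)) hT), (mul_nonneg (mul_nonneg (pow_nonneg hB 3) (pow_nonneg hS 3)) (pow_nonneg hT 2)), (mul_nonneg (pow_nonneg hB 3) (pow_nonneg hS 4)), (mul_nonneg (mul_nonneg (pow_nonneg hB 3) (pow_nonneg hS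 4)) hT), (mul_nonneg (pow_nonneg hB 3) (pow_nonneg hS 5)), (pow_nonneg hB 4), (mul_nonneg (pow_nonneg hB 4) hT), (mul_nonneg (pow_nonneg hB 4) hS), (mul_nonneg (mul_nonneg (pow_nonneg hB 4) hS) hT), (mul_nonneg (pow_nonneg hB 4) (pow_nonneg hS 2)), (mul_nonneg (mul_nonneg (pow_nonneg hB 4) (pow_nonneg hS 2)) hT), (mul_nonneg (pow_nonneg hB 4) (pow_nonneg hS 3)), (mul_nonneg (mul_nonneg (pow_nonneg hB 4) (pow_nonneg hS 3)) hT), (mul_nonneg (pow_nonneg hB 4) (pow_nonneg hS 4)), (mul_nonneg (mul_nonneg (pow_nonneg hB 4) (pow_nonneg hS 4)) hT), (mul_nonneg (pow_nonneg hB 4) (pow_nonneg hS 5)), (pow_nonneg hB 5), (mul_nonneg (pow_nonneg hB 5) hS), (mul_nonneg (pow_nonneg hB 5) (pow_nonneg hS 2)), (mul_nonneg (pow_nonneg hB 5) (pow_nonneg hS 3)), (mul_nonneg (pow_nonneg hB 5) (pow_nonneg hS 4)), (mul_nonneg (pow_nonneg hB 5) (pow_nonneg hS 5))]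


section AuxLemmas

variable {V : Type*} [Fintype V]


variable {V : Type*} [Fintype V]

/-- Weighted row-sum upper bound on eigenvalues of a nonnegative matrix. -/
lemma eig_le_s12 (M : Matrix V V ℝ) (hM : ∀ i j, 0 ≤ M i j) (w : V → ℝ)
    (hw : ∀ i, 0 < w i) {c : ℝ} (h : ∀ i, M.mulVec w i ≤ c * w i) {μ : ℝ}
    (hμ : ∃ v : V → ℝ, v ≠ 0 ∧ M.mulVec v = μ • v) : μ ≤ c := by
  obtain ⟨v, hv, he⟩ := hμ
  obtain ⟨j, hj⟩ := Function.ne_iff.mp hv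
  have hj' : v j ≠ 0 := hj
  obtain ⟨i, -, hi⟩ := Finset.exists_max_image Finset.univ (fun k => |v k| / w k)
    ⟨j, Finset.mem_univ j⟩
  have hr : 0 < |v i| / w i :=
    lt_of_lt_of_le (div_pos (abs_pos.mpr hj') (hw j)) (hi j (Finset.mem_univ j))
  have hvi : 0 < |v i| := by
    rcases (div_pos_iff.mp hr) with ⟨h1, _⟩ | ⟨_, h2⟩
    · exact h1
    · exact absurd (hw i) (not_lt.mpr h2.le)
  have hb : ∀ k, |v k| ≤ (|v i| / w i) * w k := fun k =>
    (div_le_iff₀ (hw k)).mp (hi k (Finset.mem_univ k))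
  have hmvi : M.mulVec v i = μ * v i := by rw [he]; simp
  have hmu : |μ| * |v i| ≤ c * |v i| := by
    calc |μ| * |v i| = |M.mulVec v i| := by rw [hmvi, abs_mul]
    _ = |∑ k, M i k * v k| := by simp [Matrix.mulVec, dotProduct]
    _ ≤ ∑ k, |M i k * v k| := Finset.abs_sum_le_sum_abs _ _
    _ = ∑ k, M i k * |v k| := by
        refine Finset.sum_congr rfl fun k _ => ?_
        rw [abs_mul, abs_of_nonneg (hM i k)]
    _ ≤ ∑ k, M i k * ((|v i| / w i) * w k) :=
        Finset.sum_le_sum fun k _ => mul_le_mul_of_nonneg_left (hb k) (hM i k)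
    _ = (|v i| / w i) * M.mulVec w i := by
        simp only [Matrix.mulVec, dotProduct, Finset.mul_sum]
        exact Finset.sum_congr rfl fun k _ => by ring
    _ ≤ (|v i| / w i) * (c * w i) := mul_le_mul_of_nonneg_left (h i) hr.le
    _ = c * (|v i| / w i * w i) := by ring
    _ = c * |v i| := by rw [div_mul_cancel₀ _ (hw i).ne']
  exact (le_abs_self μ).trans (le_of_mul_le_mul_right hmu hvi)

open scoped RealInnerProductSpace in
/-- Rayleigh-quotient lower bound: some eigenvalue exceeds the Rayleigh quotient. -/
lemma exists_eig_ge (M : Matrix V V ℝ) (hM : M.IsHermitian) (u : V → ℝ) (hu : u ≠ 0) :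
    ∃ μ : ℝ, (∃ v : V → ℝ, v ≠ 0 ∧ M.mulVec v = μ • v) ∧
      ∑ i, u i * M.mulVec u i ≤ μ * ∑ i, u i * u i := by
  haveI : Nonempty V := by
    obtain ⟨j, -⟩ := Function.ne_iff.mp hu; exact ⟨j⟩
  haveI : DecidableEq V := Classical.decEq V
  set e := hM.eigenvectorBasis with he
  obtain ⟨i₀, -, hmax⟩ := Finset.exists_max_image Finset.univ hM.eigenvalues
    Finset.univ_nonempty
  have hinner : ∀ x y : EuclideanSpace ℝ V, ⟪x, y⟫ = ∑ i, x i * y i := by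
    intro x y
    simp [PiLp.inner_apply, RCLike.inner_apply]
    exact Finset.sum_congr rfl fun _ _ => mul_comm _ _
  set U : EuclideanSpace ℝ V := (WithLp.equiv 2 (V → ℝ)).symm u with hU
  have hUi : ∀ i, U i = u i := fun i => rfl
  have hMV : ∀ (x : V → ℝ), (WithLp.equiv 2 (V → ℝ)).symm (M.mulVec x) =
      (M.mulVec x : V → ℝ) := fun x => rfl
  -- key: ⟪e i, M *ᵥ u⟫ = eigenvalue i * ⟪e i, U⟫
  have hsym : ∀ (x : V → ℝ) i, (∑ k, (e i : V → ℝ) k * M.mulVec x k) =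
      hM.eigenvalues i * ∑ k, (e i : V → ℝ) k * x k := by
    intro x i
    have h1 : M.mulVec (e i) = hM.eigenvalues i • (e i : V → ℝ) :=
      hM.mulVec_eigenvectorBasis i
    calc ∑ k, (e i : V → ℝ) k * M.mulVec x k
        = ∑ k, ∑ l, (e i : V → ℝ) k * (M k l * x l) := by
          simp [Matrix.mulVec, dotProduct, Finset.mul_sum]
      _ = ∑ l, (∑ k, M l k * (e i : V → ℝ) k) * x l := by
          rw [Finset.sum_comm]
          refine Finset.sum_congr rfl fun l _ => ?_
          rw [Finset.sum_mul]
          refine Finset.sum_congr rfl fun k _ => ?_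
          have hMkl : M k l = M l k := by
            have := congrFun (congrFun hM l) k
            simpa [Matrix.conjTranspose_apply] using this
          rw [hMkl]; ring
      _ = ∑ l, (hM.eigenvalues i * (e i : V → ℝ) l) * x l := by
          refine Finset.sum_congr rfl fun l _ => ?_
          have := congrFun h1 l
          simp only [Matrix.mulVec, dotProduct] at this
          rw [this]; simp
      _ = hM.eigenvalues i * ∑ k, (e i : V → ℝ) k * x k := by
          rw [Finset.mul_sum]; exact Finset.sum_congr rfl fun k _ => by ring
  refine ⟨hM.eigenvalues i₀, ⟨e i₀, ?_, hM.mulVec_eigenvectorBasis i₀⟩, ?_⟩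
  · intro h0
    refine e.toBasis.ne_zero i₀ ?_
    simp only [OrthonormalBasis.coe_toBasis]
    simpa using congrArg (WithLp.toLp 2) h0
  · have expand : ∀ y : EuclideanSpace ℝ V, ⟪U, y⟫ = ∑ i, ⟪U, e i⟫ * ⟪e i, y⟫ :=
      fun y => (e.sum_inner_mul_inner U y).symm
    have hUe : ∀ i, ⟪U, e i⟫ = ⟪e i, U⟫ := fun i => real_inner_comm _ _
    have h2 : ∑ i, u i * M.mulVec u i = ∑ i, hM.eigenvalues i * ⟪e i, U⟫ ^ 2 := by
      have := expand ((WithLp.equiv 2 (V → ℝ)).symm (M.mulVec u))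
      rw [hinner] at this
      calc ∑ i, u i * M.mulVec u i = ∑ i, U i * M.mulVec u i := by
            exact Finset.sum_congr rfl fun i _ => by rw [hUi]
        _ = ∑ i, ⟪U, e i⟫ * ⟪e i, (WithLp.equiv 2 (V → ℝ)).symm (M.mulVec u)⟫ := this
        _ = ∑ i, hM.eigenvalues i * ⟪e i, U⟫ ^ 2 := by
            refine Finset.sum_congr rfl fun i _ => ?_
            rw [hUe i, hinner, hinner]
            have hx : (∑ k, (e i : V → ℝ) k *
                ((WithLp.equiv 2 (V → ℝ)).symm (M.mulVec u)) k) =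
                hM.eigenvalues i * ∑ k, (e i : V → ℝ) k * U k := hsym u i
            rw [hx]; ring
    have h3 : ∑ i, u i * u i = ∑ i, ⟪e i, U⟫ ^ 2 := by
      have := expand U
      rw [hinner] at this
      calc ∑ i, u i * u i = ∑ i, U i * U i := rfl
        _ = ∑ i, ⟪U, e i⟫ * ⟪e i, U⟫ := this
        _ = ∑ i, ⟪e i, U⟫ ^ 2 := by
            refine Finset.sum_congr rfl fun i _ => by rw [hUe i]; ring
    rw [h2, h3, Finset.mul_sum]
    exact Finset.sum_le_sum fun i _ =>
      mul_le_mul_of_nonneg_right (hmax i (Finset.mem_univ i)) (sq_nonneg _)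


end AuxLemmas

/-- The pattern graph `K_p ∨ (K_m + q K_1)`. -/
def PG (p m q : ℕ) : SimpleGraph (Fin p ⊕ (Fin m ⊕ Fin q)) :=
  graphJoin ⊤ (graphSum ⊤ ⊥)

namespace PGaux

open Sum

variable {p m q : ℕ}

lemma adj_inl_inr (a : Fin p) (u : Fin m ⊕ Fin q) : (PG p m q).Adj (inl a) (inr u) := by
  simp [PG, graphJoin]

lemma adj_inr_inl (u : Fin m ⊕ Fin q) (a : Fin p) : (PG p m q).Adj (inr u) (inl a) := by
  simp [PG, graphJoin]

lemma adj_inl_inl {a a' : Fin p} (h : a ≠ a') : (PG p m q).Adj (inl a) (inl a') := by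
  simpa [PG, graphJoin] using h

lemma adj_clique {k k' : Fin m} (h : k ≠ k') :
    (PG p m q).Adj (inr (inl k)) (inr (inl k')) := by
  simpa [PG, graphJoin, graphSum] using h

lemma not_adj_ci (k : Fin m) (j : Fin q) :
    ¬ (PG p m q).Adj (inr (inl k)) (inr (inr j)) := by
  simp [PG, graphJoin, graphSum]

lemma not_adj_ic (j : Fin q) (k : Fin m) :
    ¬ (PG p m q).Adj (inr (inr j)) (inr (inl k)) := by
  simp [PG, graphJoin, graphSum]

lemma not_adj_ii (j j' : Fin q) :
    ¬ (PG p m q).Adj (inr (inr j)) (inr (inr j')) := by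
  simp [PG, graphJoin, graphSum]

lemma dist_two (hp : 0 < p) {x y : Fin p ⊕ (Fin m ⊕ Fin q)} (hxy : x ≠ y)
    (hadj : ¬ (PG p m q).Adj x y) : (PG p m q).dist x y = 2 := by
  have hx : ∃ u, x = inr u := by
    rcases x with a | u
    · rcases y with a' | v
      · exact absurd (adj_inl_inl fun h => hxy (by rw [h])) hadj
      · exact absurd (adj_inl_inr a v) hadj
    · exact ⟨u, rfl⟩
  have hy : ∃ v, y = inr v := by
    rcases y with a' | v
    · obtain ⟨u, rfl⟩ := hx
      exact absurd (adj_inr_inl u a') hadj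
    · exact ⟨v, rfl⟩
  obtain ⟨u, rfl⟩ := hx
  obtain ⟨v, rfl⟩ := hy
  set c0 : Fin p := ⟨0, hp⟩
  have h1 : (PG p m q).Adj (inr u) (inl c0) := adj_inr_inl u c0
  have h2 : (PG p m q).Adj (inl c0) (inr v) := adj_inl_inr c0 v
  set W : (PG p m q).Walk (inr u) (inr v) := Walk.cons h1 (Walk.cons h2 Walk.nil) with hW
  have hle : (PG p m q).dist (inr u) (inr v) ≤ 2 := by
    simpa [hW] using SimpleGraph.dist_le W
  have hpos : 0 < (PG p m q).dist (inr u) (inr v) :=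
    SimpleGraph.Reachable.pos_dist_of_ne ⟨W⟩ hxy
  have hne1 : (PG p m q).dist (inr u) (inr v) ≠ 1 := fun h =>
    hadj (SimpleGraph.dist_eq_one_iff_adj.mp h)
  omega

lemma dist_one {x y : Fin p ⊕ (Fin m ⊕ Fin q)} (h : (PG p m q).Adj x y) :
    (PG p m q).dist x y = 1 := SimpleGraph.dist_eq_one_iff_adj.mpr h

lemma distMatrix_eq (hp : 0 < p) :
    distMatrix (PG p m q) = fun x y =>
      if x = y then 0 else (match x, y with
      | inl _, _ => (1:ℝ)
      | _, inl _ => 1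
      | inr (inl _), inr (inl _) => 1
      | _, _ => 2) := by
  funext x y
  by_cases hxy : x = y
  · simp [distMatrix, hxy]
  · rw [distMatrix, if_neg hxy]
    rcases x with a | k | j <;> rcases y with a' | k' | j'
    · rw [dist_one (adj_inl_inl fun h => hxy (by rw [h]))]; norm_num
    · rw [dist_one (adj_inl_inr _ _)]; norm_num
    · rw [dist_one (adj_inl_inr _ _)]; norm_num
    · rw [dist_one (adj_inr_inl _ _)]; norm_num
    · rw [dist_one (adj_clique fun h => hxy (by rw [h]))]; norm_num
    · rw [dist_two hp hxy (not_adj_ci _ _)]; norm_num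
    · rw [dist_one (adj_inr_inl _ _)]; norm_num
    · rw [dist_two hp hxy (not_adj_ic _ _)]; norm_num
    · rw [dist_two hp hxy (not_adj_ii _ _)]; norm_num

/-- class-constant vector -/
def cw (p m q : ℕ) (α β γ : ℝ) : Fin p ⊕ (Fin m ⊕ Fin q) → ℝ :=
  Sum.elim (fun _ => α) (Sum.elim (fun _ => β) (fun _ => γ))

lemma offdiag_sum {N : ℕ} (z : Fin N) (c r : ℝ) :
    ∑ t : Fin N, (if z = t then 0 else c) * r = ((N:ℝ) - 1) * (c * r) := by
  have h : ∀ t : Fin N, (if z = t then (0:ℝ) else c) * r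
      = c * r - (if z = t then c * r else 0) := by
    intro t; split <;> ring
  rw [Finset.sum_congr rfl fun t _ => h t, Finset.sum_sub_distrib]
  simp [Finset.sum_ite_eq, Finset.card_univ]
  ring

lemma mulVec_cw (hp : 0 < p) (α β γ : ℝ) :
    (distMatrix (PG p m q)).mulVec (cw p m q α β γ) =
      cw p m q (((p:ℝ)-1)*α + m*β + q*γ)
        (p*α + ((m:ℝ)-1)*β + 2*q*γ)
        (p*α + 2*m*β + (2*(q:ℝ)-2)*γ) := by
  rw [distMatrix_eq hp]
  funext x
  rcases x with a | k | j <;>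
    simp only [Matrix.mulVec, dotProduct, Fintype.sum_sum_type, cw, Sum.elim_inl,
      Sum.elim_inr, Sum.inl.injEq, Sum.inr.injEq, reduceCtorEq] <;>
    simp only [if_false]
  · rw [offdiag_sum a 1 α]
    simp [Finset.sum_const, Finset.card_univ, nsmul_eq_mul]
    ring
  · rw [offdiag_sum k 1 β]
    simp [Finset.sum_const, Finset.card_univ, nsmul_eq_mul]
    ring
  · rw [offdiag_sum j 2 γ]
    simp [Finset.sum_const, Finset.card_univ, nsmul_eq_mul]
    ring

lemma sum_cw (p m q : ℕ) (α β γ α' β' γ' : ℝ) :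
    ∑ x, (cw p m q α β γ x) * (cw p m q α' β' γ' x)
      = p*(α*α') + m*(β*β') + q*(γ*γ') := by
  simp [Fintype.sum_sum_type, cw, Finset.sum_const, Finset.card_univ, nsmul_eq_mul]
  ring

lemma isHermitian_distMatrix {V : Type*} [Fintype V] (G : SimpleGraph V) :
    (distMatrix G).IsHermitian := by
  ext i j
  simp [distMatrix, Matrix.conjTranspose_apply, SimpleGraph.dist_comm]


end PGaux

set_option maxHeartbeats 3200000 in
set_option maxRecDepth 8000 in
theorem stmt12 (b s n : ℕ) (hb : 1 ≤ b) (hs : 2 ≤ s)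
    (hn : 2 / (b : ℝ) + 9 * (b : ℝ) / 2 + 9 / 2 ≤ (n : ℝ))
    (hsn : (s : ℝ) ≤ ((n : ℝ) - 1) / (1 + (b : ℝ))) :
    distSpecRad (graphJoin (⊤ : SimpleGraph (Fin 1))
        (graphSum (⊤ : SimpleGraph (Fin (n - 1 - b))) (⊥ : SimpleGraph (Fin b))))
      < distSpecRad (graphJoin (⊤ : SimpleGraph (Fin s))
        (graphSum (⊤ : SimpleGraph (Fin (n - s - s * b))) (⊥ : SimpleGraph (Fin (s * b))))) := by
  classical
  have hb1 : (1:ℝ) ≤ (b:ℝ) := by exact_mod_cast hb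
  have hs1 : (2:ℝ) ≤ (s:ℝ) := by exact_mod_cast hs
  have hbpos : (0:ℝ) < (b:ℝ) := by linarith
  have hn' : 4 + 9*(b:ℝ)^2 + 9*(b:ℝ) ≤ 2*(b:ℝ)*(n:ℝ) := by
    have h4 : 2*(b:ℝ)*(2/(b:ℝ)+9*(b:ℝ)/2+9/2) = 4+9*(b:ℝ)^2+9*(b:ℝ) := by
      field_simp; ring
    nlinarith [mul_le_mul_of_nonneg_left hn (by positivity : (0:ℝ) ≤ 2*(b:ℝ))]
  have hsn' : (s:ℝ)*(1+(b:ℝ)) ≤ (n:ℝ) - 1 := by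
    have h0 : (0:ℝ) < 1 + (b:ℝ) := by linarith
    calc (s:ℝ)*(1+(b:ℝ)) ≤ (((n:ℝ)-1)/(1+(b:ℝ)))*(1+(b:ℝ)) :=
          mul_le_mul_of_nonneg_right hsn h0.le
      _ = (n:ℝ) - 1 := by field_simp
  have hN11 : (11:ℝ) ≤ (n:ℝ) := by
    nlinarith [mul_nonneg (by linarith : (0:ℝ) ≤ (b:ℝ)-1) (by linarith : (0:ℝ) ≤ 9*(b:ℝ)-4)]
  have hbN : (b:ℝ) + 2 ≤ (n:ℝ) := by nlinarith
  have hb_le : b + 2 ≤ n := by exact_mod_cast hbN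
  have hssR : (s:ℝ) + (s:ℝ)*(b:ℝ) + 1 ≤ (n:ℝ) := by nlinarith
  have hss : s + s*b + 1 ≤ n := by exact_mod_cast (by push_cast; linarith : ((s + s*b + 1 : ℕ):ℝ) ≤ (n:ℝ))
  have hcast1 : ((n - 1 - b : ℕ) : ℝ) = (n:ℝ) - 1 - (b:ℝ) := by
    rw [Nat.cast_sub (by omega), Nat.cast_sub (by omega)]; push_cast; ring
  have hcast2 : ((n - s - s*b : ℕ) : ℝ) = (n:ℝ) - (s:ℝ) - (s:ℝ)*(b:ℝ) := by
    rw [Nat.cast_sub (by omega), Nat.cast_sub (by omega)]; push_cast; ring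
  have hcastq : ((s*b : ℕ) : ℝ) = (s:ℝ)*(b:ℝ) := by push_cast; ring
  set N := (n:ℝ) with hNdef; set B := (b:ℝ) with hBdef; set S := (s:ℝ) with hSdef
  set K : ℝ := N + 5*B + 1 with hKdef
  have hK : (0:ℝ) < K := by simp only [hKdef]; linarith
  set y1 : ℝ := 2 - (4*B+3)/K with hy1def
  have hy1pos : (0:ℝ) < y1 := by
    have h5 : (4*B+3)/K < 2 := by rw [div_lt_iff₀ hK]; simp only [hKdef]; nlinarith
    simp only [hy1def]; linarith
  have hy1le : y1 ≤ 2 := by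
    have : (0:ℝ) ≤ (4*B+3)/K := by positivity
    simp only [hy1def]; linarith
  set c : ℝ := (N - 1 - B) + 2*B*y1 with hcdef
  have hc0 : (0:ℝ) ≤ c := by
    have : (0:ℝ) ≤ 2*B*y1 := by positivity
    simp only [hcdef]; linarith
  show distSpecRad (PG 1 (n-1-b) b) < distSpecRad (PG s (n-s-s*b) (s*b))
  -- upper bound for the first graph
  have hup : distSpecRad (PG 1 (n-1-b) b) ≤ c := by
    refine Real.sSup_le ?_ hc0
    rintro μ hμ
    refine eig_le_s12 (distMatrix (PG 1 (n-1-b) b)) (fun i j => Nat.cast_nonneg _)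
      (PGaux.cw 1 (n-1-b) b 1 1 y1) ?_ ?_ hμ
    · rintro (a | k | j) <;> simp only [PGaux.cw, Sum.elim_inl, Sum.elim_inr] <;>
        first | exact one_pos | exact hy1pos
    · intro i
      rw [PGaux.mulVec_cw one_pos]
      rcases i with a | k | j <;>
        simp only [PGaux.cw, Sum.elim_inl, Sum.elim_inr, hcast1, Nat.cast_one,
          ← hNdef, ← hBdef, ← hSdef]
      · have : (0:ℝ) ≤ B*y1 := by positivity
        simp only [hcdef]; nlinarith
      · simp only [hcdef]; nlinarith
      · have hid : c*y1 - (1*1 + 2*(N-1-B)*1 + (2*B-2)*y1) = 2*B*((4*B+3)/K)^2 := by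
          simp only [hcdef, hy1def]
          field_simp
          ring
        have h8 : (0:ℝ) ≤ 2*B*((4*B+3)/K)^2 := by positivity
        clear_value c y1 K
        linarith [hid, h8]
  -- lower bound for the second graph
  have hp2 : 0 < s := by omega
  set u : Fin s ⊕ (Fin (n-s-s*b) ⊕ Fin (s*b)) → ℝ :=
    PGaux.cw s (n-s-s*b) (s*b) (N-1) (N-1+S*B) (2*N-S-2) with hudef
  have hu : u ≠ 0 := by
    refine Function.ne_iff.mpr ⟨Sum.inl ⟨0, hp2⟩, ?_⟩
    simp only [hudef, PGaux.cw, Sum.elim_inl, Pi.zero_apply]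
    intro h; linarith
  obtain ⟨μ, hμmem, hray⟩ := exists_eig_ge (distMatrix (PG s (n-s-s*b) (s*b)))
    (PGaux.isHermitian_distMatrix _) u hu
  -- identify the Rayleigh sums
  have hmv : (distMatrix (PG s (n-s-s*b) (s*b))).mulVec u =
      PGaux.cw s (n-s-s*b) (s*b)
        ((S-1)*(N-1) + (N-S-S*B)*(N-1+S*B) + (S*B)*(2*N-S-2))
        (S*(N-1) + ((N-S-S*B)-1)*(N-1+S*B) + 2*(S*B)*(2*N-S-2))
        (S*(N-1) + 2*(N-S-S*B)*(N-1+S*B) + (2*(S*B)-2)*(2*N-S-2)) := by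
    rw [hudef, PGaux.mulVec_cw hp2]
    rw [hcast2, hcastq]
  have hnum : ∑ i, u i * (distMatrix (PG s (n-s-s*b) (s*b))).mulVec u i =
      S*(N-1)*((S-1)*(N-1)+(N-S-S*B)*(N-1+S*B)+(S*B)*(2*N-S-2))
      + (N-S-S*B)*(N-1+S*B)*(S*(N-1)+((N-S-S*B)-1)*(N-1+S*B)+2*(S*B)*(2*N-S-2))
      + (S*B)*(2*N-S-2)*(S*(N-1)+2*(N-S-S*B)*(N-1+S*B)+2*((S*B)-1)*(2*N-S-2)) := by
    rw [hmv, hudef, PGaux.sum_cw, hcast2, hcastq]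
    ring
  have hden : ∑ i, u i * u i =
      S*(N-1)^2 + (N-S-S*B)*(N-1+S*B)^2 + (S*B)*(2*N-S-2)^2 := by
    rw [hudef, PGaux.sum_cw, hcast2, hcastq]
    ring
  have hm2R : (1:ℝ) ≤ N - S - S*B := by nlinarith
  have hden_pos : (0:ℝ) < S*(N-1)^2 + (N-S-S*B)*(N-1+S*B)^2 + (S*B)*(2*N-S-2)^2 := by
    have h1 : (0:ℝ) < S*(N-1)^2 := by
      refine mul_pos (by linarith) (pow_pos (by linarith) 2)
    have h2 : (0:ℝ) ≤ (N-S-S*B)*(N-1+S*B)^2 := by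
      refine mul_nonneg (by linarith) (sq_nonneg _)
    have h3 : (0:ℝ) ≤ (S*B)*(2*N-S-2)^2 := by
      refine mul_nonneg (by positivity) (sq_nonneg _)
    linarith
  -- the key polynomial inequality
  have hkey := key B S N hb1 hs1 hn' hsn'
  have hcK : c * K = (N-1-B+4*B)*K - 2*B*(4*B+3) := by
    simp only [hcdef, hy1def]
    field_simp
    ring
  have hcden : c * (S*(N-1)^2 + (N-S-S*B)*(N-1+S*B)^2 + (S*B)*(2*N-S-2)^2)
      < S*(N-1)*((S-1)*(N-1)+(N-S-S*B)*(N-1+S*B)+(S*B)*(2*N-S-2))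
      + (N-S-S*B)*(N-1+S*B)*(S*(N-1)+((N-S-S*B)-1)*(N-1+S*B)+2*(S*B)*(2*N-S-2))
      + (S*B)*(2*N-S-2)*(S*(N-1)+2*(N-S-S*B)*(N-1+S*B)+2*((S*B)-1)*(2*N-S-2)) := by
    refine lt_of_mul_lt_mul_right ?_ hK.le
    calc c * (S*(N-1)^2 + (N-S-S*B)*(N-1+S*B)^2 + (S*B)*(2*N-S-2)^2) * K
        = (c*K) * (S*(N-1)^2 + (N-S-S*B)*(N-1+S*B)^2 + (S*B)*(2*N-S-2)^2) := by ring
      _ = ((N-1-B+4*B)*K - 2*B*(4*B+3)) *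
          (S*(N-1)^2 + (N-S-S*B)*(N-1+S*B)^2 + (S*B)*(2*N-S-2)^2) := by rw [hcK]
      _ < (S*(N-1)*((S-1)*(N-1)+(N-S-S*B)*(N-1+S*B)+(S*B)*(2*N-S-2))
          + (N-S-S*B)*(N-1+S*B)*(S*(N-1)+((N-S-S*B)-1)*(N-1+S*B)+2*(S*B)*(2*N-S-2))
          + (S*B)*(2*N-S-2)*(S*(N-1)+2*(N-S-S*B)*(N-1+S*B)+2*((S*B)-1)*(2*N-S-2))) * K := hkey
  have hcμ : c < μ := by
    have h9 : c * (S*(N-1)^2 + (N-S-S*B)*(N-1+S*B)^2 + (S*B)*(2*N-S-2)^2)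
        < μ * (S*(N-1)^2 + (N-S-S*B)*(N-1+S*B)^2 + (S*B)*(2*N-S-2)^2) := by
      rw [← hden]
      calc c * ∑ i, u i * u i < _ := by rw [hden]; exact hcden
        _ = ∑ i, u i * (distMatrix (PG s (n-s-s*b) (s*b))).mulVec u i := hnum.symm
        _ ≤ μ * ∑ i, u i * u i := hray
    exact lt_of_mul_lt_mul_right h9 hden_pos.le
  -- bounded above, so μ ≤ sSup
  have hbdd : BddAbove {μ : ℝ | ∃ v : Fin s ⊕ (Fin (n-s-s*b) ⊕ Fin (s*b)) → ℝ,
      v ≠ 0 ∧ (distMatrix (PG s (n-s-s*b) (s*b))).mulVec v = μ • v} := by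
    refine ⟨2*N, fun ν hν => ?_⟩
    refine eig_le_s12 (distMatrix (PG s (n-s-s*b) (s*b))) (fun i j => Nat.cast_nonneg _)
      (PGaux.cw s (n-s-s*b) (s*b) 1 1 1) ?_ ?_ hν
    · rintro (a | k | j) <;> simp only [PGaux.cw, Sum.elim_inl, Sum.elim_inr] <;> exact one_pos
    · intro i
      rw [PGaux.mulVec_cw hp2]
      rcases i with a | k | j <;>
        simp only [PGaux.cw, Sum.elim_inl, Sum.elim_inr, hcast2, hcastq,
          ← hNdef, ← hBdef, ← hSdef] <;> nlinarith
  have hμle : μ ≤ distSpecRad (PG s (n-s-s*b) (s*b)) := le_csSup hbdd hμmem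
  exact lt_of_le_of_lt hup (lt_of_lt_of_le hcμ hμle)
end

section
/- Let t ≥ 1 be an integer and n ≥ 4t² + 10t. Then λ₁(D(K_{2t−1} ∨ (K_{n−2t} + K₁))) < n + 2. -/
open SimpleGraph Finset

/-- Weighted row-sum bound on eigenvalues of a nonnegative matrix. -/
lemma eig_le_of_row_bound {V : Type*} [Fintype V] (A : Matrix V V ℝ)
    (hA : ∀ i j, 0 ≤ A i j) (w : V → ℝ) (hw : ∀ i, 0 < w i) (c : ℝ)
    (hrow : ∀ i, ∑ j, A i j * w j ≤ c * w i)
    (μ : ℝ) (v : V → ℝ) (hv : v ≠ 0) (heig : A.mulVec v = μ • v) : μ ≤ c := by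
  obtain ⟨j0, hj0⟩ : ∃ j, v j ≠ 0 := Function.ne_iff.mp hv
  obtain ⟨i0, -, hi0⟩ := Finset.exists_max_image Finset.univ (fun i => |v i| / w i)
    ⟨j0, Finset.mem_univ _⟩
  set r := |v i0| / w i0 with hr
  have hrpos : 0 < r :=
    lt_of_lt_of_le (div_pos (abs_pos.mpr hj0) (hw j0)) (hi0 j0 (Finset.mem_univ _))
  have key : ∀ j, |v j| ≤ r * w j := fun j => by
    have h := hi0 j (Finset.mem_univ j)
    calc |v j| = |v j| / w j * w j := (div_mul_cancel₀ _ (hw j).ne').symm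
    _ ≤ r * w j := mul_le_mul_of_nonneg_right h (hw j).le
  have hvio : |v i0| = r * w i0 := by rw [hr, div_mul_cancel₀ _ (hw i0).ne']
  have h1 : |μ| * |v i0| ≤ r * (c * w i0) := by
    have hmv : (A.mulVec v) i0 = μ * v i0 := by rw [heig]; rfl
    have hmv2 : ∑ j, A i0 j * v j = μ * v i0 := hmv
    calc |μ| * |v i0| = |μ * v i0| := (abs_mul μ (v i0)).symm
    _ = |∑ j, A i0 j * v j| := by rw [hmv2]
    _ ≤ ∑ j, |A i0 j * v j| := Finset.abs_sum_le_sum_abs _ _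
    _ = ∑ j, A i0 j * |v j| := by
        refine Finset.sum_congr rfl fun j _ => ?_
        rw [abs_mul, abs_of_nonneg (hA i0 j)]
    _ ≤ ∑ j, A i0 j * (r * w j) :=
        Finset.sum_le_sum fun j _ => mul_le_mul_of_nonneg_left (key j) (hA i0 j)
    _ = r * ∑ j, A i0 j * w j := by rw [Finset.mul_sum]; exact Finset.sum_congr rfl fun j _ => by ring
    _ ≤ r * (c * w i0) := mul_le_mul_of_nonneg_left (hrow i0) hrpos.le
  have hpos : 0 < r * w i0 := mul_pos hrpos (hw i0)
  have : |μ| ≤ c := by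
    rw [hvio] at h1
    have := (mul_le_mul_iff_of_pos_right hpos).mp (by linarith [h1] : |μ| * (r * w i0) ≤ c * (r * w i0))
    exact this
  exact (le_abs_self μ).trans this

section DistFacts

variable (a m : ℕ)

/-- Abbreviation for the graph in question. -/
private def Gam (a m : ℕ) : SimpleGraph (Fin a ⊕ (Fin m ⊕ Fin 1)) :=
  graphJoin (⊤ : SimpleGraph (Fin a)) (graphSum (⊤ : SimpleGraph (Fin m)) (⊤ : SimpleGraph (Fin 1)))

lemma Gam_adj_ll (i j : Fin a) (h : i ≠ j) : (Gam a m).Adj (Sum.inl i) (Sum.inl j) := h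
lemma Gam_adj_lr (i : Fin a) (x : Fin m ⊕ Fin 1) : (Gam a m).Adj (Sum.inl i) (Sum.inr x) := trivial
lemma Gam_adj_rl (i : Fin a) (x : Fin m ⊕ Fin 1) : (Gam a m).Adj (Sum.inr x) (Sum.inl i) := trivial
lemma Gam_adj_bb (b b' : Fin m) (h : b ≠ b') :
    (Gam a m).Adj (Sum.inr (Sum.inl b)) (Sum.inr (Sum.inl b')) := h
lemma Gam_not_adj_bc (b : Fin m) (z : Fin 1) :
    ¬ (Gam a m).Adj (Sum.inr (Sum.inl b)) (Sum.inr (Sum.inr z)) := fun h => h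
lemma Gam_not_adj_cb (b : Fin m) (z : Fin 1) :
    ¬ (Gam a m).Adj (Sum.inr (Sum.inr z)) (Sum.inr (Sum.inl b)) := fun h => h

lemma Gam_dist_ll (i j : Fin a) (h : i ≠ j) : (Gam a m).dist (Sum.inl i) (Sum.inl j) = 1 :=
  SimpleGraph.dist_eq_one_iff_adj.mpr (Gam_adj_ll a m i j h)

lemma Gam_dist_lr (i : Fin a) (x : Fin m ⊕ Fin 1) :
    (Gam a m).dist (Sum.inl i) (Sum.inr x) = 1 :=
  SimpleGraph.dist_eq_one_iff_adj.mpr (Gam_adj_lr a m i x)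

lemma Gam_dist_rl (i : Fin a) (x : Fin m ⊕ Fin 1) :
    (Gam a m).dist (Sum.inr x) (Sum.inl i) = 1 :=
  SimpleGraph.dist_eq_one_iff_adj.mpr (Gam_adj_rl a m i x)

lemma Gam_dist_bb (b b' : Fin m) (h : b ≠ b') :
    (Gam a m).dist (Sum.inr (Sum.inl b)) (Sum.inr (Sum.inl b')) = 1 :=
  SimpleGraph.dist_eq_one_iff_adj.mpr (Gam_adj_bb a m b b' h)

lemma Gam_dist_bc (ha : 0 < a) (b : Fin m) (z : Fin 1) :
    (Gam a m).dist (Sum.inr (Sum.inl b)) (Sum.inr (Sum.inr z)) = 2 := by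
  set x : Fin a ⊕ (Fin m ⊕ Fin 1) := Sum.inr (Sum.inl b)
  set y : Fin a ⊕ (Fin m ⊕ Fin 1) := Sum.inr (Sum.inr z)
  set mid : Fin a ⊕ (Fin m ⊕ Fin 1) := Sum.inl ⟨0, ha⟩
  have hle : (Gam a m).dist x y ≤ 2 := by
    have h := SimpleGraph.dist_le (SimpleGraph.Walk.cons (Gam_adj_rl a m ⟨0, ha⟩ (Sum.inl b))
      (SimpleGraph.Walk.cons (Gam_adj_lr a m ⟨0, ha⟩ (Sum.inr z)) SimpleGraph.Walk.nil))
    simpa using h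
  have hne : x ≠ y := by simp [x, y]
  have hreach : (Gam a m).Reachable x y :=
    ⟨SimpleGraph.Walk.cons (Gam_adj_rl a m ⟨0, ha⟩ (Sum.inl b))
      (SimpleGraph.Walk.cons (Gam_adj_lr a m ⟨0, ha⟩ (Sum.inr z)) SimpleGraph.Walk.nil)⟩
  have h0 : (Gam a m).dist x y ≠ 0 := (hreach.pos_dist_of_ne hne).ne'
  have h1 : (Gam a m).dist x y ≠ 1 := fun h =>
    Gam_not_adj_bc a m b z (SimpleGraph.dist_eq_one_iff_adj.mp h)
  omega

lemma Gam_dist_cb (ha : 0 < a) (b : Fin m) (z : Fin 1) :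
    (Gam a m).dist (Sum.inr (Sum.inr z)) (Sum.inr (Sum.inl b)) = 2 := by
  rw [SimpleGraph.dist_comm]; exact Gam_dist_bc a m ha b z

end DistFacts

theorem stmt16 (t n : ℕ) (ht : 1 ≤ t) (hn : 4 * t ^ 2 + 10 * t ≤ n) :
    distSpecRad (graphJoin (⊤ : SimpleGraph (Fin (2 * t - 1)))
        (graphSum (⊤ : SimpleGraph (Fin (n - 2 * t))) (⊤ : SimpleGraph (Fin 1))))
      < (n : ℝ) + 2 := by
  set a := 2 * t - 1 with hadef
  set m := n - 2 * t with hmdef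
  have ha : 0 < a := by omega
  have hnm : 2 * t ≤ n := by nlinarith
  have ham : a + m + 1 = n := by omega
  set T : ℝ := (t : ℝ) with hT
  set N : ℝ := (n : ℝ) with hN
  have hT1 : 1 ≤ T := by rw [hT]; exact_mod_cast ht
  have hNT : 4 * T ^ 2 + 10 * T ≤ N := by rw [hT, hN]; exact_mod_cast hn
  have hAcast : (a : ℝ) = 2 * T - 1 := by
    rw [hadef, hT]; push_cast [Nat.cast_sub (by omega : 1 ≤ 2 * t)]; ring
  have hMcast : (m : ℝ) = N - 2 * T := by
    rw [hmdef, hT, hN]; push_cast [Nat.cast_sub hnm]; ring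
  set δ : ℝ := (4 * T + 10) / (N + 6) with hδdef
  have hN6 : (0:ℝ) < N + 6 := by nlinarith
  have hδpos : 0 < δ := div_pos (by nlinarith) hN6
  have hδmul : δ * (N + 6) = 4 * T + 10 := div_mul_cancel₀ _ hN6.ne'
  have hδ1 : δ ≤ 1 := by
    rw [hδdef, div_le_one hN6]; nlinarith
  set c : ℝ := N + 2 - δ with hcdef
  set s : ℝ := 2 - δ / 2 with hsdef
  have hs0 : 0 < s := by simp only [hsdef]; linarith
  have hc0 : 0 ≤ c := by simp only [hcdef]; nlinarith
  -- the weight vector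
  show distSpecRad (Gam a m) < N + 2
  set V := (Fin a ⊕ (Fin m ⊕ Fin 1)) with hV
  set G := Gam a m with hG
  set w : V → ℝ := Sum.elim (fun _ => (1:ℝ)) (Sum.elim (fun _ => (1:ℝ)) (fun _ => s)) with hw
  have hwpos : ∀ i : V, 0 < w i := by
    rintro (i | (b | z)) <;> simp [hw] <;> linarith
  have hDnn : ∀ i j : V, 0 ≤ distMatrix G i j := fun i j => Nat.cast_nonneg _
  have hsuma : ((Finset.univ : Finset (Fin a)).card : ℝ) = (a : ℝ) := by simp
  -- row sums
  have hrow : ∀ i : V, ∑ j, distMatrix G i j * w j ≤ c * w i := by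
    have cast1 : ((1:ℕ) : ℝ) = 1 := by norm_num
    rintro (i | (b0 | z0)) <;> rw [Fintype.sum_sum_type, Fintype.sum_sum_type]
    · -- row of a vertex in A
      have e1 : ∑ j : Fin a, distMatrix G (Sum.inl i) (Sum.inl j) * w (Sum.inl j)
          = (a : ℝ) - 1 := by
        have h1 : ∀ j : Fin a, distMatrix G (Sum.inl i) (Sum.inl j) * w (Sum.inl j)
            = if j = i then 0 else 1 := by
          intro j
          by_cases h : j = i
          · simp [h, distMatrix, hG, hw]
          · simp [distMatrix, hG, hw, Gam_dist_ll a m i j (Ne.symm h), h]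
        rw [Finset.sum_congr rfl (fun j _ => h1 j), Finset.sum_ite, Finset.sum_const_zero,
          Finset.sum_const, Finset.filter_ne', Finset.card_erase_of_mem (Finset.mem_univ i)]
        simp [Nat.cast_sub (by omega : 1 ≤ a)]
      have e2 : ∑ b : Fin m, distMatrix G (Sum.inl i) (Sum.inr (Sum.inl b)) * w (Sum.inr (Sum.inl b))
          = (m : ℝ) := by
        simp [distMatrix, hG, hw, Gam_dist_lr a m i]
      have e3 : ∑ z : Fin 1, distMatrix G (Sum.inl i) (Sum.inr (Sum.inr z)) * w (Sum.inr (Sum.inr z))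
          = s := by
        simp [distMatrix, hG, hw, Gam_dist_lr a m i]
      rw [e1, e2, e3]
      have : w (Sum.inl i) = 1 := rfl
      rw [this, mul_one, hAcast, hMcast]
      simp only [hsdef, hcdef]
      linarith
    · -- row of a vertex in B
      have e1 : ∑ j : Fin a, distMatrix G (Sum.inr (Sum.inl b0)) (Sum.inl j) * w (Sum.inl j)
          = (a : ℝ) := by
        simp [distMatrix, hG, hw, fun j => Gam_dist_rl a m j (Sum.inl b0)]
      have e2 : ∑ b : Fin m, distMatrix G (Sum.inr (Sum.inl b0)) (Sum.inr (Sum.inl b)) * w (Sum.inr (Sum.inl b))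
          = (m : ℝ) - 1 := by
        have h1 : ∀ b : Fin m, distMatrix G (Sum.inr (Sum.inl b0)) (Sum.inr (Sum.inl b)) * w (Sum.inr (Sum.inl b))
            = if b = b0 then 0 else 1 := by
          intro b
          by_cases h : b = b0
          · simp [h, distMatrix, hG, hw]
          · simp [distMatrix, hG, hw, Gam_dist_bb a m b0 b (Ne.symm h), h]
        have hm : 0 < m := Fin.pos_iff_nonempty.mpr ⟨b0⟩
        rw [Finset.sum_congr rfl (fun b _ => h1 b), Finset.sum_ite, Finset.sum_const_zero,
          Finset.sum_const, Finset.filter_ne', Finset.card_erase_of_mem (Finset.mem_univ b0)]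
        simp [Nat.cast_sub (by omega : 1 ≤ m)]
      have e3 : ∑ z : Fin 1, distMatrix G (Sum.inr (Sum.inl b0)) (Sum.inr (Sum.inr z)) * w (Sum.inr (Sum.inr z))
          = 2 * s := by
        simp [distMatrix, hG, hw, Gam_dist_bc a m ha b0]
      rw [e1, e2, e3]
      have : w (Sum.inr (Sum.inl b0)) = 1 := rfl
      rw [this, mul_one, hAcast, hMcast]
      simp only [hsdef, hcdef]
      linarith
    · -- row of the vertex c
      have e1 : ∑ j : Fin a, distMatrix G (Sum.inr (Sum.inr z0)) (Sum.inl j) * w (Sum.inl j)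
          = (a : ℝ) := by
        simp [distMatrix, hG, hw, fun j => Gam_dist_rl a m j (Sum.inr z0)]
      have e2 : ∑ b : Fin m, distMatrix G (Sum.inr (Sum.inr z0)) (Sum.inr (Sum.inl b)) * w (Sum.inr (Sum.inl b))
          = 2 * (m : ℝ) := by
        simp [distMatrix, hG, hw, fun b => Gam_dist_cb a m ha b z0]
        ring
      have e3 : ∑ z : Fin 1, distMatrix G (Sum.inr (Sum.inr z0)) (Sum.inr (Sum.inr z)) * w (Sum.inr (Sum.inr z))
          = 0 := by
        have : ∀ z : Fin 1, z = z0 := fun z => Subsingleton.elim z z0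
        simp [distMatrix, hG, this, SimpleGraph.dist_self]
      rw [e1, e2, e3]
      have : w (Sum.inr (Sum.inr z0)) = s := rfl
      rw [this, hAcast, hMcast]
      simp only [hcdef, hsdef]
      nlinarith [hδmul, sq_nonneg δ, hδpos.le]
  -- conclusion
  have key : ∀ μ ∈ {μ : ℝ | ∃ v : V → ℝ, v ≠ 0 ∧ (distMatrix G).mulVec v = μ • v}, μ ≤ c := by
    rintro μ ⟨v, hv, heig⟩
    exact eig_le_of_row_bound (distMatrix G) hDnn w hwpos c hrow μ v hv heig
  have : distSpecRad G ≤ c := Real.sSup_le key hc0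
  have hclt : c < N + 2 := by simp only [hcdef]; linarith
  calc distSpecRad G ≤ c := this
  _ < N + 2 := hclt
end
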